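/- arXiv:1604.05825 — 2 statements merged into one kernel-verified Lean document; each statement's English description precedes it below -/
import Mathlib

section
/- Let π = (n_1,…,n_m) (m ≥ 2) be a partition of n and let 0 < ρ ≤ 1. Then there exist constants η_{π,ρ} and η̃_{n,ρ}, depending only on (π,ρ) and on (n,ρ) respectively, with 0 ≤ η_{π,ρ} < η̃_{n,ρ} < 1, such that for every quasi-cyclic pivot sequence O ∈ B̄_c^(m), every real symmetric n×n matrix A, and every matrix A' obtained from A by one sweep (of length T = |O|) of the quasi-cyclic block Jacobi method defined by the pivot strategy I_O in which all transformation matrices belong to the class UBC_π(ρ), one has S(A')² ≤ η_{π,ρ}·S(A)². -/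
namespace BlockJacobi

open scoped BigOperators

attribute [local instance] Classical.propDecidable

noncomputable section

/-- Offset (starting index) of block `r` for the partition `c`. -/
def off (c : ℕ → ℕ) (r : ℕ) : ℕ := ∑ k ∈ Finset.range r, c k

/-- `t` belongs to block `r`. -/
def inBlk (c : ℕ → ℕ) (r t : ℕ) : Prop := off c r ≤ t ∧ t < off c r + c r

/-- `s` and `t` belong to the same block (among the first `m` blocks). -/
def sameBlk (c : ℕ → ℕ) (m s t : ℕ) : Prop := ∃ r, r < m ∧ inBlk c r s ∧ inBlk c r t

/-- `t` belongs to the pivot zone: block `i` or block `j`. -/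
def inPiv (c : ℕ → ℕ) (i j t : ℕ) : Prop := inBlk c i t ∨ inBlk c j t

/-- `(c, m)` is a partition of `n` into `m` blocks (0-based blocks `0,…,m-1`). -/
def IsPartition (n m : ℕ) (c : ℕ → ℕ) : Prop :=
  2 ≤ m ∧ (∀ i < m, 1 ≤ c i) ∧ ∑ i ∈ Finset.range m, c i = n

/-- elementary block matrix with (0-based) pivot pair `(i,j)`. -/
def IsElem {n : ℕ} (c : ℕ → ℕ) (i j : ℕ) (U : Matrix (Fin n) (Fin n) ℝ) : Prop :=
  ∀ s t : Fin n, ¬(inPiv c i j (s : ℕ) ∧ inPiv c i j (t : ℕ)) →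
    U s t = if s = t then 1 else 0

/-- orthogonality. -/
def Orth {n : ℕ} (U : Matrix (Fin n) (Fin n) ℝ) : Prop := U.transpose * U = 1

/-- Euclidean norm of a vector. -/
def enorm {ι : Type*} [Fintype ι] (x : ι → ℝ) : ℝ := Real.sqrt (∑ i, x i ^ 2)

/-- smallest singular value of the `(r,r)` diagonal block of `U`. -/
def sigmaMinBlk {n : ℕ} (c : ℕ → ℕ) (r : ℕ) (U : Matrix (Fin n) (Fin n) ℝ) : ℝ :=
  sInf { v : ℝ | ∃ x : Fin n → ℝ,
    (∀ t : Fin n, ¬ inBlk c r (t : ℕ) → x t = 0) ∧ enorm x = 1 ∧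
    enorm (fun t : Fin n => if inBlk c r (t : ℕ) then U.mulVec x t else 0) = v }

/-- the constant `γ_{ij}` of the UBC class. -/
def gammaUBC (c : ℕ → ℕ) (i j : ℕ) : ℝ :=
  3 / Real.sqrt (((4 : ℝ) ^ c i + 6 * (c j : ℝ) - 1) * ((c j : ℝ) + 1))

/-- `U` is in the UBC class with pivot pair `(i,j)`: block structure given by `cs`,
`γ`-bound computed from the partition `cg`. -/
def IsUBC2 {n : ℕ} (cs cg : ℕ → ℕ) (ρ : ℝ) (i j : ℕ) (U : Matrix (Fin n) (Fin n) ℝ) : Prop :=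
  IsElem cs i j U ∧ Orth U ∧ sigmaMinBlk cs i U = sigmaMinBlk cs j U ∧
    ρ * gammaUBC cg i j ≤ sigmaMinBlk cs i U

/-- `U ∈ UBC_π(ρ)` with pivot pair `(i,j)`. -/
def IsUBC {n : ℕ} (c : ℕ → ℕ) (ρ : ℝ) (i j : ℕ) (U : Matrix (Fin n) (Fin n) ℝ) : Prop :=
  IsUBC2 c c ρ i j U

/-- the `(i,j)` pivot submatrix of `A` is diagonal. -/
def PivDiag {n : ℕ} (c : ℕ → ℕ) (i j : ℕ) (A : Matrix (Fin n) (Fin n) ℝ) : Prop :=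
  ∀ s t : Fin n, s ≠ t → inPiv c i j (s : ℕ) → inPiv c i j (t : ℕ) → A s t = 0

/-- square of the off-norm `S(A)`. -/
def offSq {n : ℕ} (A : Matrix (Fin n) (Fin n) ℝ) : ℝ :=
  ∑ s : Fin n, ∑ t : Fin n, if (s : ℕ) < (t : ℕ) then A s t ^ 2 else 0

/-- square of the off-norm of the `(i,j)` pivot submatrix of `A`. -/
def offSqPiv {n : ℕ} (c : ℕ → ℕ) (i j : ℕ) (A : Matrix (Fin n) (Fin n) ℝ) : ℝ :=
  ∑ s : Fin n, ∑ t : Fin n,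
    if (s : ℕ) < (t : ℕ) ∧ inPiv c i j (s : ℕ) ∧ inPiv c i j (t : ℕ) then A s t ^ 2 else 0

/-- Frobenius norm. -/
def frob {n : ℕ} (A : Matrix (Fin n) (Fin n) ℝ) : ℝ :=
  Real.sqrt (∑ s : Fin n, ∑ t : Fin n, A s t ^ 2)

/-- One sweep of the block Jacobi method along the pivot list `L`; block structure from
`cs`, UBC bound computed from the partition `cg`. -/
def Sweep2 {n : ℕ} (cs cg : ℕ → ℕ) (ρ : ℝ) (L : List (ℕ × ℕ))
    (A A' : Matrix (Fin n) (Fin n) ℝ) : Prop :=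
  ∃ B : ℕ → Matrix (Fin n) (Fin n) ℝ,
    B 0 = A ∧ B L.length = A' ∧
    ∀ (k : ℕ) (hk : k < L.length),
      ∃ U : Matrix (Fin n) (Fin n) ℝ,
        IsUBC2 cs cg ρ (L.get ⟨k, hk⟩).1 (L.get ⟨k, hk⟩).2 U ∧
        B (k + 1) = U.transpose * B k * U ∧
        PivDiag cs (L.get ⟨k, hk⟩).1 (L.get ⟨k, hk⟩).2 (B (k + 1))

/-- One sweep of the block Jacobi method with `UBC_π(ρ)` transformations. -/
def Sweep {n : ℕ} (c : ℕ → ℕ) (ρ : ℝ) (L : List (ℕ × ℕ))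
    (A A' : Matrix (Fin n) (Fin n) ℝ) : Prop :=
  Sweep2 c c ρ L A A'

/-- `L ∈ O(P_m)` (0-based pairs). -/
def SeqOn (m : ℕ) (L : List (ℕ × ℕ)) : Prop :=
  (∀ p ∈ L, p.1 < p.2 ∧ p.2 < m) ∧ ∀ i j : ℕ, i < j → j < m → (i, j) ∈ L

/-- `L ∈ O(S)` for `S ⊆ P_m`. -/
def SeqOnSet (S : Set (ℕ × ℕ)) (L : List (ℕ × ℕ)) : Prop :=
  (∀ p ∈ L, p ∈ S) ∧ ∀ p ∈ S, p ∈ L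

/-- the class `B_c^(m)` of column-wise orderings (0-based). -/
def memBc (m : ℕ) (L : List (ℕ × ℕ)) : Prop :=
  ∃ τ : ℕ → ℕ → ℕ,
    (∀ j, Set.BijOn (τ j) (Set.Iio j) (Set.Iio j)) ∧
    L = (List.range' 1 (m - 1)).flatMap fun j => (List.range j).map fun a => (τ j a, j)

/-- the class `B_r^(m)` of row-wise orderings (0-based). -/
def memBr (m : ℕ) (L : List (ℕ × ℕ)) : Prop :=
  ∃ σ : ℕ → ℕ → ℕ,
    (∀ i, Set.BijOn (σ i) (Set.Ico (i + 1) m) (Set.Ico (i + 1) m)) ∧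
    L = ((List.range (m - 1)).reverse).flatMap fun i =>
      (List.range' (i + 1) (m - 1 - i)).map fun b => (i, σ i b)

/-- the class `B_sp^(m)` of serial orderings with permutations. -/
def memBsp (m : ℕ) (L : List (ℕ × ℕ)) : Prop :=
  memBc m L ∨ memBc m L.reverse ∨ memBr m L ∨ memBr m L.reverse

/-- the quasi-cyclic class `B̄_c^(m)`. -/
def memBcQ (m : ℕ) (L : List (ℕ × ℕ)) : Prop :=
  ∃ (τ : ℕ → ℕ → ℕ) (E : ℕ → List (ℕ × ℕ)),
    (∀ j, Set.BijOn (τ j) (Set.Iio j) (Set.Iio j)) ∧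
    (∀ j, ∀ p ∈ E j, p.1 < p.2 ∧ p.2 ≤ j) ∧
    L = (List.range' 1 (m - 1)).flatMap fun j =>
      ((List.range j).map fun a => (τ j a, j)) ++ (if j = 1 then [] else E j)

/-- one admissible transposition (on lists of `α`'s carrying pairs via `pr`). -/
def AdjSwapG {α : Type*} (pr : α → ℕ × ℕ) (L L' : List α) : Prop :=
  ∃ (l₁ l₂ : List α) (a b : α),
    ({(pr a).1, (pr a).2} ∩ {(pr b).1, (pr b).2} : Set ℕ) = ∅ ∧
    L = l₁ ++ a :: b :: l₂ ∧ L' = l₁ ++ b :: a :: l₂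

/-- equivalence (finitely many admissible transpositions). -/
def EquivG {α : Type*} (pr : α → ℕ × ℕ) : List α → List α → Prop :=
  Relation.ReflTransGen (AdjSwapG pr)

/-- shift-equivalence. -/
def ShiftG {α : Type*} (L L' : List α) : Prop :=
  ∃ l₁ l₂ : List α, L = l₁ ++ l₂ ∧ L' = l₂ ++ l₁

/-- weak equivalence. -/
def WeakG {α : Type*} (pr : α → ℕ × ℕ) : List α → List α → Prop :=
  Relation.ReflTransGen fun X Y => EquivG pr X Y ∨ ShiftG X Y

/-- equivalence of pivot sequences. -/
def PEquivL : List (ℕ × ℕ) → List (ℕ × ℕ) → Prop := EquivG id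

/-- shift-equivalence of pivot sequences. -/
def ShiftEq : List (ℕ × ℕ) → List (ℕ × ℕ) → Prop := ShiftG

/-- weak equivalence of pivot sequences. -/
def WeakEq : List (ℕ × ℕ) → List (ℕ × ℕ) → Prop := WeakG id

/-- weak equivalence realized by a chain containing exactly `d` shift-equivalent
adjacent pairs (all other adjacent pairs being equivalent). -/
def WeakChainD (d : ℕ) (L L' : List (ℕ × ℕ)) : Prop :=
  ∃ (r : ℕ) (cs : ℕ → List (ℕ × ℕ)) (s : Finset ℕ),
    cs 0 = L ∧ cs r = L' ∧ s.card = d ∧ (∀ k ∈ s, k < r) ∧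
    ∀ k < r, if k ∈ s then ShiftEq (cs k) (cs (k + 1)) else PEquivL (cs k) (cs (k + 1))

/-- `q` is a permutation of `{0,…,m-1}`. -/
def IsPermOn (m : ℕ) (q : ℕ → ℕ) : Prop := Set.BijOn q (Set.Iio m) (Set.Iio m)

/-- `O(q)`: apply a permutation to all pairs of the sequence. -/
def pApply (q : ℕ → ℕ) (L : List (ℕ × ℕ)) : List (ℕ × ℕ) :=
  L.map fun p => if q p.1 < q p.2 then (q p.1, q p.2) else (q p.2, q p.1)

/-- `compSeq q t = q_t ∘ q_{t-1} ∘ ⋯ ∘ q_1`. -/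
def compSeq (q : ℕ → ℕ → ℕ) : ℕ → ℕ → ℕ
  | 0 => id
  | t + 1 => q (t + 1) ∘ compSeq q t

/-- the class `B_spg^(m)`. -/
def memBspg (m : ℕ) (L : List (ℕ × ℕ)) : Prop :=
  ∃ L' L'' : List (ℕ × ℕ), memBsp m L'' ∧
    ((∃ q, IsPermOn m q ∧ L' = pApply q L) ∧ PEquivL L' L'' ∨
      PEquivL L L' ∧ ∃ q, IsPermOn m q ∧ L'' = pApply q L')

/-- the class `B_sg^(m)` of generalized serial orderings. -/
def memBsg (m : ℕ) (L : List (ℕ × ℕ)) : Prop :=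
  ∃ L' L'' : List (ℕ × ℕ), memBsp m L'' ∧
    ((∃ q, IsPermOn m q ∧ L' = pApply q L) ∧ WeakEq L' L'' ∨
      WeakEq L L' ∧ ∃ q, IsPermOn m q ∧ L'' = pApply q L')

/-- index set of the entries of the off-diagonal blocks in the upper triangle;
it has cardinality `K`. -/
def OffI (n m : ℕ) (c : ℕ → ℕ) : Type :=
  { p : Fin n × Fin n // (p.1 : ℕ) < (p.2 : ℕ) ∧ ¬ sameBlk c m (p.1 : ℕ) (p.2 : ℕ) }

instance (n m : ℕ) (c : ℕ → ℕ) : Fintype (OffI n m c) := by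
  unfold OffI; exact Subtype.fintype _

instance (n m : ℕ) (c : ℕ → ℕ) : DecidableEq (OffI n m c) := Classical.decEq _

/-- `vec_{π,0}⁻¹` : the symmetric matrix with zero diagonal blocks built from a vector. -/
def symOf {n m : ℕ} {c : ℕ → ℕ} (a : OffI n m c → ℝ) : Matrix (Fin n) (Fin n) ℝ :=
  fun s t =>
    if h : (s : ℕ) < (t : ℕ) ∧ ¬ sameBlk c m (s : ℕ) (t : ℕ) then a ⟨(s, t), h⟩
    else if h' : (t : ℕ) < (s : ℕ) ∧ ¬ sameBlk c m (t : ℕ) (s : ℕ) then a ⟨(t, s), h'⟩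
    else 0

/-- `N_{ij}` : set the pivot submatrix to zero. -/
def nij {n : ℕ} (c : ℕ → ℕ) (i j : ℕ) (M : Matrix (Fin n) (Fin n) ℝ) :
    Matrix (Fin n) (Fin n) ℝ :=
  fun s t => if inPiv c i j (s : ℕ) ∧ inPiv c i j (t : ℕ) then 0 else M s t

/-- the block Jacobi annihilator `R_{ij}(Û)` (as a `K×K` matrix), parametrized by the
full elementary block matrix `U` with pivot pair `(i,j)` and pivot submatrix `Û`. -/
def annih (n m : ℕ) (c : ℕ → ℕ) (i j : ℕ) (U : Matrix (Fin n) (Fin n) ℝ) :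
    Matrix (OffI n m c) (OffI n m c) ℝ :=
  fun p q => nij c i j (U.transpose * symOf (Pi.single q (1 : ℝ)) * U) p.1.1 p.1.2

/-- the class `I_{ij}` of block Jacobi annihilators. -/
def Iij (n m : ℕ) (c : ℕ → ℕ) (i j : ℕ) : Set (Matrix (OffI n m c) (OffI n m c) ℝ) :=
  { R | ∃ U : Matrix (Fin n) (Fin n) ℝ, IsElem c i j U ∧ Orth U ∧ R = annih n m c i j U }

/-- the class `I_{ij}^{UBC(ρ)}`. -/
def IijUBC (n m : ℕ) (c : ℕ → ℕ) (ρ : ℝ) (i j : ℕ) :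
    Set (Matrix (OffI n m c) (OffI n m c) ℝ) :=
  { R | ∃ U : Matrix (Fin n) (Fin n) ℝ, IsUBC c ρ i j U ∧ R = annih n m c i j U }

/-- the class `J_O^{UBC_π(ρ)}` of block Jacobi operators. -/
def JopUBC (n m : ℕ) (c : ℕ → ℕ) (ρ : ℝ) (L : List (ℕ × ℕ)) :
    Set (Matrix (OffI n m c) (OffI n m c) ℝ) :=
  { J | ∃ R : ℕ → Matrix (OffI n m c) (OffI n m c) ℝ,
      (∀ (k : ℕ) (hk : k < L.length),
        R k ∈ IijUBC n m c ρ (L.get ⟨k, hk⟩).1 (L.get ⟨k, hk⟩).2) ∧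
      J = (((List.range L.length).reverse).map R).prod }

/-- spectral norm (operator 2-norm). -/
def specNorm {ι : Type*} [Fintype ι] (M : Matrix ι ι ℝ) : ℝ :=
  sSup { v : ℝ | ∃ x : ι → ℝ, enorm x = 1 ∧ enorm (M.mulVec x) = v }

/-- spectral radius. -/
def specRad {ι : Type*} [Fintype ι] (M : Matrix ι ι ℝ) : ℝ :=
  sSup { v : ℝ | ∃ (μ : ℂ) (x : ι → ℂ), x ≠ 0 ∧
    (M.map (fun r : ℝ => (r : ℂ))).mulVec x = μ • x ∧ v = ‖μ‖ }

/-- product `R_{T-1} ⋯ R_1 R_0` of a decorated pivot list. -/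
def prodD {n m : ℕ} {c : ℕ → ℕ}
    (L : List ((ℕ × ℕ) × Matrix (OffI n m c) (OffI n m c) ℝ)) :
    Matrix (OffI n m c) (OffI n m c) ℝ :=
  ((L.map Prod.snd).reverse).prod

/-- plane (Givens) rotation in the `(i,j)` coordinate plane. -/
def rotM (n : ℕ) (i j : ℕ) (φ : ℝ) : Matrix (Fin n) (Fin n) ℝ :=
  fun s t =>
    if (s : ℕ) = i ∧ (t : ℕ) = i then Real.cos φ
    else if (s : ℕ) = j ∧ (t : ℕ) = j then Real.cos φ
    else if (s : ℕ) = i ∧ (t : ℕ) = j then - Real.sin φ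
    else if (s : ℕ) = j ∧ (t : ℕ) = i then Real.sin φ
    else if s = t then 1 else 0

/-- One sweep of the scalar (element-wise) cyclic Jacobi method with rotation
angles in `[-π/4, π/4]`. -/
def ScalarSweep {n : ℕ} (L : List (ℕ × ℕ)) (A A' : Matrix (Fin n) (Fin n) ℝ) : Prop :=
  ∃ (B : ℕ → Matrix (Fin n) (Fin n) ℝ) (φ : ℕ → ℝ),
    B 0 = A ∧ B L.length = A' ∧
    ∀ (k : ℕ) (hk : k < L.length),
      |φ k| ≤ Real.pi / 4 ∧
      B (k + 1) =
        (rotM n (L.get ⟨k, hk⟩).1 (L.get ⟨k, hk⟩).2 (φ k)).transpose * B k *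
          rotM n (L.get ⟨k, hk⟩).1 (L.get ⟨k, hk⟩).2 (φ k) ∧
      ∀ s t : Fin n, (s : ℕ) = (L.get ⟨k, hk⟩).1 → (t : ℕ) = (L.get ⟨k, hk⟩).2 →
        B (k + 1) s t = 0

/-- `k` concatenated copies of a list. -/
def iterList {α : Type*} : ℕ → List α → List α
  | 0, _ => []
  | k + 1, L => L ++ iterList k L

/-! ### Auxiliary development for the proof of statement8 -/

namespace BJP

open Finset

/-! #### Generic analytic lemmas -/

lemma sum_mul_le_sqrt_mul_sqrt {ι : Type*} (s : Finset ι) (f g : ι → ℝ) :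
    ∑ i ∈ s, f i * g i ≤ Real.sqrt (∑ i ∈ s, f i ^ 2) * Real.sqrt (∑ i ∈ s, g i ^ 2) := by
  have h := Finset.sum_mul_sq_le_sq_mul_sq s f g
  have h2 : ∑ i ∈ s, f i * g i ≤ |∑ i ∈ s, f i * g i| := le_abs_self _
  refine h2.trans ?_
  rw [← Real.sqrt_sq_eq_abs, ← Real.sqrt_mul (by positivity)]
  exact Real.sqrt_le_sqrt h

lemma sqrt_sum_sq_add_le {ι : Type*} (s : Finset ι) (f g : ι → ℝ) :
    Real.sqrt (∑ i ∈ s, (f i + g i) ^ 2) ≤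
      Real.sqrt (∑ i ∈ s, f i ^ 2) + Real.sqrt (∑ i ∈ s, g i ^ 2) := by
  set F := Real.sqrt (∑ i ∈ s, f i ^ 2) with hF
  set G := Real.sqrt (∑ i ∈ s, g i ^ 2) with hG
  have hFn : 0 ≤ F := Real.sqrt_nonneg _
  have hGn : 0 ≤ G := Real.sqrt_nonneg _
  have hFs : F ^ 2 = ∑ i ∈ s, f i ^ 2 := Real.sq_sqrt (by positivity)
  have hGs : G ^ 2 = ∑ i ∈ s, g i ^ 2 := Real.sq_sqrt (by positivity)
  have key : ∑ i ∈ s, (f i + g i) ^ 2 ≤ (F + G) ^ 2 := by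
    have hfg : ∑ i ∈ s, f i * g i ≤ F * G := sum_mul_le_sqrt_mul_sqrt s f g
    have expand : ∑ i ∈ s, (f i + g i) ^ 2 =
        (∑ i ∈ s, f i ^ 2) + 2 * (∑ i ∈ s, f i * g i) + ∑ i ∈ s, g i ^ 2 := by
      rw [Finset.mul_sum, ← Finset.sum_add_distrib, ← Finset.sum_add_distrib]
      refine Finset.sum_congr rfl fun i _ => by ring
    rw [expand, ← hFs, ← hGs]; nlinarith
  calc Real.sqrt (∑ i ∈ s, (f i + g i) ^ 2) ≤ Real.sqrt ((F + G) ^ 2) := Real.sqrt_le_sqrt key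
  _ = F + G := Real.sqrt_sq (by positivity)

lemma sqrt_sum_sq_sub_le {ι : Type*} (s : Finset ι) (f g : ι → ℝ) :
    Real.sqrt (∑ i ∈ s, f i ^ 2) - Real.sqrt (∑ i ∈ s, g i ^ 2) ≤
      Real.sqrt (∑ i ∈ s, (f i + g i) ^ 2) := by
  have h := sqrt_sum_sq_add_le s (fun i => f i + g i) (fun i => - g i)
  simp only [add_neg_cancel_right, neg_sq] at h
  linarith

lemma sum_sq_conserve {ι : Type*} [DecidableEq ι] (P : Finset ι) (V : ι → ι → ℝ)
    (h : ∀ k ∈ P, ∀ l ∈ P, ∑ q ∈ P, V k q * V l q = if k = l then 1 else 0)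
    (w : ι → ℝ) :
    ∑ q ∈ P, (∑ k ∈ P, w k * V k q) ^ 2 = ∑ k ∈ P, w k ^ 2 := by
  classical
  calc ∑ q ∈ P, (∑ k ∈ P, w k * V k q) ^ 2
      = ∑ q ∈ P, ∑ k ∈ P, ∑ l ∈ P, (w k * w l) * (V k q * V l q) := by
        refine Finset.sum_congr rfl fun q _ => ?_
        rw [sq, Finset.sum_mul_sum]
        exact Finset.sum_congr rfl fun k _ => Finset.sum_congr rfl fun l _ => by ring
    _ = ∑ k ∈ P, ∑ l ∈ P, (w k * w l) * ∑ q ∈ P, V k q * V l q := by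
        rw [Finset.sum_comm]
        refine Finset.sum_congr rfl fun k _ => ?_
        rw [Finset.sum_comm]
        exact Finset.sum_congr rfl fun l _ => by rw [Finset.mul_sum]
    _ = ∑ k ∈ P, ∑ l ∈ P, (w k * w l) * (if k = l then 1 else 0) := by
        refine Finset.sum_congr rfl fun k hk => Finset.sum_congr rfl fun l hl => by
          rw [h k hk l hl]
    _ = ∑ k ∈ P, w k ^ 2 := by
        refine Finset.sum_congr rfl fun k hk => ?_
        rw [Finset.sum_eq_single k]
        · simp [sq]
        · intro l _ hlk
          simp [Ne.symm hlk]
        · intro hkP; exact absurd hk hkP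

lemma transpose_op_bound {ι : Type*} (S T : Finset ι) (V : ι → ι → ℝ) (ν : ℝ)
    (hν : 0 ≤ ν)
    (h : ∀ x : ι → ℝ, ∑ p ∈ S, (∑ k ∈ T, V p k * x k) ^ 2 ≤ ν ^ 2 * ∑ k ∈ T, x k ^ 2)
    (y : ι → ℝ) :
    ∑ k ∈ T, (∑ p ∈ S, V p k * y p) ^ 2 ≤ ν ^ 2 * ∑ p ∈ S, y p ^ 2 := by
  classical
  set z : ι → ℝ := fun k => ∑ p ∈ S, V p k * y p with hz
  set A : ℝ := ∑ k ∈ T, z k ^ 2 with hA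
  have hAnn : 0 ≤ A := Finset.sum_nonneg fun i _ => sq_nonneg _
  have step1 : A = ∑ p ∈ S, y p * (∑ k ∈ T, V p k * z k) := by
    rw [hA]
    calc ∑ k ∈ T, z k ^ 2 = ∑ k ∈ T, ∑ p ∈ S, (V p k * y p) * z k := by
          refine Finset.sum_congr rfl fun k _ => ?_
          rw [sq, hz, Finset.sum_mul]
      _ = ∑ p ∈ S, ∑ k ∈ T, (V p k * y p) * z k := Finset.sum_comm
      _ = ∑ p ∈ S, y p * (∑ k ∈ T, V p k * z k) := by
          refine Finset.sum_congr rfl fun p _ => ?_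
          rw [Finset.mul_sum]
          exact Finset.sum_congr rfl fun k _ => by ring
  have step2 : A ≤ Real.sqrt (∑ p ∈ S, y p ^ 2) *
      Real.sqrt (∑ p ∈ S, (∑ k ∈ T, V p k * z k) ^ 2) := by
    rw [step1]; exact sum_mul_le_sqrt_mul_sqrt _ _ _
  have step3 : Real.sqrt (∑ p ∈ S, (∑ k ∈ T, V p k * z k) ^ 2) ≤ ν * Real.sqrt A := by
    calc Real.sqrt (∑ p ∈ S, (∑ k ∈ T, V p k * z k) ^ 2) ≤ Real.sqrt (ν ^ 2 * A) :=
          Real.sqrt_le_sqrt (h z)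
      _ = ν * Real.sqrt A := by
          rw [Real.sqrt_mul (by positivity), Real.sqrt_sq hν]
  have step4 : A ≤ Real.sqrt (∑ p ∈ S, y p ^ 2) * (ν * Real.sqrt A) := by
    refine step2.trans ?_
    exact mul_le_mul_of_nonneg_left step3 (Real.sqrt_nonneg _)
  have hAs : Real.sqrt A * Real.sqrt A = A := Real.mul_self_sqrt hAnn
  rcases eq_or_lt_of_le (Real.sqrt_nonneg A) with hA0 | hA0
  · have : A = 0 := by rw [← hAs, ← hA0]; ring
    rw [this]; positivity
  · have h5 : Real.sqrt A ≤ ν * Real.sqrt (∑ p ∈ S, y p ^ 2) := by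
      have h6 : Real.sqrt A * Real.sqrt A ≤
          (ν * Real.sqrt (∑ p ∈ S, y p ^ 2)) * Real.sqrt A := by
        rw [hAs]
        calc A ≤ Real.sqrt (∑ p ∈ S, y p ^ 2) * (ν * Real.sqrt A) := step4
          _ = (ν * Real.sqrt (∑ p ∈ S, y p ^ 2)) * Real.sqrt A := by ring
      exact le_of_mul_le_mul_right h6 hA0
    have h7 := mul_le_mul h5 h5 (Real.sqrt_nonneg _) (by positivity)
    rw [hAs] at h7
    calc A ≤ (ν * Real.sqrt (∑ p ∈ S, y p ^ 2)) * (ν * Real.sqrt (∑ p ∈ S, y p ^ 2)) := h7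
      _ = ν ^ 2 * (Real.sqrt (∑ p ∈ S, y p ^ 2) * Real.sqrt (∑ p ∈ S, y p ^ 2)) := by ring
      _ = ν ^ 2 * ∑ p ∈ S, y p ^ 2 := by rw [Real.mul_self_sqrt (by positivity)]

end BJP

namespace BJP

open Finset

/-! #### Blocks -/

def blkF (n : ℕ) (c : ℕ → ℕ) (r : ℕ) : Finset (Fin n) :=
  Finset.univ.filter (fun t => inBlk c r (t : ℕ))

lemma mem_blkF {n : ℕ} {c : ℕ → ℕ} {r : ℕ} {t : Fin n} :
    t ∈ blkF n c r ↔ inBlk c r (t : ℕ) := by simp [blkF]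

lemma off_mono {c : ℕ → ℕ} {r s : ℕ} (h : r ≤ s) : off c r ≤ off c s := by
  unfold off
  exact Finset.sum_le_sum_of_subset (Finset.range_subset_range.2 h)

lemma off_succ (c : ℕ → ℕ) (r : ℕ) : off c (r + 1) = off c r + c r :=
  Finset.sum_range_succ _ _

lemma off_block_le {c : ℕ → ℕ} {r s : ℕ} (h : r < s) : off c r + c r ≤ off c s := by
  rw [← off_succ]; exact off_mono h

lemma inBlk_unique {c : ℕ → ℕ} {r s t : ℕ} (hr : inBlk c r t) (hs : inBlk c s t) : r = s := by
  rcases lt_trichotomy r s with h | h | h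
  · exact absurd hs.1 (by have := hr.2.trans_le (off_block_le h); omega)
  · exact h
  · exact absurd hr.1 (by have := hs.2.trans_le (off_block_le h); omega)

lemma blk_lt {n : ℕ} {c : ℕ → ℕ} {r s : ℕ} (h : r < s) {p q : Fin n}
    (hp : p ∈ blkF n c r) (hq : q ∈ blkF n c s) : (p : ℕ) < (q : ℕ) := by
  have h1 := (mem_blkF.1 hp).2
  have h2 := (mem_blkF.1 hq).1
  have := off_block_le (c := c) h
  omega

lemma blk_ne {n : ℕ} {c : ℕ → ℕ} {r s : ℕ} (h : r ≠ s) {p q : Fin n}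
    (hp : p ∈ blkF n c r) (hq : q ∈ blkF n c s) : p ≠ q := by
  intro he
  subst he
  exact h (inBlk_unique (mem_blkF.1 hp) (mem_blkF.1 hq))

lemma cover_aux {c : ℕ → ℕ} : ∀ (j t : ℕ), t < off c j → ∃ r, r < j ∧ inBlk c r t := by
  intro j
  induction j with
  | zero => intro t ht; simp [off] at ht
  | succ j ih =>
    intro t ht
    by_cases h : t < off c j
    · obtain ⟨r, hr, hb⟩ := ih t h
      exact ⟨r, Nat.lt_succ_of_lt hr, hb⟩
    · refine ⟨j, Nat.lt_succ_self j, ⟨Nat.le_of_not_lt h, ?_⟩⟩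
      rwa [off_succ] at ht

lemma blk_cover {n m : ℕ} {c : ℕ → ℕ} (hsum : ∑ i ∈ Finset.range m, c i = n) (t : Fin n) :
    ∃ r, r < m ∧ inBlk c r (t : ℕ) := by
  refine cover_aux m t ?_
  have : off c m = n := hsum
  rw [this]
  exact t.isLt

/-! #### Energies -/

def q2 {n : ℕ} (c : ℕ → ℕ) (B : Matrix (Fin n) (Fin n) ℝ) (r s : ℕ) : ℝ :=
  ∑ p ∈ blkF n c r, ∑ q ∈ blkF n c s, (B p q) ^ 2

lemma q2_nonneg {n : ℕ} {c : ℕ → ℕ} {B : Matrix (Fin n) (Fin n) ℝ} {r s : ℕ} :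
    0 ≤ q2 c B r s :=
  Finset.sum_nonneg fun _ _ => Finset.sum_nonneg fun _ _ => sq_nonneg _

lemma q2_symm {n : ℕ} {c : ℕ → ℕ} {B : Matrix (Fin n) (Fin n) ℝ} (hB : B.IsSymm)
    (r s : ℕ) : q2 c B r s = q2 c B s r := by
  unfold q2
  rw [Finset.sum_comm]
  refine Finset.sum_congr rfl fun q _ => Finset.sum_congr rfl fun p _ => ?_
  rw [hB.apply]

def CE {n : ℕ} (c : ℕ → ℕ) (B : Matrix (Fin n) (Fin n) ℝ) (J : Finset ℕ) : ℝ :=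
  ∑ r ∈ J, ∑ s ∈ J, if r ≠ s then q2 c B r s else 0

lemma CE_nonneg {n : ℕ} {c : ℕ → ℕ} {B : Matrix (Fin n) (Fin n) ℝ} {J : Finset ℕ} :
    0 ≤ CE c B J := by
  refine Finset.sum_nonneg fun _ _ => Finset.sum_nonneg fun _ _ => ?_
  split
  · exact q2_nonneg
  · exact le_refl _

end BJP

namespace BJP

open Finset

/-! #### Pivot zone and elementary matrices -/

def pivF (n : ℕ) (c : ℕ → ℕ) (i j : ℕ) : Finset (Fin n) := blkF n c i ∪ blkF n c j

lemma mem_pivF {n : ℕ} {c : ℕ → ℕ} {i j : ℕ} {t : Fin n} :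
    t ∈ pivF n c i j ↔ inPiv c i j (t : ℕ) := by
  simp [pivF, inPiv, mem_blkF, Finset.mem_union]

variable {n : ℕ} {c : ℕ → ℕ} {i j : ℕ} {U B : Matrix (Fin n) (Fin n) ℝ}

lemma pivF_disj (hij : i ≠ j) : Disjoint (blkF n c i) (blkF n c j) := by
  rw [Finset.disjoint_left]
  intro t hti htj
  exact hij (inBlk_unique (mem_blkF.1 hti) (mem_blkF.1 htj))

lemma blkF_subset_pivF_left : blkF n c i ⊆ pivF n c i j := Finset.subset_union_left
lemma blkF_subset_pivF_right : blkF n c j ⊆ pivF n c i j := Finset.subset_union_right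

lemma U_out (hE : IsElem c i j U) {s t : Fin n}
    (h : ¬ inPiv c i j (s : ℕ) ∨ ¬ inPiv c i j (t : ℕ)) :
    U s t = if s = t then 1 else 0 := hE s t (by tauto)

lemma mulU_out (hE : IsElem c i j U) (B : Matrix (Fin n) (Fin n) ℝ) {q : Fin n}
    (hq : ¬ inPiv c i j (q : ℕ)) (p : Fin n) : (B * U) p q = B p q := by
  rw [Matrix.mul_apply]
  rw [Finset.sum_eq_single q]
  · rw [U_out hE (Or.inr hq)]; simp
  · intro k _ hk
    rw [U_out hE (Or.inr hq)]
    simp [hk]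
  · intro h; exact absurd (Finset.mem_univ q) h

lemma UTmul_out (hE : IsElem c i j U) (B : Matrix (Fin n) (Fin n) ℝ) {p : Fin n}
    (hp : ¬ inPiv c i j (p : ℕ)) (q : Fin n) : (U.transpose * B) p q = B p q := by
  rw [Matrix.mul_apply]
  rw [Finset.sum_eq_single p]
  · rw [Matrix.transpose_apply, U_out hE (Or.inr hp)]; simp
  · intro k _ hk
    rw [Matrix.transpose_apply, U_out hE (Or.inr hp)]
    simp [hk]
  · intro h; exact absurd (Finset.mem_univ p) h

lemma mulU_in (hE : IsElem c i j U) (B : Matrix (Fin n) (Fin n) ℝ) {q : Fin n}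
    (hq : inPiv c i j (q : ℕ)) (p : Fin n) :
    (B * U) p q = ∑ k ∈ pivF n c i j, B p k * U k q := by
  rw [Matrix.mul_apply]
  symm
  apply Finset.sum_subset (Finset.subset_univ _)
  intro k _ hk
  have hknp : ¬ inPiv c i j (k : ℕ) := fun h => hk (mem_pivF.2 h)
  have hkq : k ≠ q := fun he => hknp (he ▸ hq)
  rw [U_out hE (Or.inl hknp)]
  simp [hkq]

lemma UTmul_in (hE : IsElem c i j U) (B : Matrix (Fin n) (Fin n) ℝ) {p : Fin n}
    (hp : inPiv c i j (p : ℕ)) (q : Fin n) :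
    (U.transpose * B) p q = ∑ k ∈ pivF n c i j, U k p * B k q := by
  rw [Matrix.mul_apply]
  simp only [Matrix.transpose_apply]
  symm
  apply Finset.sum_subset (Finset.subset_univ _)
  intro k _ hk
  have hknp : ¬ inPiv c i j (k : ℕ) := fun h => hk (mem_pivF.2 h)
  have hkp : k ≠ p := fun he => hknp (he ▸ hp)
  rw [U_out hE (Or.inl hknp)]
  simp [hkp]

/-- entry of the transformed matrix, both indices outside the pivot zone. -/
lemma entry_out_out (hE : IsElem c i j U) {p q : Fin n}
    (hp : ¬ inPiv c i j (p : ℕ)) (hq : ¬ inPiv c i j (q : ℕ)) :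
    (U.transpose * B * U) p q = B p q := by
  rw [mulU_out hE _ hq, UTmul_out hE _ hp]

/-- entry with row outside, column inside the pivot zone. -/
lemma entry_out_in (hE : IsElem c i j U) {p q : Fin n}
    (hp : ¬ inPiv c i j (p : ℕ)) (hq : inPiv c i j (q : ℕ)) :
    (U.transpose * B * U) p q = ∑ k ∈ pivF n c i j, B p k * U k q := by
  rw [mulU_in hE _ hq]
  exact Finset.sum_congr rfl fun k _ => by rw [UTmul_out hE _ hp]

/-- entry with row inside, column outside the pivot zone. -/
lemma entry_in_out (hE : IsElem c i j U) {p q : Fin n}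
    (hp : inPiv c i j (p : ℕ)) (hq : ¬ inPiv c i j (q : ℕ)) :
    (U.transpose * B * U) p q = ∑ k ∈ pivF n c i j, U k p * B k q := by
  rw [mulU_out hE _ hq, UTmul_in hE _ hp]

/-- restricted row orthonormality. -/
lemma rowOrth (hE : IsElem c i j U) (hO : Orth U) :
    ∀ k ∈ pivF n c i j, ∀ l ∈ pivF n c i j,
      ∑ q ∈ pivF n c i j, U k q * U l q = if k = l then 1 else 0 := by
  have hO' : U * U.transpose = 1 := mul_eq_one_comm.mp hO
  intro k hk l hl
  have h1 : (U * U.transpose) k l = ∑ q : Fin n, U k q * U l q := by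
    rw [Matrix.mul_apply]
    exact Finset.sum_congr rfl fun q _ => by rw [Matrix.transpose_apply]
  have h2 : ∑ q ∈ pivF n c i j, U k q * U l q = ∑ q : Fin n, U k q * U l q := by
    apply Finset.sum_subset (Finset.subset_univ _)
    intro q _ hq
    have hqnp : ¬ inPiv c i j (q : ℕ) := fun h => hq (mem_pivF.2 h)
    have : U k q = 0 := by
      rw [U_out hE (Or.inr hqnp)]
      have : k ≠ q := fun he => hqnp (he ▸ mem_pivF.1 hk)
      simp [this]
    rw [this, zero_mul]
  rw [h2, ← h1, hO', Matrix.one_apply]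

/-- restricted column orthonormality. -/
lemma colOrth (hE : IsElem c i j U) (hO : Orth U) :
    ∀ k ∈ pivF n c i j, ∀ l ∈ pivF n c i j,
      ∑ p ∈ pivF n c i j, U p k * U p l = if k = l then 1 else 0 := by
  intro k hk l hl
  have h1 : (U.transpose * U) k l = ∑ p : Fin n, U p k * U p l := by
    rw [Matrix.mul_apply]
    exact Finset.sum_congr rfl fun p _ => by rw [Matrix.transpose_apply]
  have h2 : ∑ p ∈ pivF n c i j, U p k * U p l = ∑ p : Fin n, U p k * U p l := by
    apply Finset.sum_subset (Finset.subset_univ _)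
    intro p _ hp
    have hpnp : ¬ inPiv c i j (p : ℕ) := fun h => hp (mem_pivF.2 h)
    have : U p k = 0 := by
      rw [U_out hE (Or.inl hpnp)]
      have : p ≠ k := fun he => hpnp (he ▸ mem_pivF.1 hk)
      simp [this]
    rw [this, zero_mul]
  rw [h2, ← h1, hO, Matrix.one_apply]

/-- right-multiplication conservation on the pivot zone. -/
lemma consR (hE : IsElem c i j U) (hO : Orth U) (w : Fin n → ℝ) :
    ∑ q ∈ pivF n c i j, (∑ k ∈ pivF n c i j, w k * U k q) ^ 2 =
      ∑ k ∈ pivF n c i j, w k ^ 2 :=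
  sum_sq_conserve _ (fun k q => U k q) (rowOrth hE hO) w

/-- left-multiplication conservation on the pivot zone. -/
lemma consL (hE : IsElem c i j U) (hO : Orth U) (w : Fin n → ℝ) :
    ∑ p ∈ pivF n c i j, (∑ k ∈ pivF n c i j, w k * U p k) ^ 2 =
      ∑ k ∈ pivF n c i j, w k ^ 2 :=
  sum_sq_conserve _ (fun k q => U q k) (fun k hk l hl => colOrth hE hO k hk l hl) w

end BJP

namespace BJP

open Finset

variable {n : ℕ} {c : ℕ → ℕ} {i j : ℕ} {U : Matrix (Fin n) (Fin n) ℝ}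

lemma pad_sum {A P : Finset (Fin n)} (hAP : A ⊆ P) (g : Fin n → ℝ) :
    ∑ k ∈ P, (if k ∈ A then g k else 0) = ∑ k ∈ A, g k := by
  rw [← Finset.sum_subset hAP (fun k _ hk => by simp [hk])]
  exact Finset.sum_congr rfl fun k hk => by simp [hk]

/-- extraction of the `σ_min` lower bound from the `sInf` definition. -/
lemma sigma_col {μ : ℝ} (hμn : 0 ≤ μ) {r : ℕ}
    (hμ : μ ≤ sigmaMinBlk c r U) (f : Fin n → ℝ) :
    μ ^ 2 * ∑ k ∈ blkF n c r, f k ^ 2 ≤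
      ∑ p ∈ blkF n c r, (∑ k ∈ blkF n c r, U p k * f k) ^ 2 := by
  set R := blkF n c r with hR
  set X := ∑ k ∈ R, f k ^ 2 with hXdef
  set Y := ∑ p ∈ R, (∑ k ∈ R, U p k * f k) ^ 2 with hYdef
  have hXnn : 0 ≤ X := Finset.sum_nonneg fun _ _ => sq_nonneg _
  have hYnn : 0 ≤ Y := Finset.sum_nonneg fun _ _ => sq_nonneg _
  rcases eq_or_lt_of_le hXnn with hX0 | hXpos
  · rw [← hX0, mul_zero]
    exact hYnn
  · set s := Real.sqrt X with hs
    have hspos : 0 < s := Real.sqrt_pos.2 hXpos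
    have hs2 : s ^ 2 = X := Real.sq_sqrt hXnn
    set y : Fin n → ℝ := fun t => if t ∈ R then f t / s else 0 with hy
    have h1 : ∀ t : Fin n, ¬ inBlk c r (t : ℕ) → y t = 0 := by
      intro t ht
      have : t ∉ R := fun hm => ht (mem_blkF.1 hm)
      simp [hy, this]
    have hsumy : ∑ t : Fin n, y t ^ 2 = 1 := by
      have e1 : ∀ t : Fin n, y t ^ 2 = if t ∈ R then (f t / s) ^ 2 else 0 := by
        intro t; by_cases h : t ∈ R <;> simp [hy, h]
      rw [Finset.sum_congr rfl fun t _ => e1 t, pad_sum (Finset.subset_univ R)]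
      have e2 : ∑ t ∈ R, (f t / s) ^ 2 = X / s ^ 2 := by
        rw [Finset.sum_congr rfl fun t _ => div_pow (f t) s 2, ← Finset.sum_div]
      rw [e2, hs2, div_self (ne_of_gt hXpos)]
    have h2 : enorm y = 1 := by
      rw [enorm, hsumy, Real.sqrt_one]
    set w : Fin n → ℝ := fun t => if inBlk c r (t : ℕ) then U.mulVec y t else 0 with hw
    have hv : enorm w ∈ { v : ℝ | ∃ x : Fin n → ℝ,
        (∀ t : Fin n, ¬ inBlk c r (t : ℕ) → x t = 0) ∧ enorm x = 1 ∧
        enorm (fun t : Fin n => if inBlk c r (t : ℕ) then U.mulVec x t else 0) = v } :=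
      ⟨y, h1, h2, rfl⟩
    have hbdd : BddBelow { v : ℝ | ∃ x : Fin n → ℝ,
        (∀ t : Fin n, ¬ inBlk c r (t : ℕ) → x t = 0) ∧ enorm x = 1 ∧
        enorm (fun t : Fin n => if inBlk c r (t : ℕ) then U.mulVec x t else 0) = v } := by
      refine ⟨0, ?_⟩
      rintro v ⟨x, _, _, rfl⟩
      exact Real.sqrt_nonneg _
    have hkey : μ ≤ enorm w := le_trans hμ (csInf_le hbdd hv)
    have hmv : ∀ p ∈ R, U.mulVec y p = (∑ k ∈ R, U p k * f k) / s := by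
      intro p _
      have hmv1 : U.mulVec y p = ∑ k : Fin n, U p k * y k := by
        simp [Matrix.mulVec, dotProduct]
      have hmv2 : ∑ k : Fin n, U p k * y k = ∑ k ∈ R, U p k * y k := by
        symm
        apply Finset.sum_subset (Finset.subset_univ _)
        intro k _ hk
        simp [hy, hk]
      rw [hmv1, hmv2, Finset.sum_div]
      refine Finset.sum_congr rfl fun k hk => ?_
      rw [hy]
      simp only [hk, if_pos]
      ring
    have hsumw : ∑ t : Fin n, w t ^ 2 = Y / X := by
      have e1 : ∀ t : Fin n, w t ^ 2 = if t ∈ R then (U.mulVec y t) ^ 2 else 0 := by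
        intro t
        by_cases h : t ∈ R
        · simp [hw, mem_blkF.1 h, h]
        · have h' : ¬ inBlk c r (t : ℕ) := fun hb => h (mem_blkF.2 hb)
          simp [hw, h', h]
      rw [Finset.sum_congr rfl fun t _ => e1 t, pad_sum (Finset.subset_univ R)]
      have e2 : ∑ p ∈ R, (U.mulVec y p) ^ 2 = ∑ p ∈ R, ((∑ k ∈ R, U p k * f k) / s) ^ 2 :=
        Finset.sum_congr rfl fun p hp => by rw [hmv p hp]
      have e3 : ∑ p ∈ R, ((∑ k ∈ R, U p k * f k) / s) ^ 2 = Y / s ^ 2 := by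
        rw [Finset.sum_congr rfl fun p _ => div_pow (∑ k ∈ R, U p k * f k) s 2,
          ← Finset.sum_div]
      rw [e2, e3, hs2]
    have henw : enorm w = Real.sqrt (Y / X) := by rw [enorm, hsumw]
    have hsq : μ ^ 2 ≤ Y / X := by
      have h3 : μ ≤ Real.sqrt (Y / X) := henw ▸ hkey
      calc μ ^ 2 ≤ (Real.sqrt (Y / X)) ^ 2 := by
            apply pow_le_pow_left₀ hμn h3
        _ = Y / X := Real.sq_sqrt (by positivity)
    calc μ ^ 2 * X ≤ (Y / X) * X := mul_le_mul_of_nonneg_right hsq (le_of_lt hXpos)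
      _ = Y := div_mul_cancel₀ _ (ne_of_gt hXpos)

end BJP

namespace BJP

open Finset

variable {n : ℕ} {c : ℕ → ℕ} {i j : ℕ} {U : Matrix (Fin n) (Fin n) ℝ} {μ : ℝ}

lemma pivF_eq_union : pivF n c i j = blkF n c i ∪ blkF n c j := rfl

/-- total column energy conservation for a one-block input. -/
lemma totalCol (hE : IsElem c i j U) (hO : Orth U) {A : Finset (Fin n)}
    (hAP : A ⊆ pivF n c i j) (f : Fin n → ℝ) :
    ∑ p ∈ pivF n c i j, (∑ k ∈ A, U p k * f k) ^ 2 = ∑ k ∈ A, f k ^ 2 := by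
  set P := pivF n c i j with hP
  set ft : Fin n → ℝ := fun k => if k ∈ A then f k else 0 with hft
  have hinner : ∀ p : Fin n, ∑ k ∈ A, U p k * f k = ∑ k ∈ P, ft k * U p k := by
    intro p
    calc ∑ k ∈ A, U p k * f k = ∑ k ∈ A, f k * U p k :=
          Finset.sum_congr rfl fun _ _ => mul_comm _ _
      _ = ∑ k ∈ P, (if k ∈ A then f k * U p k else 0) := (pad_sum hAP _).symm
      _ = ∑ k ∈ P, ft k * U p k := Finset.sum_congr rfl fun k _ => by
          by_cases h : k ∈ A <;> simp [hft, h]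
  have hft2 : ∑ k ∈ P, ft k ^ 2 = ∑ k ∈ A, f k ^ 2 := by
    rw [← pad_sum hAP (fun k => f k ^ 2)]
    exact Finset.sum_congr rfl fun k _ => by by_cases h : k ∈ A <;> simp [hft, h]
  calc ∑ p ∈ P, (∑ k ∈ A, U p k * f k) ^ 2 = ∑ p ∈ P, (∑ k ∈ P, ft k * U p k) ^ 2 :=
        Finset.sum_congr rfl fun p _ => by rw [hinner p]
    _ = ∑ k ∈ P, ft k ^ 2 := consL hE hO ft
    _ = ∑ k ∈ A, f k ^ 2 := hft2

/-- total row energy conservation for a one-block input. -/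
lemma totalRow (hE : IsElem c i j U) (hO : Orth U) {A : Finset (Fin n)}
    (hAP : A ⊆ pivF n c i j) (f : Fin n → ℝ) :
    ∑ q ∈ pivF n c i j, (∑ k ∈ A, f k * U k q) ^ 2 = ∑ k ∈ A, f k ^ 2 := by
  set P := pivF n c i j with hP
  set ft : Fin n → ℝ := fun k => if k ∈ A then f k else 0 with hft
  have hinner : ∀ q : Fin n, ∑ k ∈ A, f k * U k q = ∑ k ∈ P, ft k * U k q := by
    intro q
    calc ∑ k ∈ A, f k * U k q
        = ∑ k ∈ P, (if k ∈ A then f k * U k q else 0) := (pad_sum hAP _).symm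
      _ = ∑ k ∈ P, ft k * U k q := Finset.sum_congr rfl fun k _ => by
          by_cases h : k ∈ A <;> simp [hft, h]
  have hft2 : ∑ k ∈ P, ft k ^ 2 = ∑ k ∈ A, f k ^ 2 := by
    rw [← pad_sum hAP (fun k => f k ^ 2)]
    exact Finset.sum_congr rfl fun k _ => by by_cases h : k ∈ A <;> simp [hft, h]
  calc ∑ q ∈ P, (∑ k ∈ A, f k * U k q) ^ 2 = ∑ q ∈ P, (∑ k ∈ P, ft k * U k q) ^ 2 :=
        Finset.sum_congr rfl fun q _ => by rw [hinner q]
    _ = ∑ k ∈ P, ft k ^ 2 := consR hE hO ft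
    _ = ∑ k ∈ A, f k ^ 2 := hft2

/-- column norm bound for the off block `U_{JI}`. -/
lemma crossColJ (hE : IsElem c i j U) (hO : Orth U) (hij : i ≠ j)
    (hμ0 : 0 ≤ μ) (hsi : μ ≤ sigmaMinBlk c i U) (f : Fin n → ℝ) :
    ∑ p ∈ blkF n c j, (∑ k ∈ blkF n c i, U p k * f k) ^ 2 ≤
      (1 - μ ^ 2) * ∑ k ∈ blkF n c i, f k ^ 2 := by
  have htotal := totalCol hE hO (blkF_subset_pivF_left (j := j)) f
  have hsplit : ∑ p ∈ pivF n c i j, (∑ k ∈ blkF n c i, U p k * f k) ^ 2 =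
      ∑ p ∈ blkF n c i, (∑ k ∈ blkF n c i, U p k * f k) ^ 2 +
      ∑ p ∈ blkF n c j, (∑ k ∈ blkF n c i, U p k * f k) ^ 2 := by
    rw [pivF_eq_union, Finset.sum_union (pivF_disj hij)]
  have hlow := sigma_col hμ0 hsi f
  linarith

/-- column norm bound (trivial, `≤ 1`) for the off block `U_{IJ}`. -/
lemma crossColI (hE : IsElem c i j U) (hO : Orth U) (hij : i ≠ j) (f : Fin n → ℝ) :
    ∑ p ∈ blkF n c i, (∑ k ∈ blkF n c j, U p k * f k) ^ 2 ≤
      ∑ k ∈ blkF n c j, f k ^ 2 := by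
  have htotal := totalCol hE hO (blkF_subset_pivF_right (i := i)) f
  have hsplit : ∑ p ∈ pivF n c i j, (∑ k ∈ blkF n c j, U p k * f k) ^ 2 =
      ∑ p ∈ blkF n c i, (∑ k ∈ blkF n c j, U p k * f k) ^ 2 +
      ∑ p ∈ blkF n c j, (∑ k ∈ blkF n c j, U p k * f k) ^ 2 := by
    rw [pivF_eq_union, Finset.sum_union (pivF_disj hij)]
  have hnn : 0 ≤ ∑ p ∈ blkF n c j, (∑ k ∈ blkF n c j, U p k * f k) ^ 2 :=
    Finset.sum_nonneg fun _ _ => sq_nonneg _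
  linarith

/-- row norm bound (trivial, `≤ 1`) for the off block `U_{IJ}`. -/
lemma rowCross1 (hE : IsElem c i j U) (hO : Orth U) (hij : i ≠ j) (w : Fin n → ℝ) :
    ∑ q ∈ blkF n c j, (∑ k ∈ blkF n c i, w k * U k q) ^ 2 ≤ ∑ k ∈ blkF n c i, w k ^ 2 := by
  have hcol : ∀ x : Fin n → ℝ, ∑ p ∈ blkF n c i, (∑ k ∈ blkF n c j, U p k * x k) ^ 2 ≤
      (1 : ℝ) ^ 2 * ∑ k ∈ blkF n c j, x k ^ 2 := by
    intro x
    rw [one_pow, one_mul]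
    exact crossColI hE hO hij x
  have h := transpose_op_bound (blkF n c i) (blkF n c j) (fun p k => U p k) 1 zero_le_one
    hcol w
  rw [one_pow, one_mul] at h
  calc ∑ q ∈ blkF n c j, (∑ k ∈ blkF n c i, w k * U k q) ^ 2
      = ∑ q ∈ blkF n c j, (∑ k ∈ blkF n c i, U k q * w k) ^ 2 :=
        Finset.sum_congr rfl fun q _ => by
          rw [Finset.sum_congr rfl fun k _ => mul_comm (w k) (U k q)]
    _ ≤ ∑ k ∈ blkF n c i, w k ^ 2 := h

/-- row norm bound for the off block `U_{JI}`. -/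
lemma rowCrossNu (hE : IsElem c i j U) (hO : Orth U) (hij : i ≠ j)
    (hμ0 : 0 ≤ μ) (hμ1 : μ ≤ 1) (hsi : μ ≤ sigmaMinBlk c i U) (w : Fin n → ℝ) :
    ∑ q ∈ blkF n c i, (∑ k ∈ blkF n c j, w k * U k q) ^ 2 ≤
      (1 - μ ^ 2) * ∑ k ∈ blkF n c j, w k ^ 2 := by
  have h1μ : (0 : ℝ) ≤ 1 - μ ^ 2 := by nlinarith
  set ν := Real.sqrt (1 - μ ^ 2) with hν
  have hν0 : 0 ≤ ν := Real.sqrt_nonneg _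
  have hν2 : ν ^ 2 = 1 - μ ^ 2 := Real.sq_sqrt h1μ
  have hcol : ∀ x : Fin n → ℝ, ∑ p ∈ blkF n c j, (∑ k ∈ blkF n c i, U p k * x k) ^ 2 ≤
      ν ^ 2 * ∑ k ∈ blkF n c i, x k ^ 2 := by
    intro x
    rw [hν2]
    exact crossColJ hE hO hij hμ0 hsi x
  have h := transpose_op_bound (blkF n c j) (blkF n c i) (fun p k => U p k) ν hν0 hcol w
  rw [hν2] at h
  calc ∑ q ∈ blkF n c i, (∑ k ∈ blkF n c j, w k * U k q) ^ 2
      = ∑ q ∈ blkF n c i, (∑ k ∈ blkF n c j, U k q * w k) ^ 2 :=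
        Finset.sum_congr rfl fun q _ => by
          rw [Finset.sum_congr rfl fun k _ => mul_comm (w k) (U k q)]
    _ ≤ (1 - μ ^ 2) * ∑ k ∈ blkF n c j, w k ^ 2 := h

/-- row `σ_min` bound for the diagonal block `U_{JJ}`. -/
lemma rowSigmaJ (hE : IsElem c i j U) (hO : Orth U) (hij : i ≠ j)
    (hμ0 : 0 ≤ μ) (hμ1 : μ ≤ 1) (hsi : μ ≤ sigmaMinBlk c i U) (w : Fin n → ℝ) :
    μ ^ 2 * ∑ k ∈ blkF n c j, w k ^ 2 ≤
      ∑ q ∈ blkF n c j, (∑ k ∈ blkF n c j, w k * U k q) ^ 2 := by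
  have htotal := totalRow hE hO (blkF_subset_pivF_right (i := i)) w
  have hsplit : ∑ q ∈ pivF n c i j, (∑ k ∈ blkF n c j, w k * U k q) ^ 2 =
      ∑ q ∈ blkF n c i, (∑ k ∈ blkF n c j, w k * U k q) ^ 2 +
      ∑ q ∈ blkF n c j, (∑ k ∈ blkF n c j, w k * U k q) ^ 2 := by
    rw [pivF_eq_union, Finset.sum_union (pivF_disj hij)]
  have hcross := rowCrossNu hE hO hij hμ0 hμ1 hsi w
  linarith

end BJP

namespace BJP

open Finset

variable {n : ℕ} {c : ℕ → ℕ} {i j : ℕ} {U B : Matrix (Fin n) (Fin n) ℝ} {μ : ℝ}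

lemma notPiv_of_blk {r : ℕ} (hri : r ≠ i) (hrj : r ≠ j) {p : Fin n}
    (hp : p ∈ blkF n c r) : ¬ inPiv c i j (p : ℕ) := by
  rintro (h | h)
  · exact hri (inBlk_unique (mem_blkF.1 hp) h)
  · exact hrj (inBlk_unique (mem_blkF.1 hp) h)

/-- step symmetry. -/
lemma step_symm (hB : B.IsSymm) : (U.transpose * B * U).IsSymm := by
  unfold Matrix.IsSymm
  rw [Matrix.transpose_mul, Matrix.transpose_mul, Matrix.transpose_transpose, hB.eq,
    Matrix.mul_assoc]

/-- (P2) blocks untouched by the pivot are unchanged. -/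
lemma q2_out (hE : IsElem c i j U) {r s : ℕ}
    (hri : r ≠ i) (hrj : r ≠ j) (hsi : s ≠ i) (hsj : s ≠ j) :
    q2 c (U.transpose * B * U) r s = q2 c B r s := by
  unfold q2
  refine Finset.sum_congr rfl fun p hp => Finset.sum_congr rfl fun q hq => ?_
  rw [entry_out_out hE (notPiv_of_blk hri hrj hp) (notPiv_of_blk hsi hsj hq)]

/-- (P8) same-block entries away from the pivot are unchanged. -/
lemma entry_same_out (hE : IsElem c i j U) {r : ℕ} (hri : r ≠ i) (hrj : r ≠ j)
    {p q : Fin n} (hp : p ∈ blkF n c r) (hq : q ∈ blkF n c r) :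
    (U.transpose * B * U) p q = B p q :=
  entry_out_out hE (notPiv_of_blk hri hrj hp) (notPiv_of_blk hri hrj hq)

/-- (P3a) coupling conservation, spectator rows. -/
lemma q2_couple_row (hE : IsElem c i j U) (hO : Orth U) (hij : i ≠ j) {r : ℕ}
    (hri : r ≠ i) (hrj : r ≠ j) :
    q2 c (U.transpose * B * U) r i + q2 c (U.transpose * B * U) r j =
      q2 c B r i + q2 c B r j := by
  unfold q2
  rw [← Finset.sum_add_distrib, ← Finset.sum_add_distrib]
  refine Finset.sum_congr rfl fun p hp => ?_
  have hpn : ¬ inPiv c i j (p : ℕ) := notPiv_of_blk hri hrj hp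
  calc ∑ q ∈ blkF n c i, ((U.transpose * B * U) p q) ^ 2 +
        ∑ q ∈ blkF n c j, ((U.transpose * B * U) p q) ^ 2
      = ∑ q ∈ pivF n c i j, ((U.transpose * B * U) p q) ^ 2 := by
        rw [pivF_eq_union, Finset.sum_union (pivF_disj hij)]
    _ = ∑ q ∈ pivF n c i j, (∑ k ∈ pivF n c i j, B p k * U k q) ^ 2 := by
        refine Finset.sum_congr rfl fun q hq => ?_
        rw [entry_out_in hE hpn (mem_pivF.1 hq)]
    _ = ∑ k ∈ pivF n c i j, (B p k) ^ 2 := consR hE hO _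
    _ = ∑ q ∈ blkF n c i, (B p q) ^ 2 + ∑ q ∈ blkF n c j, (B p q) ^ 2 := by
        rw [pivF_eq_union, Finset.sum_union (pivF_disj hij)]

/-- (P3b) coupling conservation, spectator columns. -/
lemma q2_couple_col (hE : IsElem c i j U) (hO : Orth U) (hij : i ≠ j) {r : ℕ}
    (hri : r ≠ i) (hrj : r ≠ j) :
    q2 c (U.transpose * B * U) i r + q2 c (U.transpose * B * U) j r =
      q2 c B i r + q2 c B j r := by
  unfold q2
  rw [Finset.sum_comm (s := blkF n c i), Finset.sum_comm (s := blkF n c j),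
    Finset.sum_comm (s := blkF n c i) (t := blkF n c r),
    Finset.sum_comm (s := blkF n c j) (t := blkF n c r),
    ← Finset.sum_add_distrib, ← Finset.sum_add_distrib]
  refine Finset.sum_congr rfl fun q hq => ?_
  have hqn : ¬ inPiv c i j (q : ℕ) := notPiv_of_blk hri hrj hq
  calc ∑ p ∈ blkF n c i, ((U.transpose * B * U) p q) ^ 2 +
        ∑ p ∈ blkF n c j, ((U.transpose * B * U) p q) ^ 2
      = ∑ p ∈ pivF n c i j, ((U.transpose * B * U) p q) ^ 2 := by
        rw [pivF_eq_union, Finset.sum_union (pivF_disj hij)]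
    _ = ∑ p ∈ pivF n c i j, (∑ k ∈ pivF n c i j, (B k q) * U k p) ^ 2 := by
        refine Finset.sum_congr rfl fun p hp => ?_
        rw [entry_in_out hE (mem_pivF.1 hp) hqn]
        exact congrArg (· ^ 2) (Finset.sum_congr rfl fun k _ => mul_comm _ _)
    _ = ∑ k ∈ pivF n c i j, (B k q) ^ 2 := consR hE hO _
    _ = ∑ p ∈ blkF n c i, (B p q) ^ 2 + ∑ p ∈ blkF n c j, (B p q) ^ 2 := by
        rw [pivF_eq_union, Finset.sum_union (pivF_disj hij)]

/-- (P4) the pivot block is annihilated. -/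
lemma q2_piv_zero {B' : Matrix (Fin n) (Fin n) ℝ} (hPD : PivDiag c i j B')
    {a b : ℕ} (ha : a = i ∨ a = j) (hb : b = i ∨ b = j) (hab : a ≠ b) :
    q2 c B' a b = 0 := by
  unfold q2
  refine Finset.sum_eq_zero fun p hp => Finset.sum_eq_zero fun q hq => ?_
  have hpq : p ≠ q := blk_ne hab hp hq
  have hpiv_p : inPiv c i j (p : ℕ) := by
    rcases ha with h | h <;> subst h
    · exact Or.inl (mem_blkF.1 hp)
    · exact Or.inr (mem_blkF.1 hp)
  have hpiv_q : inPiv c i j (q : ℕ) := by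
    rcases hb with h | h <;> subst h
    · exact Or.inl (mem_blkF.1 hq)
    · exact Or.inr (mem_blkF.1 hq)
  rw [hPD p q hpq hpiv_p hpiv_q]
  norm_num

/-- (P5) one-step lower bound for the `(r,j)` block. -/
lemma q2_recur (hE : IsElem c i j U) (hO : Orth U) (hij : i ≠ j)
    (hμ0 : 0 ≤ μ) (hμ1 : μ ≤ 1) (hsi : μ ≤ sigmaMinBlk c i U) {r : ℕ}
    (hri : r ≠ i) (hrj : r ≠ j) :
    μ * Real.sqrt (q2 c B r j) - Real.sqrt (q2 c B r i) ≤
      Real.sqrt (q2 c (U.transpose * B * U) r j) := by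
  classical
  set s : Finset (Fin n × Fin n) := (blkF n c r) ×ˢ (blkF n c j) with hs
  set f : Fin n × Fin n → ℝ := fun x => ∑ k ∈ blkF n c j, B x.1 k * U k x.2 with hf
  set g : Fin n × Fin n → ℝ := fun x => ∑ k ∈ blkF n c i, B x.1 k * U k x.2 with hg
  have key1 : q2 c (U.transpose * B * U) r j = ∑ x ∈ s, (f x + g x) ^ 2 := by
    unfold q2
    rw [hs, Finset.sum_product]
    refine Finset.sum_congr rfl fun p hp => Finset.sum_congr rfl fun q hq => ?_
    have hpn : ¬ inPiv c i j (p : ℕ) := notPiv_of_blk hri hrj hp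
    have hqpiv : inPiv c i j (q : ℕ) := Or.inr (mem_blkF.1 hq)
    rw [entry_out_in hE hpn hqpiv]
    congr 1
    rw [pivF_eq_union, Finset.sum_union (pivF_disj hij), hf, hg]
    ring
  have key2 : μ ^ 2 * q2 c B r j ≤ ∑ x ∈ s, f x ^ 2 := by
    rw [hs, Finset.sum_product]
    unfold q2
    rw [Finset.mul_sum]
    refine Finset.sum_le_sum fun p hp => ?_
    exact rowSigmaJ hE hO hij hμ0 hμ1 hsi (fun k => B p k)
  have key3 : ∑ x ∈ s, g x ^ 2 ≤ q2 c B r i := by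
    rw [hs, Finset.sum_product]
    unfold q2
    refine Finset.sum_le_sum fun p hp => ?_
    exact rowCross1 hE hO hij (fun k => B p k)
  have h1 : Real.sqrt (∑ x ∈ s, f x ^ 2) - Real.sqrt (∑ x ∈ s, g x ^ 2) ≤
      Real.sqrt (∑ x ∈ s, (f x + g x) ^ 2) := sqrt_sum_sq_sub_le s f g
  have h2 : μ * Real.sqrt (q2 c B r j) ≤ Real.sqrt (∑ x ∈ s, f x ^ 2) := by
    have := Real.sqrt_le_sqrt key2
    rwa [Real.sqrt_mul (by positivity), Real.sqrt_sq hμ0] at this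
  have h3 : Real.sqrt (∑ x ∈ s, g x ^ 2) ≤ Real.sqrt (q2 c B r i) :=
    Real.sqrt_le_sqrt key3
  rw [key1]
  linarith

/-- (P6) the cross-energy identity for one step. -/
lemma CE_step (hE : IsElem c i j U) (hO : Orth U) (hij : i ≠ j)
    (hPD : PivDiag c i j (U.transpose * B * U)) {𝒥 : Finset ℕ}
    (hi𝒥 : i ∈ 𝒥) (hj𝒥 : j ∈ 𝒥) :
    CE c (U.transpose * B * U) 𝒥 = CE c B 𝒥 - (q2 c B i j + q2 c B j i) := by
  classical
  set T : Finset ℕ := {i, j} with hT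
  have hsub : T ⊆ 𝒥 := by
    rw [hT, Finset.insert_subset_iff, Finset.singleton_subset_iff]
    exact ⟨hi𝒥, hj𝒥⟩
  have hiT : i ∉ 𝒥 \ T := by simp [hT]
  have hjT : j ∉ 𝒥 \ T := by simp [hT]
  have decomp : ∀ M : Matrix (Fin n) (Fin n) ℝ, CE c M 𝒥 =
      (∑ r ∈ 𝒥 \ T, ∑ s ∈ 𝒥 \ T, if r ≠ s then q2 c M r s else 0) +
      (∑ r ∈ 𝒥 \ T, ∑ s ∈ T, if r ≠ s then q2 c M r s else 0) +
      ((∑ r ∈ T, ∑ s ∈ 𝒥 \ T, if r ≠ s then q2 c M r s else 0) +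
       (∑ r ∈ T, ∑ s ∈ T, if r ≠ s then q2 c M r s else 0)) := by
    intro M
    unfold CE
    rw [← Finset.sum_sdiff hsub (f := fun r => ∑ s ∈ 𝒥, if r ≠ s then q2 c M r s else 0)]
    congr 1
    · rw [Finset.sum_congr rfl fun r _ => (Finset.sum_sdiff hsub (f := fun s =>
        if r ≠ s then q2 c M r s else 0)).symm, Finset.sum_add_distrib]
    · rw [Finset.sum_congr rfl fun r _ => (Finset.sum_sdiff hsub (f := fun s =>
        if r ≠ s then q2 c M r s else 0)).symm, Finset.sum_add_distrib]
  rw [decomp, decomp]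
  have e1 : ∑ r ∈ 𝒥 \ T, ∑ s ∈ 𝒥 \ T, (if r ≠ s then q2 c (U.transpose * B * U) r s else 0) =
      ∑ r ∈ 𝒥 \ T, ∑ s ∈ 𝒥 \ T, if r ≠ s then q2 c B r s else 0 := by
    refine Finset.sum_congr rfl fun r hr => Finset.sum_congr rfl fun s hs => ?_
    have hr' : r ≠ i ∧ r ≠ j := by
      have := (Finset.mem_sdiff.1 hr).2
      simp [hT] at this
      exact this
    have hs' : s ≠ i ∧ s ≠ j := by
      have := (Finset.mem_sdiff.1 hs).2
      simp [hT] at this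
      exact this
    by_cases h : r ≠ s
    · rw [if_pos h, if_pos h, q2_out hE hr'.1 hr'.2 hs'.1 hs'.2]
    · rw [if_neg h, if_neg h]
  have e2 : ∑ r ∈ 𝒥 \ T, ∑ s ∈ T, (if r ≠ s then q2 c (U.transpose * B * U) r s else 0) =
      ∑ r ∈ 𝒥 \ T, ∑ s ∈ T, if r ≠ s then q2 c B r s else 0 := by
    refine Finset.sum_congr rfl fun r hr => ?_
    have hr' : r ≠ i ∧ r ≠ j := by
      have := (Finset.mem_sdiff.1 hr).2
      simp [hT] at this
      exact this
    rw [hT, Finset.sum_pair hij, Finset.sum_pair hij,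
      if_pos hr'.1, if_pos hr'.2, if_pos hr'.1, if_pos hr'.2]
    exact q2_couple_row hE hO hij hr'.1 hr'.2
  have e3 : ∑ r ∈ T, ∑ s ∈ 𝒥 \ T, (if r ≠ s then q2 c (U.transpose * B * U) r s else 0) =
      ∑ r ∈ T, ∑ s ∈ 𝒥 \ T, if r ≠ s then q2 c B r s else 0 := by
    rw [hT, Finset.sum_pair hij, Finset.sum_pair hij,
      ← Finset.sum_add_distrib, ← Finset.sum_add_distrib]
    refine Finset.sum_congr rfl fun s hs => ?_
    have hs' : s ≠ i ∧ s ≠ j := by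
      have := (Finset.mem_sdiff.1 hs).2
      simp [hT] at this
      exact this
    rw [if_pos (Ne.symm hs'.1), if_pos (Ne.symm hs'.2),
      if_pos (Ne.symm hs'.1), if_pos (Ne.symm hs'.2)]
    exact q2_couple_col hE hO hij hs'.1 hs'.2
  have e4new : ∑ r ∈ T, ∑ s ∈ T, (if r ≠ s then q2 c (U.transpose * B * U) r s else 0) = 0 := by
    rw [hT, Finset.sum_pair hij]
    rw [Finset.sum_pair hij, Finset.sum_pair hij]
    have hii : ¬ (i ≠ i) := by simp
    have hjj : ¬ (j ≠ j) := by simp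
    rw [if_neg hii, if_neg hjj, if_pos hij, if_pos (Ne.symm hij),
      q2_piv_zero hPD (Or.inl rfl) (Or.inr rfl) hij,
      q2_piv_zero hPD (Or.inr rfl) (Or.inl rfl) (Ne.symm hij)]
    ring
  have e4old : ∑ r ∈ T, ∑ s ∈ T, (if r ≠ s then q2 c B r s else 0) =
      q2 c B i j + q2 c B j i := by
    rw [hT, Finset.sum_pair hij]
    rw [Finset.sum_pair hij, Finset.sum_pair hij]
    have hii : ¬ (i ≠ i) := by simp
    have hjj : ¬ (j ≠ j) := by simp
    rw [if_neg hii, if_neg hjj, if_pos hij, if_pos (Ne.symm hij)]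
    ring
  rw [e1, e2, e3, e4new, e4old]
  ring

end BJP

namespace BJP

open Finset

/-- generalized Jacobi step carrying the `σ_min` bound `μ`. -/
def MstepG (n : ℕ) (c : ℕ → ℕ) (μ : ℝ) (i j : ℕ)
    (B B' : Matrix (Fin n) (Fin n) ℝ) : Prop :=
  i ≠ j ∧ ∃ U : Matrix (Fin n) (Fin n) ℝ, IsElem c i j U ∧ Orth U ∧
    μ ≤ sigmaMinBlk c i U ∧ B' = U.transpose * B * U ∧ PivDiag c i j B'

/-- chain of Jacobi steps along a pivot list. -/
def MChain (n : ℕ) (c : ℕ → ℕ) (μ : ℝ) :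
    List (ℕ × ℕ) → Matrix (Fin n) (Fin n) ℝ → Matrix (Fin n) (Fin n) ℝ → Prop
  | [], B, B' => B' = B
  | p :: l, B, B' => ∃ Bm, MstepG n c μ p.1 p.2 B Bm ∧ MChain n c μ l Bm B'

variable {n : ℕ} {c : ℕ → ℕ} {μ : ℝ}

lemma mchain_append {L1 L2 : List (ℕ × ℕ)} {B B'' : Matrix (Fin n) (Fin n) ℝ}
    (h : MChain n c μ (L1 ++ L2) B B'') :
    ∃ Bm, MChain n c μ L1 B Bm ∧ MChain n c μ L2 Bm B'' := by
  induction L1 generalizing B with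
  | nil => exact ⟨B, rfl, h⟩
  | cons p l ih =>
    obtain ⟨Bm, hstep, hrest⟩ := h
    obtain ⟨Bf, h1, h2⟩ := ih hrest
    exact ⟨Bf, ⟨Bm, hstep, h1⟩, h2⟩

lemma mstepG_symm {i j : ℕ} {B B' : Matrix (Fin n) (Fin n) ℝ}
    (h : MstepG n c μ i j B B') (hB : B.IsSymm) : B'.IsSymm := by
  obtain ⟨hij, U, hE, hO, hs, rfl, hPD⟩ := h
  exact step_symm hB

lemma mchain_symm {L : List (ℕ × ℕ)} {B B' : Matrix (Fin n) (Fin n) ℝ}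
    (h : MChain n c μ L B B') (hB : B.IsSymm) : B'.IsSymm := by
  induction L generalizing B with
  | nil => rw [h]; exact hB
  | cons p l ih =>
    obtain ⟨Bm, hstep, hrest⟩ := h
    exact ih hrest (mstepG_symm hstep hB)

/-- per-step cross-energy identity. -/
lemma mstepG_CE {i j : ℕ} {B B' : Matrix (Fin n) (Fin n) ℝ}
    (h : MstepG n c μ i j B B') {𝒥 : Finset ℕ} (hi : i ∈ 𝒥) (hj : j ∈ 𝒥) :
    CE c B' 𝒥 = CE c B 𝒥 - (q2 c B i j + q2 c B j i) := by
  obtain ⟨hij, U, hE, hO, hs, rfl, hPD⟩ := h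
  exact CE_step hE hO hij hPD hi hj

lemma mstepG_CE_le {i j : ℕ} {B B' : Matrix (Fin n) (Fin n) ℝ}
    (h : MstepG n c μ i j B B') {𝒥 : Finset ℕ} (hi : i ∈ 𝒥) (hj : j ∈ 𝒥) :
    CE c B' 𝒥 ≤ CE c B 𝒥 := by
  rw [mstepG_CE h hi hj]
  have := q2_nonneg (c := c) (B := B) (r := i) (s := j)
  have := q2_nonneg (c := c) (B := B) (r := j) (s := i)
  linarith

/-- cross-energy is nonincreasing along a chain whose pivots lie in `𝒥`. -/
lemma mchain_CE_le {L : List (ℕ × ℕ)} {B B' : Matrix (Fin n) (Fin n) ℝ}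
    (h : MChain n c μ L B B') {𝒥 : Finset ℕ}
    (hL : ∀ p ∈ L, p.1 ∈ 𝒥 ∧ p.2 ∈ 𝒥) :
    CE c B' 𝒥 ≤ CE c B 𝒥 := by
  induction L generalizing B with
  | nil => rw [h]
  | cons p l ih =>
    obtain ⟨Bm, hstep, hrest⟩ := h
    have h1 := mstepG_CE_le hstep (hL p (List.mem_cons_self)).1
      (hL p (List.mem_cons_self)).2
    have h2 := ih hrest (fun q hq => hL q (List.mem_cons_of_mem p hq))
    linarith

/-- off-diagonal part of a diagonal block vanishes. -/
def BlkDiag (n : ℕ) (c : ℕ → ℕ) (r : ℕ) (M : Matrix (Fin n) (Fin n) ℝ) : Prop :=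
  ∀ p ∈ blkF n c r, ∀ q ∈ blkF n c r, p ≠ q → M p q = 0

lemma mstepG_blkdiag_preserve {i j r : ℕ} {B B' : Matrix (Fin n) (Fin n) ℝ}
    (h : MstepG n c μ i j B B') (hd : BlkDiag n c r B) : BlkDiag n c r B' := by
  obtain ⟨hij, U, hE, hO, hs, rfl, hPD⟩ := h
  intro p hp q hq hpq
  by_cases hri : r = i
  · exact hPD p q hpq (Or.inl (mem_blkF.1 (hri ▸ hp))) (Or.inl (mem_blkF.1 (hri ▸ hq)))
  · by_cases hrj : r = j
    · exact hPD p q hpq (Or.inr (mem_blkF.1 (hrj ▸ hp))) (Or.inr (mem_blkF.1 (hrj ▸ hq)))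
    · rw [entry_same_out hE hri hrj hp hq]
      exact hd p hp q hq hpq

lemma mstepG_blkdiag_make {i j r : ℕ} {B B' : Matrix (Fin n) (Fin n) ℝ}
    (h : MstepG n c μ i j B B') (hr : r = i ∨ r = j) : BlkDiag n c r B' := by
  obtain ⟨hij, U, hE, hO, hs, rfl, hPD⟩ := h
  intro p hp q hq hpq
  rcases hr with h | h
  · exact hPD p q hpq (Or.inl (mem_blkF.1 (h ▸ hp))) (Or.inl (mem_blkF.1 (h ▸ hq)))
  · exact hPD p q hpq (Or.inr (mem_blkF.1 (h ▸ hp))) (Or.inr (mem_blkF.1 (h ▸ hq)))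

lemma mchain_blkdiag_preserve {L : List (ℕ × ℕ)} {r : ℕ}
    {B B' : Matrix (Fin n) (Fin n) ℝ}
    (h : MChain n c μ L B B') (hd : BlkDiag n c r B) : BlkDiag n c r B' := by
  induction L generalizing B with
  | nil => rw [h]; exact hd
  | cons p l ih =>
    obtain ⟨Bm, hstep, hrest⟩ := h
    exact ih hrest (mstepG_blkdiag_preserve hstep hd)

lemma mchain_blkdiag_make {L : List (ℕ × ℕ)} {r : ℕ}
    {B B' : Matrix (Fin n) (Fin n) ℝ}
    (h : MChain n c μ L B B') (hr : ∃ p ∈ L, p.1 = r ∨ p.2 = r) : BlkDiag n c r B' := by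
  induction L generalizing B with
  | nil => obtain ⟨p, hp, _⟩ := hr; exact absurd hp List.not_mem_nil
  | cons p l ih =>
    obtain ⟨Bm, hstep, hrest⟩ := h
    obtain ⟨q, hq, hqr⟩ := hr
    rcases List.mem_cons.1 hq with rfl | hql
    · refine mchain_blkdiag_preserve hrest ?_
      exact mstepG_blkdiag_make hstep (by tauto)
    · exact ih hrest ⟨q, hql, hqr⟩

end BJP

namespace BJP

open Finset

variable {n : ℕ} {c : ℕ → ℕ} {μ : ℝ}

lemma CE_insert {M : Matrix (Fin n) (Fin n) ℝ} {a : ℕ} {s : Finset ℕ} (ha : a ∉ s) :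
    CE c M (insert a s) = CE c M s + (∑ r ∈ s, q2 c M r a) + (∑ r ∈ s, q2 c M a r) := by
  unfold CE
  rw [Finset.sum_insert ha]
  have h1 : ∑ s' ∈ insert a s, (if a ≠ s' then q2 c M a s' else 0) =
      ∑ r ∈ s, q2 c M a r := by
    rw [Finset.sum_insert ha, if_neg (by simp), zero_add]
    refine Finset.sum_congr rfl fun r hr => ?_
    have har : a ≠ r := by rintro rfl; exact ha hr
    rw [if_pos har]
  have h2 : ∀ r ∈ s, ∑ s' ∈ insert a s, (if r ≠ s' then q2 c M r s' else 0)
      = q2 c M r a + ∑ s' ∈ s, (if r ≠ s' then q2 c M r s' else 0) := by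
    intro r hr
    have hra : r ≠ a := by rintro rfl; exact ha hr
    rw [Finset.sum_insert ha, if_pos hra]
  rw [h1, Finset.sum_congr rfl h2, Finset.sum_add_distrib]
  ring

set_option maxHeartbeats 2000000 in
lemma CE_range_succ {M : Matrix (Fin n) (Fin n) ℝ} (hsym : M.IsSymm) (j₀ : ℕ) :
    CE c M (Finset.range (j₀ + 1)) =
      CE c M (Finset.range j₀) + 2 * ∑ r ∈ Finset.range j₀, q2 c M r j₀ := by
  rw [Finset.range_add_one, CE_insert Finset.notMem_range_self]
  have h : ∑ r ∈ Finset.range j₀, q2 c M j₀ r = ∑ r ∈ Finset.range j₀, q2 c M r j₀ :=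
    Finset.sum_congr rfl fun r _ => q2_symm (c := c) hsym j₀ r
  rw [h]; ring

/-- loss accounting along the required steps of one column phase. -/
lemma phase_loss (j₀ : ℕ) (τ : ℕ → ℕ) (Bs : ℕ → Matrix (Fin n) (Fin n) ℝ)
    (hstep : ∀ b, b < j₀ → MstepG n c μ (τ b) j₀ (Bs b) (Bs (b + 1)))
    {𝒥 : Finset ℕ} (hτ𝒥 : ∀ b, b < j₀ → τ b ∈ 𝒥) (hj𝒥 : j₀ ∈ 𝒥) :
    ∀ t, t ≤ j₀ → CE c (Bs t) 𝒥 = CE c (Bs 0) 𝒥 -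
      ∑ b ∈ Finset.range t, (q2 c (Bs b) (τ b) j₀ + q2 c (Bs b) j₀ (τ b)) := by
  intro t
  induction t with
  | zero => intro _; simp
  | succ t ih =>
    intro ht
    have ht' : t < j₀ := ht
    have h1 := mstepG_CE (hstep t ht') (hτ𝒥 t ht') hj𝒥
    rw [h1, ih (le_of_lt ht'), Finset.sum_range_succ]
    ring

/-- symmetry along the phase. -/
lemma phase_symm (j₀ : ℕ) (τ : ℕ → ℕ) (Bs : ℕ → Matrix (Fin n) (Fin n) ℝ)
    (hstep : ∀ b, b < j₀ → MstepG n c μ (τ b) j₀ (Bs b) (Bs (b + 1)))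
    (hsym : (Bs 0).IsSymm) : ∀ t, t ≤ j₀ → (Bs t).IsSymm := by
  intro t
  induction t with
  | zero => intro _; exact hsym
  | succ t ih =>
    intro ht
    have ht' : t < j₀ := ht
    exact mstepG_symm (hstep t ht') (ih (le_of_lt ht'))

/-- pairs among the first `j₀` blocks are untouched until one of them is pivoted. -/
lemma phase_unchanged (j₀ : ℕ) (τ : ℕ → ℕ) (Bs : ℕ → Matrix (Fin n) (Fin n) ℝ)
    (hstep : ∀ b, b < j₀ → MstepG n c μ (τ b) j₀ (Bs b) (Bs (b + 1)))
    {r s : ℕ} (hr : r < j₀) (hs : s < j₀) :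
    ∀ t, t ≤ j₀ → (∀ e, e < t → τ e ≠ r ∧ τ e ≠ s) →
      q2 c (Bs t) r s = q2 c (Bs 0) r s := by
  intro t
  induction t with
  | zero => intro _ _; rfl
  | succ t ih =>
    intro ht hτ
    have ht' : t < j₀ := ht
    obtain ⟨hij, U, hE, hO, hσ, hBe, hPD⟩ := hstep t ht'
    have h1 : q2 c (Bs (t + 1)) r s = q2 c (Bs t) r s := by
      rw [hBe]
      exact q2_out hE (Ne.symm (hτ t (Nat.lt_succ_self t)).1)
        (Nat.ne_of_lt hr) (Ne.symm (hτ t (Nat.lt_succ_self t)).2) (Nat.ne_of_lt hs)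
    rw [h1]
    exact ih (le_of_lt ht') (fun e he => hτ e (Nat.lt_succ_of_lt he))

set_option maxHeartbeats 1000000 in
/-- descent estimate for the column block of a fixed spectator row. -/
lemma phase_descent (hμ0 : 0 < μ) (hμ1 : μ ≤ 1)
    (j₀ : ℕ) (τ : ℕ → ℕ) (hτlt : ∀ b, b < j₀ → τ b < j₀)
    (hτinj : ∀ b, b < j₀ → ∀ b', b' < j₀ → τ b = τ b' → b = b')
    (Bs : ℕ → Matrix (Fin n) (Fin n) ℝ)
    (hstep : ∀ b, b < j₀ → MstepG n c μ (τ b) j₀ (Bs b) (Bs (b + 1)))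
    {a : ℕ} (ha : a < j₀) :
    ∀ t, t ≤ a → μ ^ t * Real.sqrt (q2 c (Bs 0) (τ a) j₀) ≤
      Real.sqrt (q2 c (Bs t) (τ a) j₀) +
      ∑ e ∈ Finset.range t, Real.sqrt (q2 c (Bs 0) (τ a) (τ e)) := by
  intro t
  induction t with
  | zero => intro _; simp
  | succ t ih =>
    intro ht
    have hta : t < a := ht
    have htj : t < j₀ := lt_trans hta ha
    have hane : τ a ≠ τ t := by
      intro h
      have := hτinj a ha t htj h
      omega
    obtain ⟨hij, U, hE, hO, hσ, hBe, hPD⟩ := hstep t htj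
    have hrec : μ * Real.sqrt (q2 c (Bs t) (τ a) j₀) -
        Real.sqrt (q2 c (Bs t) (τ a) (τ t)) ≤
        Real.sqrt (q2 c (Bs (t + 1)) (τ a) j₀) := by
      rw [hBe]
      exact q2_recur hE hO hij (le_of_lt hμ0) hμ1 hσ hane (Nat.ne_of_lt (hτlt a ha))
    have hunch : q2 c (Bs t) (τ a) (τ t) = q2 c (Bs 0) (τ a) (τ t) := by
      refine phase_unchanged j₀ τ Bs hstep (hτlt a ha) (hτlt t htj) t (le_of_lt htj) ?_
      intro e he
      constructor
      · intro h
        have := hτinj e (by omega) a ha h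
        omega
      · intro h
        have := hτinj e (by omega) t htj h
        omega
    have ihh := ih (le_of_lt hta)
    have hS : 0 ≤ ∑ e ∈ Finset.range t, Real.sqrt (q2 c (Bs 0) (τ a) (τ e)) :=
      Finset.sum_nonneg fun _ _ => Real.sqrt_nonneg _
    have step1 : μ ^ (t + 1) * Real.sqrt (q2 c (Bs 0) (τ a) j₀) ≤
        μ * Real.sqrt (q2 c (Bs t) (τ a) j₀) +
        ∑ e ∈ Finset.range t, Real.sqrt (q2 c (Bs 0) (τ a) (τ e)) := by
      have h2 := mul_le_mul_of_nonneg_left ihh (le_of_lt hμ0)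
      have h3 : μ * (∑ e ∈ Finset.range t, Real.sqrt (q2 c (Bs 0) (τ a) (τ e))) ≤
          ∑ e ∈ Finset.range t, Real.sqrt (q2 c (Bs 0) (τ a) (τ e)) := by
        nlinarith
      calc μ ^ (t + 1) * Real.sqrt (q2 c (Bs 0) (τ a) j₀)
          = μ * (μ ^ t * Real.sqrt (q2 c (Bs 0) (τ a) j₀)) := by ring
        _ ≤ μ * (Real.sqrt (q2 c (Bs t) (τ a) j₀) +
            ∑ e ∈ Finset.range t, Real.sqrt (q2 c (Bs 0) (τ a) (τ e))) := h2
        _ ≤ μ * Real.sqrt (q2 c (Bs t) (τ a) j₀) +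
            ∑ e ∈ Finset.range t, Real.sqrt (q2 c (Bs 0) (τ a) (τ e)) := by
            rw [mul_add]; linarith
    rw [Finset.sum_range_succ]
    have : μ * Real.sqrt (q2 c (Bs t) (τ a) j₀) ≤
        Real.sqrt (q2 c (Bs (t + 1)) (τ a) j₀) +
        Real.sqrt (q2 c (Bs 0) (τ a) (τ t)) := by
      rw [← hunch]; linarith
    linarith

end BJP

namespace BJP

open Finset

variable {n : ℕ} {c : ℕ → ℕ} {μ : ℝ}

lemma phase_main (hμ0 : 0 < μ) (hμ1 : μ ≤ 1)
    (j₀ : ℕ) (τ : ℕ → ℕ) (hτlt : ∀ b, b < j₀ → τ b < j₀)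
    (hτinj : ∀ b, b < j₀ → ∀ b', b' < j₀ → τ b = τ b' → b = b')
    (hτsurj : ∀ r, r < j₀ → ∃ b, b < j₀ ∧ τ b = r)
    (Bs : ℕ → Matrix (Fin n) (Fin n) ℝ)
    (hstep : ∀ b, b < j₀ → MstepG n c μ (τ b) j₀ (Bs b) (Bs (b + 1)))
    (hsym : (Bs 0).IsSymm) :
    μ ^ (2 * j₀) * (CE c (Bs 0) (Finset.range (j₀ + 1)) - CE c (Bs 0) (Finset.range j₀))
      ≤ 2 * (∑ b ∈ Finset.range j₀, (q2 c (Bs b) (τ b) j₀ + q2 c (Bs b) j₀ (τ b)))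
        + 4 * j₀ * CE c (Bs 0) (Finset.range j₀) := by
  classical
  set RowP : ℕ → ℝ := fun r =>
    ∑ s' ∈ Finset.range j₀, if r ≠ s' then q2 c (Bs 0) r s' else 0 with hRowP
  have hRowP_nonneg : ∀ r, 0 ≤ RowP r := by
    intro r
    refine Finset.sum_nonneg fun s' _ => ?_
    split
    · exact q2_nonneg
    · exact le_refl _
  -- per-pivot squared estimate
  have perb : ∀ b ∈ Finset.range j₀,
      μ ^ (2 * j₀) * q2 c (Bs 0) (τ b) j₀ ≤
        2 * q2 c (Bs b) (τ b) j₀ + 2 * j₀ * RowP (τ b) := by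
    intro b hb
    have hb' : b < j₀ := Finset.mem_range.1 hb
    have hdes := phase_descent hμ0 hμ1 j₀ τ hτlt hτinj Bs hstep hb' b le_rfl
    set q := Real.sqrt (q2 c (Bs 0) (τ b) j₀) with hq
    set lam := Real.sqrt (q2 c (Bs b) (τ b) j₀) with hlam
    set S := ∑ e ∈ Finset.range b, Real.sqrt (q2 c (Bs 0) (τ b) (τ e)) with hS
    have hqn : 0 ≤ q := Real.sqrt_nonneg _
    have hlamn : 0 ≤ lam := Real.sqrt_nonneg _
    have hSn : 0 ≤ S := Finset.sum_nonneg fun _ _ => Real.sqrt_nonneg _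
    have h1 : μ ^ j₀ * q ≤ lam + S := by
      have hmono : μ ^ j₀ ≤ μ ^ b := pow_le_pow_of_le_one hμ0.le hμ1 (le_of_lt hb')
      have h2 : μ ^ j₀ * q ≤ μ ^ b * q := mul_le_mul_of_nonneg_right hmono hqn
      exact h2.trans hdes
    have hq2 : q ^ 2 = q2 c (Bs 0) (τ b) j₀ := Real.sq_sqrt q2_nonneg
    have hlam2 : lam ^ 2 = q2 c (Bs b) (τ b) j₀ := Real.sq_sqrt q2_nonneg
    have hS2 : S ^ 2 ≤ (j₀ : ℝ) * ∑ e ∈ Finset.range b, q2 c (Bs 0) (τ b) (τ e) := by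
      have hcs := sq_sum_le_card_mul_sum_sq (s := Finset.range b)
        (f := fun e => Real.sqrt (q2 c (Bs 0) (τ b) (τ e)))
      have he : ∑ e ∈ Finset.range b, (Real.sqrt (q2 c (Bs 0) (τ b) (τ e))) ^ 2 =
          ∑ e ∈ Finset.range b, q2 c (Bs 0) (τ b) (τ e) :=
        Finset.sum_congr rfl fun e _ => Real.sq_sqrt q2_nonneg
      rw [Finset.card_range, he] at hcs
      have hble : (b : ℝ) ≤ (j₀ : ℝ) := Nat.cast_le.2 (le_of_lt hb')
      have hsnn : 0 ≤ ∑ e ∈ Finset.range b, q2 c (Bs 0) (τ b) (τ e) :=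
        Finset.sum_nonneg fun _ _ => q2_nonneg
      calc S ^ 2 ≤ (b : ℝ) * ∑ e ∈ Finset.range b, q2 c (Bs 0) (τ b) (τ e) := hcs
        _ ≤ (j₀ : ℝ) * ∑ e ∈ Finset.range b, q2 c (Bs 0) (τ b) (τ e) :=
            mul_le_mul_of_nonneg_right hble hsnn
    have hsum_le : ∑ e ∈ Finset.range b, q2 c (Bs 0) (τ b) (τ e) ≤ RowP (τ b) := by
      have hinj : ∀ x ∈ Finset.range b, ∀ y ∈ Finset.range b, τ x = τ y → x = y := by
        intro x hx y hy hxy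
        exact hτinj x (lt_trans (Finset.mem_range.1 hx) hb') y
          (lt_trans (Finset.mem_range.1 hy) hb') hxy
      have himg : ∑ e ∈ Finset.range b, q2 c (Bs 0) (τ b) (τ e) =
          ∑ s' ∈ (Finset.range b).image τ, q2 c (Bs 0) (τ b) s' :=
        (Finset.sum_image hinj).symm
      have hsub : (Finset.range b).image τ ⊆
          (Finset.range j₀).filter (fun s' => τ b ≠ s') := by
        intro s' hs'
        obtain ⟨e, he, rfl⟩ := Finset.mem_image.1 hs'
        have he' : e < b := Finset.mem_range.1 he
        refine Finset.mem_filter.2 ⟨Finset.mem_range.2 (hτlt e (lt_trans he' hb')), ?_⟩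
        intro h
        have := hτinj b hb' e (lt_trans he' hb') h
        omega
      have hmono : ∑ s' ∈ (Finset.range b).image τ, q2 c (Bs 0) (τ b) s' ≤
          ∑ s' ∈ (Finset.range j₀).filter (fun s' => τ b ≠ s'), q2 c (Bs 0) (τ b) s' :=
        Finset.sum_le_sum_of_subset_of_nonneg hsub fun s' _ _ => q2_nonneg
      have hfil : ∑ s' ∈ (Finset.range j₀).filter (fun s' => τ b ≠ s'),
          q2 c (Bs 0) (τ b) s' = RowP (τ b) := Finset.sum_filter _ _
      rw [himg]
      rw [hfil] at hmono
      exact hmono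
    have hsq : (μ ^ j₀ * q) ^ 2 ≤ (lam + S) ^ 2 := by
      apply pow_le_pow_left₀ (by positivity) h1
    have hexp : (μ ^ j₀ * q) ^ 2 = μ ^ (2 * j₀) * q2 c (Bs 0) (τ b) j₀ := by
      rw [mul_pow, ← pow_mul, hq2, mul_comm j₀ 2]
    have hj0 : (0 : ℝ) ≤ (j₀ : ℝ) := Nat.cast_nonneg _
    nlinarith [sq_nonneg (lam - S), mul_le_mul_of_nonneg_left hsum_le hj0]
  -- sum over pivots, reindex by the permutation
  have hbijQ : ∑ b ∈ Finset.range j₀, q2 c (Bs 0) (τ b) j₀ =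
      ∑ r ∈ Finset.range j₀, q2 c (Bs 0) r j₀ := by
    apply Finset.sum_bij (i := fun b _ => τ b)
    · intro b hb
      exact Finset.mem_range.2 (hτlt b (Finset.mem_range.1 hb))
    · intro b hb b' hb' h
      exact hτinj b (Finset.mem_range.1 hb) b' (Finset.mem_range.1 hb') h
    · intro r hr
      obtain ⟨b, hb, rfl⟩ := hτsurj r (Finset.mem_range.1 hr)
      exact ⟨b, Finset.mem_range.2 hb, rfl⟩
    · intro b hb
      rfl
  have hbijP : ∑ b ∈ Finset.range j₀, RowP (τ b) = ∑ r ∈ Finset.range j₀, RowP r := by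
    apply Finset.sum_bij (i := fun b _ => τ b)
    · intro b hb
      exact Finset.mem_range.2 (hτlt b (Finset.mem_range.1 hb))
    · intro b hb b' hb' h
      exact hτinj b (Finset.mem_range.1 hb) b' (Finset.mem_range.1 hb') h
    · intro r hr
      obtain ⟨b, hb, rfl⟩ := hτsurj r (Finset.mem_range.1 hr)
      exact ⟨b, Finset.mem_range.2 hb, rfl⟩
    · intro b hb
      rfl
  have hP : ∑ r ∈ Finset.range j₀, RowP r = CE c (Bs 0) (Finset.range j₀) := rfl
  have hE0 : CE c (Bs 0) (Finset.range (j₀ + 1)) =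
      CE c (Bs 0) (Finset.range j₀) + 2 * ∑ r ∈ Finset.range j₀, q2 c (Bs 0) r j₀ :=
    CE_range_succ hsym j₀
  have hΛ : ∑ b ∈ Finset.range j₀, (q2 c (Bs b) (τ b) j₀ + q2 c (Bs b) j₀ (τ b)) =
      2 * ∑ b ∈ Finset.range j₀, q2 c (Bs b) (τ b) j₀ := by
    rw [Finset.mul_sum]
    refine Finset.sum_congr rfl fun b hb => ?_
    have hbsym : (Bs b).IsSymm := phase_symm j₀ τ Bs hstep hsym b
      (le_of_lt (Finset.mem_range.1 hb))
    rw [q2_symm (c := c) hbsym j₀ (τ b)]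
    ring
  have hsumper := Finset.sum_le_sum perb
  rw [← Finset.mul_sum] at hsumper
  have hsplit : ∑ b ∈ Finset.range j₀,
      (2 * q2 c (Bs b) (τ b) j₀ + 2 * j₀ * RowP (τ b)) =
      2 * (∑ b ∈ Finset.range j₀, q2 c (Bs b) (τ b) j₀) +
      2 * j₀ * (∑ b ∈ Finset.range j₀, RowP (τ b)) := by
    rw [Finset.sum_add_distrib, Finset.mul_sum, Finset.mul_sum]
  rw [hsplit, hbijQ, hbijP, hP] at hsumper
  rw [hE0, hΛ]
  have hgoal : μ ^ (2 * j₀) * (CE c (Bs 0) (Finset.range j₀) +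
      2 * ∑ r ∈ Finset.range j₀, q2 c (Bs 0) r j₀ - CE c (Bs 0) (Finset.range j₀)) =
      2 * (μ ^ (2 * j₀) * ∑ r ∈ Finset.range j₀, q2 c (Bs 0) r j₀) := by ring
  rw [hgoal]
  linarith

end BJP

namespace BJP

open Finset

variable {n : ℕ} {c : ℕ → ℕ} {μ : ℝ}

/-- convert a chain along a mapped column list into an indexed family. -/
lemma chain_map_to_fun (len col : ℕ) (σ : ℕ → ℕ)
    {B B' : Matrix (Fin n) (Fin n) ℝ}
    (h : MChain n c μ ((List.range len).map (fun a => (σ a, col))) B B') :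
    ∃ Bs : ℕ → Matrix (Fin n) (Fin n) ℝ, Bs 0 = B ∧ Bs len = B' ∧
      ∀ b, b < len → MstepG n c μ (σ b) col (Bs b) (Bs (b + 1)) := by
  induction len generalizing B' with
  | zero =>
    have hBB : B' = B := h
    exact ⟨fun _ => B, rfl, hBB.symm, fun b hb => absurd hb (by omega)⟩
  | succ len ih =>
    rw [List.range_succ, List.map_append] at h
    obtain ⟨Bm, h1, h2⟩ := mchain_append h
    obtain ⟨Bf, hstep, heq⟩ := h2
    have heq' : B' = Bf := heq
    obtain ⟨Bs, h0, hlen, hsteps⟩ := ih h1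
    refine ⟨fun k => if k = len + 1 then B' else Bs k, by simp [h0], by simp, ?_⟩
    intro b hb
    by_cases hbl : b < len
    · have e1 : b ≠ len + 1 := by omega
      have e2 : b + 1 ≠ len + 1 := by omega
      show MstepG n c μ (σ b) col (if b = len + 1 then B' else Bs b)
        (if b + 1 = len + 1 then B' else Bs (b + 1))
      rw [if_neg e1, if_neg e2]
      exact hsteps b hbl
    · have hbe : b = len := by omega
      subst hbe
      have e1 : b ≠ b + 1 := by omega
      show MstepG n c μ (σ b) col (if b = b + 1 then B' else Bs b)
        (if b + 1 = b + 1 then B' else Bs (b + 1))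
      rw [if_neg e1, if_pos rfl, hlen, heq']
      exact hstep

/-- the uniform lower bound for `γ_{ij}` over a partition of `n`. -/
def gmin (n : ℕ) : ℝ :=
  3 / Real.sqrt (((4 : ℝ) ^ n + 6 * (n : ℝ) - 1) * ((n : ℝ) + 1))

/-- the uniform `σ_min` lower bound `μ = ρ · gmin n`. -/
def muC (n : ℕ) (ρ : ℝ) : ℝ := ρ * gmin n

/-- convert a `Sweep2` run into a chain of generalized steps. -/
lemma sweep_to_chain {m : ℕ} {ρ : ℝ} (hρ0 : 0 ≤ ρ)
    {L : List (ℕ × ℕ)} {A A' : Matrix (Fin n) (Fin n) ℝ}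
    (hL : ∀ p ∈ L, p.1 ≠ p.2 ∧ muC n ρ ≤ ρ * gammaUBC c p.1 p.2)
    (hs : Sweep2 c c ρ L A A') :
    MChain n c (muC n ρ) L A A' := by
  obtain ⟨Bf, h0, hT, hstep⟩ := hs
  rw [← h0, ← hT]
  -- generalize over the list
  clear h0 hT
  induction L generalizing Bf with
  | nil => rfl
  | cons p l ih =>
    have hp := hL p (List.mem_cons_self)
    have h0 := hstep 0 (by simp)
    obtain ⟨U, hUBC, hBe, hPD⟩ := h0
    obtain ⟨hE, hO, hEq, hσ⟩ := hUBC
    refine ⟨Bf 1, ⟨hp.1, U, ?_, hO, ?_, ?_, ?_⟩, ?_⟩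
    · simpa using hE
    · exact le_trans (by simpa using hp.2) (by simpa using hσ)
    · simpa using hBe
    · simpa using hPD
    · have := ih (fun q hq => hL q (List.mem_cons_of_mem p hq)) (fun k => Bf (k + 1)) ?_
      · simpa using this
      · intro k hk
        have hk' : k + 1 < (p :: l).length := by simpa using Nat.succ_lt_succ hk
        have := hstep (k + 1) hk'
        simpa using this

end BJP

namespace BJP

open Finset

variable {n m : ℕ} {c : ℕ → ℕ} {ρ : ℝ}

lemma four_pow_le {a b : ℕ} (h : a ≤ b) : (4 : ℝ) ^ a ≤ (4 : ℝ) ^ b :=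
  pow_le_pow_right₀ (by norm_num) h

lemma gmin_pos (hn : 2 ≤ n) : 0 < gmin n := by
  unfold gmin
  apply div_pos (by norm_num)
  apply Real.sqrt_pos.2
  have h1 : (16 : ℝ) ≤ (4 : ℝ) ^ n := by
    calc (16 : ℝ) = 4 ^ 2 := by norm_num
    _ ≤ 4 ^ n := four_pow_le hn
  have h2 : (2 : ℝ) ≤ (n : ℝ) := by exact_mod_cast hn
  nlinarith

lemma gmin_le_one (hn : 2 ≤ n) : gmin n ≤ 1 := by
  unfold gmin
  have h1 : (16 : ℝ) ≤ (4 : ℝ) ^ n := by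
    calc (16 : ℝ) = 4 ^ 2 := by norm_num
    _ ≤ 4 ^ n := four_pow_le hn
  have h2 : (2 : ℝ) ≤ (n : ℝ) := by exact_mod_cast hn
  have h9 : (9 : ℝ) ≤ ((4 : ℝ) ^ n + 6 * (n : ℝ) - 1) * ((n : ℝ) + 1) := by nlinarith
  have h3 : (3 : ℝ) ≤ Real.sqrt (((4 : ℝ) ^ n + 6 * (n : ℝ) - 1) * ((n : ℝ) + 1)) := by
    have h := Real.sqrt_le_sqrt h9
    rwa [show Real.sqrt 9 = 3 by
      rw [show (9 : ℝ) = 3 ^ 2 by norm_num, Real.sqrt_sq (by norm_num)]] at h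
  rw [div_le_one (by linarith)]
  linarith

lemma gmin_le_gamma (hm : 2 ≤ m) (hc1 : ∀ i, i < m → 1 ≤ c i)
    (hcs : ∑ i ∈ Finset.range m, c i = n) {i j : ℕ} (hi : i < m) (hj : j < m) :
    gmin n ≤ gammaUBC c i j := by
  have hci : c i ≤ n := by
    rw [← hcs]
    exact Finset.single_le_sum (fun k _ => Nat.zero_le (c k)) (Finset.mem_range.2 hi)
  have hcj : c j ≤ n := by
    rw [← hcs]
    exact Finset.single_le_sum (fun k _ => Nat.zero_le (c k)) (Finset.mem_range.2 hj)
  have hcj1 : (1 : ℝ) ≤ (c j : ℝ) := by exact_mod_cast hc1 j hj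
  have hcjn : (c j : ℝ) ≤ (n : ℝ) := by exact_mod_cast hcj
  have h4i : (1 : ℝ) ≤ (4 : ℝ) ^ (c i) := one_le_pow₀ (by norm_num)
  have h4in : (4 : ℝ) ^ (c i) ≤ (4 : ℝ) ^ n := four_pow_le hci
  set Dij : ℝ := ((4 : ℝ) ^ (c i) + 6 * (c j : ℝ) - 1) * ((c j : ℝ) + 1) with hDij
  set Dn : ℝ := ((4 : ℝ) ^ n + 6 * (n : ℝ) - 1) * ((n : ℝ) + 1) with hDn
  have hDijpos : 0 < Dij := by
    rw [hDij]
    apply mul_pos <;> nlinarith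
  have hDmono : Dij ≤ Dn := by
    rw [hDij, hDn]
    apply mul_le_mul <;> nlinarith
  have hsq : Real.sqrt Dij ≤ Real.sqrt Dn := Real.sqrt_le_sqrt hDmono
  have hsqpos : 0 < Real.sqrt Dij := Real.sqrt_pos.2 hDijpos
  unfold gmin gammaUBC
  exact div_le_div_of_nonneg_left (by norm_num) hsqpos hsq

lemma muC_pos (hn : 2 ≤ n) (hρ : 0 < ρ) : 0 < muC n ρ := mul_pos hρ (gmin_pos hn)

lemma muC_le_one (hn : 2 ≤ n) (hρ0 : 0 ≤ ρ) (hρ1 : ρ ≤ 1) : muC n ρ ≤ 1 := by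
  unfold muC
  calc ρ * gmin n ≤ 1 * 1 :=
    mul_le_mul hρ1 (gmin_le_one hn) (le_of_lt (gmin_pos hn)) (by norm_num)
  _ = 1 := by norm_num

/-! #### off-norm decomposition into blocks -/

def UT (n m : ℕ) (c : ℕ → ℕ) (M : Matrix (Fin n) (Fin n) ℝ) : ℝ :=
  ∑ r ∈ Finset.range m, ∑ s ∈ Finset.range m, if r < s then q2 c M r s else 0

lemma sum_univ_blocks (hcs : ∑ i ∈ Finset.range m, c i = n) (g : Fin n → ℝ) :
    ∑ p : Fin n, g p = ∑ r ∈ Finset.range m, ∑ p ∈ blkF n c r, g p := by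
  have huniv : (Finset.univ : Finset (Fin n)) =
      (Finset.range m).biUnion (fun r => blkF n c r) := by
    ext t
    simp only [Finset.mem_univ, true_iff, Finset.mem_biUnion]
    obtain ⟨r, hr, hb⟩ := blk_cover hcs t
    exact ⟨r, Finset.mem_range.2 hr, mem_blkF.2 hb⟩
  rw [huniv, Finset.sum_biUnion]
  intro r _ s _ hrs
  exact pivF_disj hrs

lemma offSq_decomp (hcs : ∑ i ∈ Finset.range m, c i = n)
    (M : Matrix (Fin n) (Fin n) ℝ) :
    offSq M = UT n m c M + ∑ r ∈ Finset.range m,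
      (∑ p ∈ blkF n c r, ∑ q ∈ blkF n c r,
        if (p : ℕ) < (q : ℕ) then M p q ^ 2 else 0) := by
  unfold offSq
  rw [sum_univ_blocks hcs]
  have hstep1 : ∀ r ∈ Finset.range m, ∀ p ∈ blkF n c r,
      ∑ q : Fin n, (if (p : ℕ) < (q : ℕ) then M p q ^ 2 else 0) =
      ∑ s ∈ Finset.range m, ∑ q ∈ blkF n c s,
        (if (p : ℕ) < (q : ℕ) then M p q ^ 2 else 0) := by
    intro r _ p _
    exact sum_univ_blocks hcs _
  rw [Finset.sum_congr rfl fun r hr => Finset.sum_congr rfl (hstep1 r hr)]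
  have hswap : ∀ r ∈ Finset.range m,
      ∑ p ∈ blkF n c r, ∑ s ∈ Finset.range m, ∑ q ∈ blkF n c s,
        (if (p : ℕ) < (q : ℕ) then M p q ^ 2 else 0) =
      ∑ s ∈ Finset.range m, ∑ p ∈ blkF n c r, ∑ q ∈ blkF n c s,
        (if (p : ℕ) < (q : ℕ) then M p q ^ 2 else 0) := by
    intro r _
    exact Finset.sum_comm
  rw [Finset.sum_congr rfl hswap]
  have hinner : ∀ r ∈ Finset.range m, ∀ s ∈ Finset.range m,
      ∑ p ∈ blkF n c r, ∑ q ∈ blkF n c s,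
        (if (p : ℕ) < (q : ℕ) then M p q ^ 2 else 0) =
      (if r < s then q2 c M r s else 0) +
      (if r = s then ∑ p ∈ blkF n c r, ∑ q ∈ blkF n c r,
        (if (p : ℕ) < (q : ℕ) then M p q ^ 2 else 0) else 0) := by
    intro r _ s _
    rcases lt_trichotomy r s with h | h | h
    · rw [if_pos h, if_neg (by omega)]
      rw [add_zero]
      unfold q2
      refine Finset.sum_congr rfl fun p hp => Finset.sum_congr rfl fun q hq => ?_
      rw [if_pos (blk_lt h hp hq)]
    · subst h
      rw [if_neg (by omega), if_pos rfl, zero_add]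
    · rw [if_neg (by omega), if_neg (by omega), add_zero]
      refine Finset.sum_eq_zero fun p hp => Finset.sum_eq_zero fun q hq => ?_
      rw [if_neg (by have := blk_lt h hq hp; omega)]
  rw [Finset.sum_congr rfl fun r hr => Finset.sum_congr rfl (hinner r hr)]
  rw [Finset.sum_congr rfl fun r _ => Finset.sum_add_distrib, Finset.sum_add_distrib]
  unfold UT
  congr 1
  refine Finset.sum_congr rfl fun r hr => ?_
  rw [Finset.sum_ite_eq (Finset.range m) r]
  simp [hr]

lemma CE_eq_two_UT {M : Matrix (Fin n) (Fin n) ℝ} (hsym : M.IsSymm) :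
    CE c M (Finset.range m) = 2 * UT n m c M := by
  unfold CE UT
  have hpt : ∀ r ∈ Finset.range m, ∀ s ∈ Finset.range m,
      (if r ≠ s then q2 c M r s else 0) =
      (if r < s then q2 c M r s else 0) + (if s < r then q2 c M r s else 0) := by
    intro r _ s _
    rcases lt_trichotomy r s with h | h | h
    · rw [if_pos (by omega), if_pos h, if_neg (by omega), add_zero]
    · subst h
      simp
    · rw [if_pos (by omega), if_neg (by omega), if_pos h, zero_add]
  rw [Finset.sum_congr rfl fun r hr => Finset.sum_congr rfl (hpt r hr)]
  rw [Finset.sum_congr rfl fun r _ => Finset.sum_add_distrib, Finset.sum_add_distrib]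
  have hsecond : ∑ r ∈ Finset.range m, ∑ s ∈ Finset.range m,
      (if s < r then q2 c M r s else 0) =
      ∑ r ∈ Finset.range m, ∑ s ∈ Finset.range m, (if r < s then q2 c M r s else 0) := by
    rw [Finset.sum_comm]
    refine Finset.sum_congr rfl fun s _ => Finset.sum_congr rfl fun r _ => ?_
    by_cases h : s < r
    · rw [if_pos h, if_pos h, q2_symm (c := c) hsym r s]
    · rw [if_neg h, if_neg h]
  rw [hsecond]
  ring

lemma blkdiag_inner_zero {M : Matrix (Fin n) (Fin n) ℝ} {r : ℕ}
    (hd : BlkDiag n c r M) :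
    ∑ p ∈ blkF n c r, ∑ q ∈ blkF n c r,
      (if (p : ℕ) < (q : ℕ) then M p q ^ 2 else 0) = 0 := by
  refine Finset.sum_eq_zero fun p hp => Finset.sum_eq_zero fun q hq => ?_
  by_cases h : (p : ℕ) < (q : ℕ)
  · rw [if_pos h, hd p hp q hq (by intro he; subst he; omega)]
    norm_num
  · rw [if_neg h]

end BJP

namespace BJP

open Finset

variable {n m : ℕ} {c : ℕ → ℕ} {μ : ℝ}

lemma CE_mono {M : Matrix (Fin n) (Fin n) ℝ} {𝒥 𝒥' : Finset ℕ} (h : 𝒥 ⊆ 𝒥') :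
    CE c M 𝒥 ≤ CE c M 𝒥' := by
  unfold CE
  have hnn : ∀ r s : ℕ, 0 ≤ (if r ≠ s then q2 c M r s else 0) := by
    intro r s
    split
    · exact q2_nonneg
    · exact le_refl _
  calc ∑ r ∈ 𝒥, ∑ s ∈ 𝒥, (if r ≠ s then q2 c M r s else 0)
      ≤ ∑ r ∈ 𝒥, ∑ s ∈ 𝒥', (if r ≠ s then q2 c M r s else 0) :=
        Finset.sum_le_sum fun r _ =>
          Finset.sum_le_sum_of_subset_of_nonneg h fun s _ _ => hnn r s
    _ ≤ ∑ r ∈ 𝒥', ∑ s ∈ 𝒥', (if r ≠ s then q2 c M r s else 0) :=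
        Finset.sum_le_sum_of_subset_of_nonneg h fun r _ _ =>
          Finset.sum_nonneg fun s _ => hnn r s

set_option maxHeartbeats 1000000 in
lemma column_step (hμ0 : 0 < μ) (hμ1 : μ ≤ 1)
    (t : ℕ) (htm : t + 1 < m) (htn : t + 1 ≤ n)
    (τ : ℕ → ℕ) (hbij : Set.BijOn τ (Set.Iio (t + 1)) (Set.Iio (t + 1)))
    (ex : List (ℕ × ℕ)) (hex : ∀ p ∈ ex, p.1 < p.2 ∧ p.2 ≤ t + 1)
    {B B' : Matrix (Fin n) (Fin n) ℝ}
    (hch : MChain n c μ ((((List.range (t + 1)).map fun a => (τ a, t + 1))) ++ ex) B B')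
    (hsym : B.IsSymm) :
    B'.IsSymm ∧
    CE c B' (Finset.range m) ≤ CE c B (Finset.range m) ∧
    CE c B' (Finset.range (t + 2)) ≤
      ((4 * n + 3) * (1 / μ) ^ (2 * n)) *
        (CE c B (Finset.range (t + 1)) +
          (CE c B (Finset.range m) - CE c B' (Finset.range m))) := by
  have hτlt : ∀ b, b < t + 1 → τ b < t + 1 := fun b hb => hbij.mapsTo hb
  have hτinj : ∀ b, b < t + 1 → ∀ b', b' < t + 1 → τ b = τ b' → b = b' :=
    fun b hb b' hb' h => hbij.injOn hb hb' h
  have hτsurj : ∀ r, r < t + 1 → ∃ b, b < t + 1 ∧ τ b = r := by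
    intro r hr
    obtain ⟨b, hb, hbr⟩ := hbij.surjOn hr
    exact ⟨b, hb, hbr⟩
  obtain ⟨Bm, hreq, hexch⟩ := mchain_append hch
  obtain ⟨Bs, hBs0, hBsl, hsteps⟩ := chain_map_to_fun (t + 1) (t + 1) τ hreq
  have hsym0 : (Bs 0).IsSymm := hBs0 ▸ hsym
  set Λ : ℝ := ∑ b ∈ Finset.range (t + 1),
    (q2 c (Bs b) (τ b) (t + 1) + q2 c (Bs b) (t + 1) (τ b)) with hΛdef
  have hΛnn : 0 ≤ Λ := Finset.sum_nonneg fun b _ => add_nonneg q2_nonneg q2_nonneg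
  have hph := phase_main hμ0 hμ1 (t + 1) τ hτlt hτinj hτsurj Bs hsteps hsym0
  have hpl2 := phase_loss (j₀ := t + 1) (τ := τ) (Bs := Bs) hsteps
    (𝒥 := Finset.range (t + 2))
    (fun b hb => Finset.mem_range.2 (by have := hτlt b hb; omega))
    (Finset.mem_range.2 (by omega)) (t + 1) le_rfl
  have hplm := phase_loss (j₀ := t + 1) (τ := τ) (Bs := Bs) hsteps
    (𝒥 := Finset.range m)
    (fun b hb => Finset.mem_range.2 (by have := hτlt b hb; omega))
    (Finset.mem_range.2 htm) (t + 1) le_rfl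
  have hsymBm : Bm.IsSymm := mchain_symm hreq hsym
  have hsymB' : B'.IsSymm := mchain_symm hexch hsymBm
  have hex2 : ∀ p ∈ ex, p.1 ∈ Finset.range (t + 2) ∧ p.2 ∈ Finset.range (t + 2) := by
    intro p hp
    have := hex p hp
    exact ⟨Finset.mem_range.2 (by omega), Finset.mem_range.2 (by omega)⟩
  have hexm : ∀ p ∈ ex, p.1 ∈ Finset.range m ∧ p.2 ∈ Finset.range m := by
    intro p hp
    have := hex p hp
    exact ⟨Finset.mem_range.2 (by omega), Finset.mem_range.2 (by omega)⟩
  have hce2 : CE c B' (Finset.range (t + 2)) ≤ CE c Bm (Finset.range (t + 2)) :=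
    mchain_CE_le hexch hex2
  have hcem : CE c B' (Finset.range m) ≤ CE c Bm (Finset.range m) :=
    mchain_CE_le hexch hexm
  -- identities at the end of the required phase
  rw [hBsl, hBs0] at hpl2 hplm
  -- hpl2 : CE c Bm (range (t+2)) = CE c B (range (t+2)) - Λ
  -- hplm : CE c Bm (range m) = CE c B (range m) - Λ
  rw [hBs0] at hph
  set P : ℝ := CE c B (Finset.range (t + 1)) with hPdef
  set E0 : ℝ := CE c B (Finset.range (t + 2)) with hE0def
  have hPnn : 0 ≤ P := CE_nonneg
  have hE0P : P ≤ E0 := CE_mono (by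
    intro x hx
    exact Finset.mem_range.2 (by have := Finset.mem_range.1 hx; omega))
  -- κ and ι arithmetic
  set κ : ℝ := (1 / μ) ^ (2 * n) with hκdef
  set ι : ℝ := μ ^ (2 * (t + 1)) with hιdef
  have hμinv : 1 ≤ 1 / μ := by
    rw [le_div_iff₀ hμ0]
    linarith
  have hκ1 : 1 ≤ κ := one_le_pow₀ hμinv
  have hι0 : 0 < ι := pow_pos hμ0 _
  have hικ : 1 ≤ ι * κ := by
    have h1 : (1 / μ) ^ (2 * (t + 1)) ≤ κ := pow_le_pow_right₀ hμinv (by omega)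
    have h2 : ι * (1 / μ) ^ (2 * (t + 1)) = 1 := by
      rw [hιdef, ← mul_pow, mul_one_div, div_self (ne_of_gt hμ0), one_pow]
    calc (1 : ℝ) = ι * (1 / μ) ^ (2 * (t + 1)) := h2.symm
      _ ≤ ι * κ := mul_le_mul_of_nonneg_left h1 (le_of_lt hι0)
  -- main phase bound:  ι * (E0 - P) ≤ 2Λ + 4(t+1)P
  rw [← hΛdef] at hph
  have hcast0 : ((t + 1 : ℕ) : ℝ) = (t : ℝ) + 1 := by push_cast; ring
  have hphX : ι * (E0 - P) ≤ 2 * Λ + 4 * ((t : ℝ) + 1) * P := by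
    rw [← hcast0]
    exact hph
  have hE0PκX : E0 - P ≤ κ * (2 * Λ + 4 * ((t : ℝ) + 1) * P) := by
    have ht1 : (0 : ℝ) ≤ (t : ℝ) + 1 := by positivity
    have h3 : E0 - P ≤ ι * κ * (E0 - P) := by
      nlinarith [mul_nonneg (sub_nonneg.2 hικ) (sub_nonneg.2 hE0P)]
    calc E0 - P ≤ ι * κ * (E0 - P) := h3
      _ = κ * (ι * (E0 - P)) := by ring
      _ ≤ κ * (2 * Λ + 4 * ((t : ℝ) + 1) * P) :=
          mul_le_mul_of_nonneg_left hphX (by positivity)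
  -- assemble
  refine ⟨hsymB', ?_, ?_⟩
  · rw [hplm] at hcem
    linarith
  · have hKcoef1 : (1 : ℝ) + 4 * (t + 1) * κ ≤ (4 * n + 3) * κ := by
      have htn' : ((t : ℝ) + 1) ≤ (n : ℝ) := by exact_mod_cast htn
      nlinarith
    have hK2 : 2 * κ ≤ (4 * n + 3) * κ := by
      have : (0 : ℝ) ≤ (n : ℝ) := Nat.cast_nonneg _
      nlinarith
    have hΛle : Λ ≤ CE c B (Finset.range m) - CE c B' (Finset.range m) := by
      rw [hplm] at hcem
      linarith
    have hmain : CE c B' (Finset.range (t + 2)) ≤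
        (1 + 4 * ((t : ℝ) + 1) * κ) * P + 2 * κ * Λ := by
      have he : CE c Bm (Finset.range (t + 2)) = E0 - Λ := hpl2
      have hE1 : CE c B' (Finset.range (t + 2)) ≤ E0 - Λ := by
        rw [← he]; exact hce2
      nlinarith [hE0PκX, hΛnn, hκ1]
    have hKnn : (0 : ℝ) ≤ (4 * n + 3) * κ := by positivity
    calc CE c B' (Finset.range (t + 2)) ≤ (1 + 4 * ((t : ℝ) + 1) * κ) * P + 2 * κ * Λ := hmain
      _ ≤ ((4 * n + 3) * κ) * P + ((4 * n + 3) * κ) * Λ := by nlinarith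
      _ = ((4 * n + 3) * κ) * (P + Λ) := by ring
      _ ≤ ((4 * n + 3) * κ) *
          (P + (CE c B (Finset.range m) - CE c B' (Finset.range m))) := by nlinarith
      _ = ((4 * n + 3) * (1 / μ) ^ (2 * n)) *
          (CE c B (Finset.range (t + 1)) +
            (CE c B (Finset.range m) - CE c B' (Finset.range m))) := by rw [hκdef, hPdef]

end BJP

namespace BJP

open Finset

variable {n : ℕ} {c : ℕ → ℕ} {μ : ℝ}

lemma CE_range_one {M : Matrix (Fin n) (Fin n) ℝ} : CE c M (Finset.range 1) = 0 := by
  unfold CE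
  simp

set_option maxHeartbeats 1000000 in
lemma columns_rec (hμ0 : 0 < μ) (hμ1 : μ ≤ 1) {m : ℕ} (hm : 1 ≤ m) (hmn : m ≤ n)
    (τ : ℕ → ℕ → ℕ) (hbij : ∀ j, Set.BijOn (τ j) (Set.Iio j) (Set.Iio j))
    (E : ℕ → List (ℕ × ℕ)) (hE : ∀ j, ∀ p ∈ E j, p.1 < p.2 ∧ p.2 ≤ j)
    (W0 : ℝ) :
    ∀ k t, t + k = m - 1 →
      ∀ B B' : Matrix (Fin n) (Fin n) ℝ, B.IsSymm →
      CE c B (Finset.range m) ≤ W0 →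
      CE c B (Finset.range (t + 1)) ≤
        (((4 * n + 3) * (1 / μ) ^ (2 * n) + 1) ^ t - 1) *
          (W0 - CE c B (Finset.range m)) →
      MChain n c μ ((List.range' (t + 1) k).flatMap
        (fun j => ((List.range j).map fun a => (τ j a, j)) ++ (if j = 1 then [] else E j)))
        B B' →
      CE c B' (Finset.range m) ≤
        (((4 * n + 3) * (1 / μ) ^ (2 * n) + 1) ^ (m - 1) - 1) *
          (W0 - CE c B' (Finset.range m)) := by
  set K : ℝ := (4 * n + 3) * (1 / μ) ^ (2 * n) with hKdef
  have hK0 : 0 ≤ K := by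
    rw [hKdef]
    positivity
  intro k
  induction k with
  | zero =>
    intro t ht B B' hsym hW hP hch
    have hte : t = m - 1 := by omega
    have hBB : B' = B := hch
    subst hBB hte
    have h1 : m - 1 + 1 = m := by omega
    rw [h1] at hP
    exact hP
  | succ k ih =>
    intro t ht B B' hsym hW hP hch
    rw [List.range'_succ, List.flatMap_cons] at hch
    obtain ⟨Bm, hc1, hc2⟩ := mchain_append hch
    have htm : t + 1 < m := by omega
    have htn : t + 1 ≤ n := by omega
    have hexok : ∀ p ∈ (if t + 1 = 1 then ([] : List (ℕ × ℕ)) else E (t + 1)),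
        p.1 < p.2 ∧ p.2 ≤ t + 1 := by
      intro p hp
      by_cases h1 : t + 1 = 1
      · rw [if_pos h1] at hp
        exact absurd hp List.not_mem_nil
      · rw [if_neg h1] at hp
        exact hE (t + 1) p hp
    obtain ⟨hsymBm, hcem, hmain⟩ := column_step (m := m) hμ0 hμ1 t htm htn
      (τ (t + 1)) (hbij (t + 1)) _ hexok hc1 hsym
    -- establish the invariant at t + 1
    have hWm : CE c Bm (Finset.range m) ≤ W0 := le_trans hcem hW
    have hδt : (1 : ℝ) ≤ (K + 1) ^ t := one_le_pow₀ (by linarith)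
    have hδt1 : (1 : ℝ) ≤ (K + 1) ^ (t + 1) := one_le_pow₀ (by linarith)
    have hD : 0 ≤ W0 - CE c B (Finset.range m) := by linarith
    have hD' : W0 - CE c B (Finset.range m) ≤ W0 - CE c Bm (Finset.range m) := by
      linarith
    have hPnew : CE c Bm (Finset.range (t + 1 + 1)) ≤
        ((K + 1) ^ (t + 1) - 1) * (W0 - CE c Bm (Finset.range m)) := by
      have h2 : CE c Bm (Finset.range (t + 2)) ≤
          K * (CE c B (Finset.range (t + 1)) +
            (CE c B (Finset.range m) - CE c Bm (Finset.range m))) := hmain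
      have h3 : CE c B (Finset.range (t + 1)) ≤
          ((K + 1) ^ t - 1) * (W0 - CE c B (Finset.range m)) := hP
      have h4 : K * (((K + 1) ^ t - 1) * (W0 - CE c B (Finset.range m)) +
          (CE c B (Finset.range m) - CE c Bm (Finset.range m))) ≤
          ((K + 1) ^ (t + 1) - 1) * (W0 - CE c Bm (Finset.range m)) := by
        have e1 : K * (K + 1) ^ t ≤ (K + 1) ^ (t + 1) - 1 := by
          have : (K + 1) ^ (t + 1) = (K + 1) ^ t * (K + 1) := pow_succ _ _
          nlinarith
        set D := W0 - CE c B (Finset.range m) with hDdef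
        set D' := W0 - CE c Bm (Finset.range m) with hD'def
        have hDD' : D ≤ D' := hD'
        have h5 : CE c B (Finset.range m) - CE c Bm (Finset.range m) = D' - D := by
          rw [hDdef, hD'def]; ring
        rw [h5]
        have hD'0 : 0 ≤ D' := le_trans hD hDD'
        calc K * (((K + 1) ^ t - 1) * D + (D' - D))
            = K * ((K + 1) ^ t - 1) * D + K * (D' - D) := by ring
          _ ≤ K * ((K + 1) ^ t - 1) * D' + K * (D' - D) := by
              have : 0 ≤ K * ((K + 1) ^ t - 1) := by nlinarith
              nlinarith
          _ ≤ K * ((K + 1) ^ t - 1) * D' + K * D' := by nlinarith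
          _ = K * (K + 1) ^ t * D' := by ring
          _ ≤ ((K + 1) ^ (t + 1) - 1) * D' := by nlinarith
      calc CE c Bm (Finset.range (t + 1 + 1)) ≤
          K * (CE c B (Finset.range (t + 1)) +
            (CE c B (Finset.range m) - CE c Bm (Finset.range m))) := h2
        _ ≤ K * (((K + 1) ^ t - 1) * (W0 - CE c B (Finset.range m)) +
            (CE c B (Finset.range m) - CE c Bm (Finset.range m))) := by nlinarith
        _ ≤ ((K + 1) ^ (t + 1) - 1) * (W0 - CE c Bm (Finset.range m)) := h4
    have := ih (t + 1) (by omega) Bm B' hsymBm hWm hPnew ?_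
    · exact this
    · exact hc2

end BJP

/-- Theorem 4.1: convergence bound for one sweep of the quasi-cyclic
block Jacobi method under any pivot sequence from `B̄_c^(m)`, with `UBC_π(ρ)`
transformations. -/
theorem statement8 :
    ∃ ηt : ℕ → ℝ → ℝ,
      ∀ (n m : ℕ) (c : ℕ → ℕ) (ρ : ℝ),
        IsPartition n m c → 0 < ρ → ρ ≤ 1 →
        ∃ η : ℝ, 0 ≤ η ∧ η < ηt n ρ ∧ ηt n ρ < 1 ∧
          ∀ L : List (ℕ × ℕ), memBcQ m L →
            ∀ A A' : Matrix (Fin n) (Fin n) ℝ, A.IsSymm →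
              Sweep c ρ L A A' → offSq A' ≤ η * offSq A := by
  classical
  refine ⟨fun n ρ =>
    1 - (1 / ((4 * n + 3) * (1 / BJP.muC n ρ) ^ (2 * n) + 1)) ^ n / 2, ?_⟩
  intro n m c ρ hpart hρ0 hρ1
  obtain ⟨hm, hc1, hcs⟩ := hpart
  have hmn : m ≤ n := by
    have h1 : m = ∑ i ∈ Finset.range m, 1 := by simp
    have h2 : ∑ i ∈ Finset.range m, 1 ≤ ∑ i ∈ Finset.range m, c i :=
      Finset.sum_le_sum fun i hi => hc1 i (Finset.mem_range.1 hi)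
    omega
  have hn2 : 2 ≤ n := le_trans hm hmn
  have hμ0 : 0 < BJP.muC n ρ := BJP.muC_pos hn2 hρ0
  have hμ1 : BJP.muC n ρ ≤ 1 := BJP.muC_le_one hn2 (le_of_lt hρ0) hρ1
  set μ : ℝ := BJP.muC n ρ with hμdef
  set K : ℝ := (4 * n + 3) * (1 / μ) ^ (2 * n) with hKdef
  have hK0 : 0 ≤ K := by rw [hKdef]; positivity
  set x : ℝ := (1 / (K + 1)) ^ n with hxdef
  have hx0 : 0 < x := by rw [hxdef]; positivity
  have hx1 : x ≤ 1 := by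
    rw [hxdef]
    apply pow_le_one₀ (by positivity)
    rw [div_le_one (by linarith)]
    linarith
  refine ⟨1 - x, by linarith, by linarith, by linarith, ?_⟩
  intro L hL A A' hA hsweep
  obtain ⟨τ, E, hbijτ, hEp, hLeq⟩ := hL
  -- pivot pairs of `L`
  have hpiv : ∀ p ∈ L, p.1 < p.2 ∧ p.2 < m := by
    intro p hp
    rw [hLeq] at hp
    obtain ⟨j, hj, hpj⟩ := List.mem_flatMap.1 hp
    have hj' : 1 ≤ j ∧ j < 1 + (m - 1) := List.mem_range'_1.1 hj
    have hjm : j < m := by omega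
    rcases List.mem_append.1 hpj with hmap | hext
    · obtain ⟨a, ha, rfl⟩ := List.mem_map.1 hmap
      have haj : a < j := List.mem_range.1 ha
      have : τ j a < j := (hbijτ j).mapsTo haj
      exact ⟨this, hjm⟩
    · by_cases h1 : j = 1
      · rw [if_pos h1] at hext
        exact absurd hext List.not_mem_nil
      · rw [if_neg h1] at hext
        have := hEp j p hext
        exact ⟨this.1, by omega⟩
  -- the chain of generalized steps
  have hLc : ∀ p ∈ L, p.1 ≠ p.2 ∧ BJP.muC n ρ ≤ ρ * gammaUBC c p.1 p.2 := by
    intro p hp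
    obtain ⟨h1, h2⟩ := hpiv p hp
    refine ⟨by omega, ?_⟩
    have hγ := BJP.gmin_le_gamma hm hc1 hcs (lt_trans h1 h2) h2
    unfold BJP.muC
    exact mul_le_mul_of_nonneg_left hγ (le_of_lt hρ0)
  have hchain : BJP.MChain n c μ L A A' := BJP.sweep_to_chain (m := m)
    (le_of_lt hρ0) hLc hsweep
  -- global cross-energy monotonicity
  have hpivm : ∀ p ∈ L, p.1 ∈ Finset.range m ∧ p.2 ∈ Finset.range m := by
    intro p hp
    obtain ⟨h1, h2⟩ := hpiv p hp
    exact ⟨Finset.mem_range.2 (by omega), Finset.mem_range.2 h2⟩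
  have hmono : BJP.CE c A' (Finset.range m) ≤ BJP.CE c A (Finset.range m) :=
    BJP.mchain_CE_le hchain hpivm
  have hsymA' : A'.IsSymm := BJP.mchain_symm hchain hA
  -- the column recursion
  have hchain2 : BJP.MChain n c μ ((List.range' (0 + 1) (m - 1)).flatMap
      (fun j => ((List.range j).map fun a => (τ j a, j)) ++
        (if j = 1 then [] else E j))) A A' := by
    rw [← hLeq] at *
    exact hchain
  have hbase : BJP.CE c A (Finset.range (0 + 1)) ≤
      (((4 * n + 3) * (1 / μ) ^ (2 * n) + 1) ^ 0 - 1) *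
        ((BJP.CE c A (Finset.range m)) - BJP.CE c A (Finset.range m)) := by
    rw [BJP.CE_range_one]
    norm_num
  have hrec := BJP.columns_rec hμ0 hμ1 (by omega : 1 ≤ m) hmn τ hbijτ E hEp
    (BJP.CE c A (Finset.range m)) (m - 1) 0 (by omega) A A' hA (le_refl _)
    hbase hchain2
  -- pass to the `n`-th power bound
  set W0 : ℝ := BJP.CE c A (Finset.range m) with hW0def
  set CA' : ℝ := BJP.CE c A' (Finset.range m) with hCA'def
  have hCA'0 : 0 ≤ CA' := BJP.CE_nonneg
  have hWm : CA' ≤ W0 := hmono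
  have hDmDn : (K + 1) ^ (m - 1) ≤ (K + 1) ^ n :=
    pow_le_pow_right₀ (by linarith) (by omega)
  have hstep : CA' ≤ ((K + 1) ^ n - 1) * (W0 - CA') := by
    have h1 : CA' ≤ ((K + 1) ^ (m - 1) - 1) * (W0 - CA') := hrec
    have h2 : 0 ≤ W0 - CA' := by linarith
    nlinarith
  have hpow : (0 : ℝ) < (K + 1) ^ n := by positivity
  have hxpow : (K + 1) ^ n * x = 1 := by
    rw [hxdef, ← mul_pow]
    rw [mul_one_div, div_self (by linarith : K + 1 ≠ 0), one_pow]
  have hη : CA' ≤ (1 - x) * W0 := by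
    have h3 : (K + 1) ^ n * CA' ≤ (K + 1) ^ n * ((1 - x) * W0) := by
      have h4 : (K + 1) ^ n * ((1 - x) * W0) = ((K + 1) ^ n - 1) * W0 := by
        have : (K + 1) ^ n * (1 - x) = (K + 1) ^ n - 1 := by
          rw [mul_sub, hxpow, mul_one]
        rw [← mul_assoc, this]
      rw [h4]
      nlinarith [hstep]
    exact le_of_mul_le_mul_left h3 hpow
  -- all diagonal blocks of `A'` are diagonal
  have hocc : ∀ r, r < m → ∃ p ∈ L, p.1 = r ∨ p.2 = r := by
    intro r hr
    by_cases hr0 : r = 0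
    · subst hr0
      refine ⟨(τ 1 0, 1), ?_, Or.inl ?_⟩
      · rw [hLeq]
        refine List.mem_flatMap.2 ⟨1, List.mem_range'_1.2 ⟨le_refl 1, by omega⟩, ?_⟩
        refine List.mem_append.2 (Or.inl ?_)
        exact List.mem_map.2 ⟨0, List.mem_range.2 (by omega), rfl⟩
      · have : τ 1 0 < 1 := (hbijτ 1).mapsTo (by omega : (0 : ℕ) < 1)
        omega
    · refine ⟨(τ r 0, r), ?_, Or.inr rfl⟩
      rw [hLeq]
      refine List.mem_flatMap.2 ⟨r, List.mem_range'_1.2 ⟨by omega, by omega⟩, ?_⟩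
      refine List.mem_append.2 (Or.inl ?_)
      exact List.mem_map.2 ⟨0, List.mem_range.2 (by omega), rfl⟩
  have hdiag : ∀ r ∈ Finset.range m, BJP.BlkDiag n c r A' := by
    intro r hr
    exact BJP.mchain_blkdiag_make hchain (hocc r (Finset.mem_range.1 hr))
  -- off-norm identities
  have hoffA' : offSq A' = BJP.UT n m c A' := by
    rw [BJP.offSq_decomp hcs A']
    have h0 : ∑ r ∈ Finset.range m,
        (∑ p ∈ BJP.blkF n c r, ∑ q ∈ BJP.blkF n c r,
          if (p : ℕ) < (q : ℕ) then A' p q ^ 2 else 0) = 0 :=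
      Finset.sum_eq_zero fun r hr => BJP.blkdiag_inner_zero (hdiag r hr)
    rw [h0, add_zero]
  have hCEA' : CA' = 2 * BJP.UT n m c A' := BJP.CE_eq_two_UT hsymA'
  have hoffA : BJP.UT n m c A ≤ offSq A := by
    rw [BJP.offSq_decomp hcs A]
    have h0 : 0 ≤ ∑ r ∈ Finset.range m,
        (∑ p ∈ BJP.blkF n c r, ∑ q ∈ BJP.blkF n c r,
          if (p : ℕ) < (q : ℕ) then A p q ^ 2 else 0) := by
      refine Finset.sum_nonneg fun r _ => Finset.sum_nonneg fun p _ =>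
        Finset.sum_nonneg fun q _ => ?_
      split
      · exact sq_nonneg _
      · exact le_refl _
    linarith
  have hCEA : W0 = 2 * BJP.UT n m c A := BJP.CE_eq_two_UT hA
  -- conclude
  rw [hoffA']
  have hfinal : 2 * BJP.UT n m c A' ≤ (1 - x) * (2 * BJP.UT n m c A) := by
    rw [← hCEA', ← hCEA]
    exact hη
  nlinarith [hfinal, hoffA, hx1]


end

end BlockJacobi
end

section
/- For each integer n ≥ 2 there exists a constant η_n, depending only on n, with 0 ≤ η_n < 1, such that for every ordering O ∈ C_c^(n), every real symmetric n×n matrix A, and the matrix A' obtained from A by applying one sweep of the cyclic Jacobi method defined by the strategy I_O with all rotation angles in the interval [−π/4, π/4], one has S(A')² ≤ η_n·S(A)². -/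
namespace BlockJacobi

open scoped BigOperators

attribute [local instance] Classical.propDecidable

noncomputable section

namespace S9

open Matrix

/-- start index of phase `j` (column `j` pivots occupy `[startN j, startN j + j)`). -/
def startN : ℕ → ℕ
  | 0 => 0
  | j+1 => startN j + j

lemma startN_succ (j : ℕ) : startN (j+1) = startN j + j := rfl

lemma startN_mono : Monotone startN :=
  monotone_nat_of_le_succ fun j => by simp [startN_succ]

lemma startN_step_lt {n j a : ℕ} (h2 : j < n) (ha : a < j) :
    startN j + a < startN n := by
  have h : startN (j+1) ≤ startN n := startN_mono (by omega : j+1 ≤ n)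
  have h' := startN_succ j
  omega

lemma startN_decomp : ∀ (n k : ℕ), k < startN n →
    ∃ j a, 1 ≤ j ∧ j < n ∧ a < j ∧ k = startN j + a := by
  intro n
  induction n with
  | zero => intro k hk; simp [startN] at hk
  | succ m ih =>
    intro k hk
    rcases lt_or_ge k (startN m) with h | h
    · obtain ⟨j, a, h1, h2, h3, h4⟩ := ih k h
      exact ⟨j, a, h1, by omega, h3, h4⟩
    · have hs := startN_succ m
      have hm : 1 ≤ m := by
        rcases Nat.eq_zero_or_pos m with rfl | hpos
        · exact absurd hk (by simp [startN])
        · exact hpos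
      exact ⟨m, k - startN m, hm, by omega, by omega, by omega⟩

/-- recursive bound constants -/
noncomputable def gC : ℕ → ℝ
  | 0 => 0
  | j+1 => 2^(j+1) * ((Real.sqrt 2)^(j+1) * (1 + ((j:ℝ)+1) * gC j) + gC j)

lemma gC_succ (j : ℕ) : gC (j+1)
    = 2^(j+1) * ((Real.sqrt 2)^(j+1) * (1 + ((j:ℝ)+1) * gC j) + gC j) := rfl

lemma one_le_sqrt2 : (1:ℝ) ≤ Real.sqrt 2 := by
  rw [show (1:ℝ) = Real.sqrt 1 by simp]
  exact Real.sqrt_le_sqrt (by norm_num)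

lemma gC_nonneg : ∀ j, 0 ≤ gC j
  | 0 => le_refl 0
  | j+1 => by
      have h := gC_nonneg j
      have h2 : (0:ℝ) ≤ ((j:ℝ)+1) * gC j := by positivity
      rw [gC_succ]
      have h1 : (0:ℝ) ≤ (Real.sqrt 2)^(j+1) := by positivity
      apply mul_nonneg (by positivity)
      exact add_nonneg (mul_nonneg h1 (by linarith)) h

lemma gC_mono : Monotone gC := by
  apply monotone_nat_of_le_succ
  intro j
  have h := gC_nonneg j
  have h2 : (0:ℝ) ≤ ((j:ℝ)+1) * gC j := by positivity
  have h1 : (1:ℝ) ≤ (Real.sqrt 2)^(j+1) := one_le_pow₀ one_le_sqrt2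
  have h3 : (1:ℝ) ≤ (2:ℝ)^(j+1) := one_le_pow₀ one_le_two
  rw [gC_succ]
  have hX : (1:ℝ) ≤ (Real.sqrt 2)^(j+1) * (1 + ((j:ℝ)+1) * gC j) := by
    have := mul_le_mul h1 (by linarith : (1:ℝ) ≤ 1 + ((j:ℝ)+1) * gC j)
      (by norm_num) (by positivity)
    linarith
  have h4 : (1:ℝ) * ((Real.sqrt 2)^(j+1) * (1 + ((j:ℝ)+1) * gC j) + gC j)
      ≤ 2^(j+1) * ((Real.sqrt 2)^(j+1) * (1 + ((j:ℝ)+1) * gC j) + gC j) :=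
    mul_le_mul_of_nonneg_right h3 (by linarith)
  linarith

noncomputable def KC (n : ℕ) : ℝ :=
  2^(startN n) * ((Real.sqrt 2)^n * (1 + (n:ℝ) * gC n))

lemma KC_nonneg (n : ℕ) : 0 ≤ KC n := by
  have h := gC_nonneg n
  have h2 : (0:ℝ) ≤ (n:ℝ) * gC n := by positivity
  unfold KC
  positivity

lemma one_le_KC (n : ℕ) : 1 ≤ KC n := by
  have h := gC_nonneg n
  have h2 : (0:ℝ) ≤ (n:ℝ) * gC n := by positivity
  have h1 : (1:ℝ) ≤ (Real.sqrt 2)^n := one_le_pow₀ one_le_sqrt2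
  have h3 : (1:ℝ) ≤ (2:ℝ)^(startN n) := one_le_pow₀ one_le_two
  unfold KC
  have hX : (1:ℝ) ≤ (Real.sqrt 2)^n * (1 + (n:ℝ) * gC n) := by
    have := mul_le_mul h1 (by linarith : (1:ℝ) ≤ 1 + (n:ℝ) * gC n)
      (by norm_num) (by positivity)
    linarith
  have h4 : (1:ℝ) * ((Real.sqrt 2)^n * (1 + (n:ℝ) * gC n))
      ≤ 2^(startN n) * ((Real.sqrt 2)^n * (1 + (n:ℝ) * gC n)) :=
    mul_le_mul_of_nonneg_right h3 (by linarith)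
  linarith


section Rot

variable {n : ℕ}

lemma rotM_col_other (i j : Fin n) (φ : ℝ) (b v : Fin n) (hv1 : v ≠ i) (hv2 : v ≠ j) :
    rotM n i j φ b v = if b = v then 1 else 0 := by
  have h1 : ¬((v:ℕ) = (i:ℕ)) := fun h => hv1 (Fin.ext h)
  have h2 : ¬((v:ℕ) = (j:ℕ)) := fun h => hv2 (Fin.ext h)
  simp only [rotM, h1, h2, and_false, if_false]

lemma rotM_col_i (i j : Fin n) (hij : i ≠ j) (φ : ℝ) (b : Fin n) :
    rotM n i j φ b i = if b = i then Real.cos φ else if b = j then Real.sin φ else 0 := by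
  simp only [rotM, Fin.val_eq_val]
  rcases eq_or_ne b i with rfl | hbi
  · simp
  · rcases eq_or_ne b j with rfl | hbj
    · simp [hbi, hij.symm, hij]
    · simp [hbi, hbj]

lemma rotM_col_j (i j : Fin n) (hij : i ≠ j) (φ : ℝ) (b : Fin n) :
    rotM n i j φ b j = if b = i then -Real.sin φ else if b = j then Real.cos φ else 0 := by
  simp only [rotM, Fin.val_eq_val]
  rcases eq_or_ne b i with rfl | hbi
  · simp [hij, hij.symm]
  · rcases eq_or_ne b j with rfl | hbj
    · simp [hbi, hij.symm]
    · simp [hbi, hbj]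

lemma sum_ite_two (i j : Fin n) (hij : i ≠ j) (f g : Fin n → ℝ) :
    (∑ b : Fin n, if b = i then f b else if b = j then g b else 0) = f i + g j := by
  have h : ∀ b : Fin n, (if b = i then f b else if b = j then g b else 0)
      = (if b = i then f b else 0) + (if b = j then g b else 0) := by
    intro b
    rcases eq_or_ne b i with rfl | h1
    · simp [hij]
    · simp [h1]
  simp only [h, Finset.sum_add_distrib, Finset.sum_ite_eq', Finset.mem_univ, if_true]

lemma mul_rot_other (i j : Fin n) (φ : ℝ) (M : Matrix (Fin n) (Fin n) ℝ) (a v : Fin n)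
    (hv1 : v ≠ i) (hv2 : v ≠ j) : (M * rotM n i j φ) a v = M a v := by
  rw [Matrix.mul_apply]
  rw [Finset.sum_congr rfl fun b _ => by rw [rotM_col_other i j φ b v hv1 hv2]]
  simp

lemma mul_rot_i (i j : Fin n) (hij : i ≠ j) (φ : ℝ) (M : Matrix (Fin n) (Fin n) ℝ)
    (a : Fin n) :
    (M * rotM n i j φ) a i = Real.cos φ * M a i + Real.sin φ * M a j := by
  rw [Matrix.mul_apply]
  have h : ∀ b : Fin n, M a b * rotM n i j φ b i
      = (if b = i then Real.cos φ * M a b else if b = j then Real.sin φ * M a b else 0) := by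
    intro b
    rw [rotM_col_i i j hij φ b]
    split_ifs <;> ring
  rw [Finset.sum_congr rfl fun b _ => h b,
    sum_ite_two i j hij (fun b => Real.cos φ * M a b) (fun b => Real.sin φ * M a b)]

lemma mul_rot_j (i j : Fin n) (hij : i ≠ j) (φ : ℝ) (M : Matrix (Fin n) (Fin n) ℝ)
    (a : Fin n) :
    (M * rotM n i j φ) a j = -Real.sin φ * M a i + Real.cos φ * M a j := by
  rw [Matrix.mul_apply]
  have h : ∀ b : Fin n, M a b * rotM n i j φ b j
      = (if b = i then -Real.sin φ * M a b else if b = j then Real.cos φ * M a b else 0) := by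
    intro b
    rw [rotM_col_j i j hij φ b]
    split_ifs <;> ring
  rw [Finset.sum_congr rfl fun b _ => h b,
    sum_ite_two i j hij (fun b => -Real.sin φ * M a b) (fun b => Real.cos φ * M a b)]

lemma rot_mul_other (i j : Fin n) (φ : ℝ) (M : Matrix (Fin n) (Fin n) ℝ) (u v : Fin n)
    (hu1 : u ≠ i) (hu2 : u ≠ j) : ((rotM n i j φ)ᵀ * M) u v = M u v := by
  rw [Matrix.mul_apply]
  rw [Finset.sum_congr rfl fun b _ => by
    rw [Matrix.transpose_apply, rotM_col_other i j φ b u hu1 hu2]]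
  simp

lemma rot_mul_i (i j : Fin n) (hij : i ≠ j) (φ : ℝ) (M : Matrix (Fin n) (Fin n) ℝ)
    (v : Fin n) :
    ((rotM n i j φ)ᵀ * M) i v = Real.cos φ * M i v + Real.sin φ * M j v := by
  rw [Matrix.mul_apply]
  have h : ∀ b : Fin n, (rotM n i j φ)ᵀ i b * M b v
      = (if b = i then Real.cos φ * M b v else if b = j then Real.sin φ * M b v else 0) := by
    intro b
    rw [Matrix.transpose_apply, rotM_col_i i j hij φ b]
    split_ifs <;> ring
  rw [Finset.sum_congr rfl fun b _ => h b,
    sum_ite_two i j hij (fun b => Real.cos φ * M b v) (fun b => Real.sin φ * M b v)]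

lemma rot_mul_j (i j : Fin n) (hij : i ≠ j) (φ : ℝ) (M : Matrix (Fin n) (Fin n) ℝ)
    (v : Fin n) :
    ((rotM n i j φ)ᵀ * M) j v = -Real.sin φ * M i v + Real.cos φ * M j v := by
  rw [Matrix.mul_apply]
  have h : ∀ b : Fin n, (rotM n i j φ)ᵀ j b * M b v
      = (if b = i then -Real.sin φ * M b v else if b = j then Real.cos φ * M b v else 0) := by
    intro b
    rw [Matrix.transpose_apply, rotM_col_j i j hij φ b]
    split_ifs <;> ring
  rw [Finset.sum_congr rfl fun b _ => h b,
    sum_ite_two i j hij (fun b => -Real.sin φ * M b v) (fun b => Real.cos φ * M b v)]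

end Rot

section Conj

variable {n : ℕ}

lemma conj_other (i j : Fin n) (φ : ℝ) (B : Matrix (Fin n) (Fin n) ℝ) (u v : Fin n)
    (hu1 : u ≠ i) (hu2 : u ≠ j) (hv1 : v ≠ i) (hv2 : v ≠ j) :
    ((rotM n i j φ)ᵀ * B * rotM n i j φ) u v = B u v := by
  rw [mul_rot_other i j φ _ u v hv1 hv2, rot_mul_other i j φ B u v hu1 hu2]

lemma conj_row_i (i j : Fin n) (hij : i ≠ j) (φ : ℝ) (B : Matrix (Fin n) (Fin n) ℝ)
    (v : Fin n) (hv1 : v ≠ i) (hv2 : v ≠ j) :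
    ((rotM n i j φ)ᵀ * B * rotM n i j φ) i v
      = Real.cos φ * B i v + Real.sin φ * B j v := by
  rw [mul_rot_other i j φ _ i v hv1 hv2, rot_mul_i i j hij φ B v]

lemma conj_row_j (i j : Fin n) (hij : i ≠ j) (φ : ℝ) (B : Matrix (Fin n) (Fin n) ℝ)
    (v : Fin n) (hv1 : v ≠ i) (hv2 : v ≠ j) :
    ((rotM n i j φ)ᵀ * B * rotM n i j φ) j v
      = -Real.sin φ * B i v + Real.cos φ * B j v := by
  rw [mul_rot_other i j φ _ j v hv1 hv2, rot_mul_j i j hij φ B v]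

lemma conj_ii (i j : Fin n) (hij : i ≠ j) (φ : ℝ) (B : Matrix (Fin n) (Fin n) ℝ) :
    ((rotM n i j φ)ᵀ * B * rotM n i j φ) i i
      = Real.cos φ * (Real.cos φ * B i i + Real.sin φ * B j i)
        + Real.sin φ * (Real.cos φ * B i j + Real.sin φ * B j j) := by
  rw [mul_rot_i i j hij φ _ i, rot_mul_i i j hij φ B i, rot_mul_i i j hij φ B j]

lemma conj_jj (i j : Fin n) (hij : i ≠ j) (φ : ℝ) (B : Matrix (Fin n) (Fin n) ℝ) :
    ((rotM n i j φ)ᵀ * B * rotM n i j φ) j j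
      = -Real.sin φ * (-Real.sin φ * B i i + Real.cos φ * B i j)
        + Real.cos φ * (-Real.sin φ * B j i + Real.cos φ * B j j) := by
  rw [mul_rot_j i j hij φ _ j, rot_mul_j i j hij φ B i, rot_mul_j i j hij φ B j]
  ring

lemma conj_ij (i j : Fin n) (hij : i ≠ j) (φ : ℝ) (B : Matrix (Fin n) (Fin n) ℝ) :
    ((rotM n i j φ)ᵀ * B * rotM n i j φ) i j
      = -Real.sin φ * (Real.cos φ * B i i + Real.sin φ * B j i)
        + Real.cos φ * (Real.cos φ * B i j + Real.sin φ * B j j) := by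
  rw [mul_rot_j i j hij φ _ i, rot_mul_i i j hij φ B i, rot_mul_i i j hij φ B j]

lemma rot_orth (i j : Fin n) (hij : i ≠ j) (φ : ℝ) :
    (rotM n i j φ)ᵀ * rotM n i j φ = 1 := by
  ext u v
  by_cases hui : u = i
  · rw [hui, rot_mul_i i j hij φ _ v]
    by_cases hvi : v = i
    · rw [hvi, rotM_col_i i j hij φ i, rotM_col_i i j hij φ j,
        if_pos rfl, if_neg hij.symm, if_pos rfl, Matrix.one_apply_eq]
      linear_combination Real.sin_sq_add_cos_sq φ
    · by_cases hvj : v = j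
      · rw [hvj, rotM_col_j i j hij φ i, rotM_col_j i j hij φ j,
          if_pos rfl, if_neg hij.symm, if_pos rfl, Matrix.one_apply_ne hij]
        ring
      · rw [rotM_col_other i j φ i v hvi hvj, rotM_col_other i j φ j v hvi hvj,
          if_neg (fun h => hvi h.symm), if_neg (fun h => hvj h.symm),
          Matrix.one_apply_ne (fun h => hvi h.symm)]
        ring
  · by_cases huj : u = j
    · rw [huj, rot_mul_j i j hij φ _ v]
      by_cases hvi : v = i
      · rw [hvi, rotM_col_i i j hij φ i, rotM_col_i i j hij φ j,
          if_pos rfl, if_neg hij.symm, if_pos rfl, Matrix.one_apply_ne hij.symm]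
        ring
      · by_cases hvj : v = j
        · rw [hvj, rotM_col_j i j hij φ i, rotM_col_j i j hij φ j,
            if_pos rfl, if_neg hij.symm, if_pos rfl, Matrix.one_apply_eq]
          linear_combination Real.sin_sq_add_cos_sq φ
        · rw [rotM_col_other i j φ i v hvi hvj, rotM_col_other i j φ j v hvi hvj,
            if_neg (fun h => hvi h.symm), if_neg (fun h => hvj h.symm),
            Matrix.one_apply_ne (fun h => hvj h.symm)]
          ring
    · rw [rot_mul_other i j φ _ u v hui huj]
      by_cases hvi : v = i
      · rw [hvi, rotM_col_i i j hij φ u, if_neg hui, if_neg huj, Matrix.one_apply_ne hui]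
      · by_cases hvj : v = j
        · rw [hvj, rotM_col_j i j hij φ u, if_neg hui, if_neg huj, Matrix.one_apply_ne huj]
        · rw [rotM_col_other i j φ u v hvi hvj]
          simp [Matrix.one_apply]

lemma rot_orth' (i j : Fin n) (hij : i ≠ j) (φ : ℝ) :
    rotM n i j φ * (rotM n i j φ)ᵀ = 1 :=
  mul_eq_one_comm.mp (rot_orth i j hij φ)

lemma sum_sq_eq_trace (M : Matrix (Fin n) (Fin n) ℝ) :
    ∑ u : Fin n, ∑ v : Fin n, (M u v)^2 = Matrix.trace (Mᵀ * M) := by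
  simp only [Matrix.trace, Matrix.diag, Matrix.mul_apply, Matrix.transpose_apply, pow_two]
  rw [Finset.sum_comm]

lemma frob_conj (B R : Matrix (Fin n) (Fin n) ℝ) (h2 : R * Rᵀ = 1) :
    ∑ u : Fin n, ∑ v : Fin n, ((Rᵀ * B * R) u v)^2
      = ∑ u : Fin n, ∑ v : Fin n, (B u v)^2 := by
  rw [sum_sq_eq_trace, sum_sq_eq_trace]
  have hmid : ∀ X : Matrix (Fin n) (Fin n) ℝ, R * (Rᵀ * X) = X := fun X => by
    rw [← Matrix.mul_assoc, h2, Matrix.one_mul]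
  simp only [Matrix.transpose_mul, Matrix.transpose_transpose, Matrix.mul_assoc, hmid]
  rw [Matrix.trace_mul_comm]
  simp only [Matrix.mul_assoc, h2, Matrix.mul_one]

end Conj

section OffSq

variable {n : ℕ}

lemma offSq_nonneg (A : Matrix (Fin n) (Fin n) ℝ) : 0 ≤ offSq A := by
  unfold offSq
  apply Finset.sum_nonneg
  intro u _
  apply Finset.sum_nonneg
  intro v _
  split_ifs
  · positivity
  · exact le_refl 0

lemma sum_sq_split (A : Matrix (Fin n) (Fin n) ℝ) (hsym : ∀ u v, A u v = A v u) :
    ∑ u : Fin n, ∑ v : Fin n, (A u v)^2 = 2 * offSq A + ∑ u : Fin n, (A u u)^2 := by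
  have point : ∀ u v : Fin n, (A u v)^2 =
      (if (u:ℕ) < (v:ℕ) then (A u v)^2 else 0)
      + (if (v:ℕ) < (u:ℕ) then (A u v)^2 else 0)
      + (if u = v then (A u v)^2 else 0) := by
    intro u v
    rcases Nat.lt_trichotomy (u:ℕ) (v:ℕ) with h | h | h
    · have h2 : ¬((v:ℕ) < (u:ℕ)) := by omega
      have h3 : u ≠ v := fun e => by rw [e] at h; omega
      simp [h, h2, h3]
    · have h3 : u = v := Fin.ext h
      simp [h3]
    · have h2 : ¬((u:ℕ) < (v:ℕ)) := by omega
      have h3 : u ≠ v := fun e => by rw [e] at h; omega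
      simp [h, h2, h3]
  rw [Finset.sum_congr rfl fun u _ => Finset.sum_congr rfl fun v _ => point u v]
  simp only [Finset.sum_add_distrib]
  have S2 : (∑ u : Fin n, ∑ v : Fin n, if (v:ℕ) < (u:ℕ) then (A u v)^2 else 0)
      = offSq A := by
    rw [Finset.sum_comm]
    unfold offSq
    exact Finset.sum_congr rfl fun s _ => Finset.sum_congr rfl fun t _ => by
      rw [hsym t s]
  have S3 : (∑ u : Fin n, ∑ v : Fin n, if u = v then (A u v)^2 else 0)
      = ∑ u : Fin n, (A u u)^2 := by
    apply Finset.sum_congr rfl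
    intro u _
    simp [Finset.sum_ite_eq]
  rw [S2, S3]
  have S1 : (∑ u : Fin n, ∑ v : Fin n, if (u:ℕ) < (v:ℕ) then (A u v)^2 else 0)
      = offSq A := rfl
  rw [S1]
  ring

lemma diag_step (B : Matrix (Fin n) (Fin n) ℝ) (hsym : ∀ u v, B u v = B v u)
    (i j : Fin n) (hij : i ≠ j) (φ : ℝ) :
    (∑ u : Fin n, (((rotM n i j φ)ᵀ * B * rotM n i j φ) u u)^2)
        + 2 * (((rotM n i j φ)ᵀ * B * rotM n i j φ) i j)^2
      = (∑ u : Fin n, (B u u)^2) + 2 * (B i j)^2 := by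
  have split : ∀ f : Fin n → ℝ, ∑ u : Fin n, f u
      = (∑ u ∈ (Finset.univ.erase i).erase j, f u) + f j + f i := by
    intro f
    rw [Finset.sum_erase_add (Finset.univ.erase i) f
      (Finset.mem_erase.mpr ⟨hij.symm, Finset.mem_univ j⟩)]
    rw [Finset.sum_erase_add Finset.univ f (Finset.mem_univ i)]
  rw [split (fun u => (((rotM n i j φ)ᵀ * B * rotM n i j φ) u u)^2),
    split (fun u => (B u u)^2)]
  have herase : ∀ u ∈ (Finset.univ.erase i).erase j,
      (((rotM n i j φ)ᵀ * B * rotM n i j φ) u u)^2 = (B u u)^2 := by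
    intro u hu
    have h1 := Finset.mem_erase.mp hu
    have h2 := Finset.mem_erase.mp h1.2
    rw [conj_other i j φ B u u h2.1 h1.1 h2.1 h1.1]
  rw [Finset.sum_congr rfl herase]
  rw [conj_ii i j hij φ B, conj_jj i j hij φ B, conj_ij i j hij φ B, hsym j i]
  linear_combination ((Real.cos φ^2 + Real.sin φ^2 + 1)
    * ((B i i)^2 + (B j j)^2 + 2*(B i j)^2)) * Real.sin_sq_add_cos_sq φ

lemma offSq_step (B : Matrix (Fin n) (Fin n) ℝ) (hsymM : Bᵀ = B)
    (i j : Fin n) (hij : i ≠ j) (φ : ℝ)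
    (hz : ((rotM n i j φ)ᵀ * B * rotM n i j φ) i j = 0) :
    offSq ((rotM n i j φ)ᵀ * B * rotM n i j φ) = offSq B - (B i j)^2 := by
  have hsym : ∀ u v, B u v = B v u := fun u v => by
    conv_lhs => rw [← hsymM]
    rfl
  have hCsymM : ((rotM n i j φ)ᵀ * B * rotM n i j φ)ᵀ
      = (rotM n i j φ)ᵀ * B * rotM n i j φ := by
    simp only [Matrix.transpose_mul, Matrix.transpose_transpose, hsymM, Matrix.mul_assoc]
  have hCsym : ∀ u v, ((rotM n i j φ)ᵀ * B * rotM n i j φ) u v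
      = ((rotM n i j φ)ᵀ * B * rotM n i j φ) v u := fun u v => by
    conv_lhs => rw [← hCsymM]
    rfl
  have h1 := sum_sq_split _ hCsym
  have h2 := sum_sq_split B hsym
  have h3 := frob_conj B (rotM n i j φ) (rot_orth' i j hij φ)
  have h4 := diag_step B hsym i j hij φ
  rw [hz] at h4
  norm_num at h4
  linarith

end OffSq

/-- All data of one cyclic sweep, in abstract entrywise form. -/
structure Ctx (n : ℕ) where
  B : ℕ → Matrix (Fin n) (Fin n) ℝ
  piv : ℕ → Fin n × Fin n
  tau : ℕ → ℕ → ℕ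
  eps : ℝ
  hn : 2 ≤ n
  heps : 0 ≤ eps
  hsym : ∀ k, k ≤ startN n → ∀ u v, B k u v = B k v u
  htau : ∀ j, Set.BijOn (tau j) (Set.Iio j) (Set.Iio j)
  hpiv1 : ∀ j a, 1 ≤ j → j < n → a < j → ((piv (startN j + a)).1 : ℕ) = tau j a
  hpiv2 : ∀ j a, 1 ≤ j → j < n → a < j → ((piv (startN j + a)).2 : ℕ) = j
  hb : ∀ k, k < startN n → |B k (piv k).1 (piv k).2| ≤ eps
  hzero : ∀ k, k < startN n → B (k+1) (piv k).1 (piv k).2 = 0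
  hrot : ∀ k, k < startN n → ∃ c s : ℝ,
    Real.sqrt 2 / 2 ≤ c ∧ c^2 + s^2 = 1 ∧
    (∀ u v : Fin n, u ≠ (piv k).1 → u ≠ (piv k).2 → v ≠ (piv k).1 → v ≠ (piv k).2 →
      B (k+1) u v = B k u v) ∧
    (∀ v : Fin n, v ≠ (piv k).1 → v ≠ (piv k).2 →
      B (k+1) (piv k).1 v = c * B k (piv k).1 v + s * B k (piv k).2 v ∧
      B (k+1) (piv k).2 v = -s * B k (piv k).1 v + c * B k (piv k).2 v)

variable {n : ℕ}

/-- entries among unfinished rows are untouched within a phase -/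
lemma Ctx.claim1 (C : Ctx n) (j : ℕ) (h1 : 1 ≤ j) (h2 : j < n) :
    ∀ (a : ℕ), a ≤ j → ∀ (r p : Fin n), (r:ℕ) < j → (p:ℕ) < j →
      (∀ a' < a, C.tau j a' ≠ (r:ℕ) ∧ C.tau j a' ≠ (p:ℕ)) →
      C.B (startN j + a) r p = C.B (startN j) r p := by
  intro a
  induction a with
  | zero => intro _ r p _ _ _; rfl
  | succ a ih =>
    intro ha r p hr hp havoid
    have ha' : a < j := by omega
    have hk : startN j + a < startN n := startN_step_lt h2 ha'
    obtain ⟨c, s, hc, hcs, hunt, hrow⟩ := C.hrot (startN j + a) hk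
    have hp1 := C.hpiv1 j a h1 h2 ha'
    have hp2 := C.hpiv2 j a h1 h2 ha'
    have hr1 : r ≠ (C.piv (startN j + a)).1 := by
      intro e
      apply (havoid a (by omega)).1
      rw [← hp1, ← e]
    have hr2 : r ≠ (C.piv (startN j + a)).2 := by
      intro e
      rw [e, hp2] at hr
      exact lt_irrefl j hr
    have hq1 : p ≠ (C.piv (startN j + a)).1 := by
      intro e
      apply (havoid a (by omega)).2
      rw [← hp1, ← e]
    have hq2 : p ≠ (C.piv (startN j + a)).2 := by
      intro e
      rw [e, hp2] at hp
      exact lt_irrefl j hp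
    have step : C.B (startN j + a + 1) r p = C.B (startN j + a) r p :=
      hunt r p hr1 hr2 hq1 hq2
    have hrw : startN j + (a+1) = startN j + a + 1 := by omega
    rw [hrw, step]
    exact ih (by omega) r p hr hp (fun a' h' => havoid a' (by omega))

lemma sin_bound {c s : ℝ} (hcs : c^2 + s^2 = 1) : |s| ≤ 1 := by
  nlinarith [sq_nonneg (|s| - 1), sq_abs s, sq_nonneg c, abs_nonneg s]

lemma cos_bound {c s : ℝ} (hcs : c^2 + s^2 = 1) : |c| ≤ 1 := by
  nlinarith [sq_nonneg (|c| - 1), sq_abs c, sq_nonneg s, abs_nonneg c]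

lemma sqrt2_half_pos : (0:ℝ) < Real.sqrt 2 / 2 := by positivity

lemma sqrt2_half_le_one : Real.sqrt 2 / 2 ≤ 1 := by
  nlinarith [Real.sq_sqrt (by norm_num : (0:ℝ) ≤ 2), Real.sqrt_nonneg 2]

/-- decay of the unprocessed column entries within a phase -/
lemma Ctx.claim2 (C : Ctx n) (j : ℕ) (h1 : 1 ≤ j) (h2 : j < n) (jF : Fin n)
    (hjF : (jF:ℕ) = j) (G : ℝ) (hG : 0 ≤ G)
    (HGb : ∀ r q : Fin n, (r:ℕ) < j → (q:ℕ) < j → r ≠ q → |C.B (startN j) r q| ≤ G)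
    (p : Fin n) (hp : (p:ℕ) < j) :
    ∀ a, a ≤ j → (∀ a' < a, C.tau j a' ≠ (p:ℕ)) →
      (Real.sqrt 2 / 2)^a * |C.B (startN j) p jF| - a * G
        ≤ |C.B (startN j + a) p jF| := by
  intro a
  induction a with
  | zero => intro _ _; simp
  | succ a ih =>
    intro ha havoid
    have ha' : a < j := by omega
    have hk : startN j + a < startN n := startN_step_lt h2 ha'
    obtain ⟨c, s, hc, hcs, hunt, hrow⟩ := C.hrot (startN j + a) hk
    have hp1 := C.hpiv1 j a h1 h2 ha'
    have hp2 := C.hpiv2 j a h1 h2 ha'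
    have htaua : C.tau j a < j := (C.htau j).mapsTo (by exact ha' : a ∈ Set.Iio j)
    have hq1 : p ≠ (C.piv (startN j + a)).1 := by
      intro e
      apply havoid a (by omega)
      rw [← hp1, ← e]
    have hq2 : p ≠ (C.piv (startN j + a)).2 := by
      intro e
      rw [e, hp2] at hp
      exact lt_irrefl j hp
    have hrow' := hrow p hq1 hq2
    have hjeq : (C.piv (startN j + a)).2 = jF := Fin.ext (by rw [hp2, hjF])
    have hpiv1lt : ((C.piv (startN j + a)).1 : ℕ) < j := by rw [hp1]; exact htaua
    have hpiv1nep : (C.piv (startN j + a)).1 ≠ p := by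
      intro e
      apply havoid a (by omega)
      rw [← hp1, e]
    have huntouched : C.B (startN j + a) (C.piv (startN j + a)).1 p
        = C.B (startN j) (C.piv (startN j + a)).1 p := by
      apply C.claim1 j h1 h2 a (le_of_lt ha') _ p hpiv1lt hp
      intro a' h'
      constructor
      · rw [hp1]
        intro e
        have := (C.htau j).injOn (by exact (by omega : a' < j) : a' ∈ Set.Iio j)
          (by exact ha' : a ∈ Set.Iio j) e
        omega
      · exact havoid a' (by omega)
    have hG1 : |C.B (startN j + a) (C.piv (startN j + a)).1 p| ≤ G := by
      rw [huntouched]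
      exact HGb _ p hpiv1lt hp (by
        intro e
        exact hpiv1nep e)
    have hs1 : C.B (startN j + a + 1) p jF = C.B (startN j + a + 1) jF p :=
      C.hsym (startN j + a + 1) (by omega) p jF
    have hs2 : C.B (startN j + a) p jF = C.B (startN j + a) jF p :=
      C.hsym (startN j + a) (le_of_lt hk) p jF
    have hF : C.B (startN j + a + 1) jF p
        = -s * C.B (startN j + a) (C.piv (startN j + a)).1 p
          + c * C.B (startN j + a) jF p := by
      rw [← hjeq]
      exact hrow'.2
    have habs_s : |s| ≤ 1 := sin_bound hcs
    have hcpos : 0 < c := lt_of_lt_of_le sqrt2_half_pos hc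
    have key : Real.sqrt 2 / 2 * |C.B (startN j + a) p jF| - G
        ≤ |C.B (startN j + a + 1) p jF| := by
      rw [hs1, hF]
      have habs := abs_add_le
        (-s * C.B (startN j + a) (C.piv (startN j + a)).1 p
          + c * C.B (startN j + a) jF p)
        (s * C.B (startN j + a) (C.piv (startN j + a)).1 p)
      have e : (-s * C.B (startN j + a) (C.piv (startN j + a)).1 p
          + c * C.B (startN j + a) jF p)
          + s * C.B (startN j + a) (C.piv (startN j + a)).1 p
          = c * C.B (startN j + a) jF p := by ring
      rw [e] at habs
      have t2 : |c * C.B (startN j + a) jF p| = c * |C.B (startN j + a) jF p| := by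
        rw [abs_mul, abs_of_pos hcpos]
      have t3 : |s * C.B (startN j + a) (C.piv (startN j + a)).1 p| ≤ G := by
        rw [abs_mul]
        calc |s| * |C.B (startN j + a) (C.piv (startN j + a)).1 p| ≤ 1 * G :=
              mul_le_mul habs_s hG1 (abs_nonneg _) zero_le_one
          _ = G := one_mul G
      have t4 : Real.sqrt 2 / 2 * |C.B (startN j + a) jF p|
          ≤ c * |C.B (startN j + a) jF p| :=
        mul_le_mul_of_nonneg_right hc (abs_nonneg _)
      rw [hs2]
      linarith
    have hih := ih (by omega) (fun a' h' => havoid a' (by omega))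
    have hq0 : (0:ℝ) ≤ Real.sqrt 2 / 2 := le_of_lt sqrt2_half_pos
    have hmul := mul_le_mul_of_nonneg_left hih hq0
    have hqa : Real.sqrt 2 / 2 * ((a:ℝ) * G) ≤ (a:ℝ) * G := by
      have h5 : Real.sqrt 2 / 2 * ((a:ℝ) * G) ≤ 1 * ((a:ℝ) * G) :=
        mul_le_mul_of_nonneg_right sqrt2_half_le_one (by positivity)
      linarith
    have hrw : startN j + (a+1) = startN j + a + 1 := by omega
    rw [hrw]
    have hpow : (Real.sqrt 2 / 2)^(a+1) = Real.sqrt 2 / 2 * (Real.sqrt 2 / 2)^a :=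
      pow_succ' _ _
    push_cast
    rw [hpow]
    nlinarith [key, hmul, hqa]

/-- bound on column entries at phase start -/
lemma Ctx.colstart (C : Ctx n) (j : ℕ) (h1 : 1 ≤ j) (h2 : j < n) (jF : Fin n)
    (hjF : (jF:ℕ) = j) (G : ℝ) (hG : 0 ≤ G)
    (HGb : ∀ r q : Fin n, (r:ℕ) < j → (q:ℕ) < j → r ≠ q → |C.B (startN j) r q| ≤ G)
    (p : Fin n) (hp : (p:ℕ) < j) :
    |C.B (startN j) p jF| ≤ (Real.sqrt 2)^j * (C.eps + (j:ℝ) * G) := by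
  obtain ⟨a, haIio, hael⟩ := (C.htau j).surjOn (show (p:ℕ) ∈ Set.Iio j from hp)
  have ha : a < j := haIio
  have havoid : ∀ a' < a, C.tau j a' ≠ (p:ℕ) := by
    intro a' h' e
    have h9 : a' < j := lt_trans h' ha
    have := (C.htau j).injOn (Set.mem_Iio.mpr h9)
      (show a ∈ Set.Iio j from haIio) (e.trans hael.symm)
    omega
  have hdec := C.claim2 j h1 h2 jF hjF G hG HGb p hp a (le_of_lt ha) havoid
  have hk : startN j + a < startN n := startN_step_lt h2 ha
  have hp1 := C.hpiv1 j a h1 h2 ha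
  have hp2 := C.hpiv2 j a h1 h2 ha
  have he1 : (C.piv (startN j + a)).1 = p := Fin.ext (by rw [hp1, hael])
  have he2 : (C.piv (startN j + a)).2 = jF := Fin.ext (by rw [hp2, hjF])
  have hbnd := C.hb (startN j + a) hk
  rw [he1, he2] at hbnd
  have hqs : Real.sqrt 2 * (Real.sqrt 2 / 2) = 1 := by
    have h2' : Real.sqrt 2 * Real.sqrt 2 = 2 := Real.mul_self_sqrt (by norm_num)
    field_simp
    exact Real.sq_sqrt (by norm_num)
  have hprod : (Real.sqrt 2)^a * (Real.sqrt 2 / 2)^a = 1 := by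
    rw [← mul_pow, hqs, one_pow]
  have hVle : (Real.sqrt 2 / 2)^a * |C.B (startN j) p jF| ≤ C.eps + (a:ℝ) * G := by
    linarith
  have h2a : (0:ℝ) ≤ (Real.sqrt 2)^a := by positivity
  have hmul := mul_le_mul_of_nonneg_left hVle h2a
  rw [← mul_assoc, hprod, one_mul] at hmul
  calc |C.B (startN j) p jF| ≤ (Real.sqrt 2)^a * (C.eps + (a:ℝ) * G) := hmul
    _ ≤ (Real.sqrt 2)^j * (C.eps + (j:ℝ) * G) := by
        apply mul_le_mul (pow_le_pow_right₀ one_le_sqrt2 (le_of_lt ha))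
        · have hcast : (a:ℝ) ≤ (j:ℝ) := by exact_mod_cast le_of_lt ha
          have := mul_le_mul_of_nonneg_right hcast hG
          linarith
        · have : (0:ℝ) ≤ (a:ℝ) * G := by positivity
          linarith [C.heps]
        · positivity

/-- growth bound within a phase -/
lemma Ctx.growth (C : Ctx n) (j : ℕ) (h1 : 1 ≤ j) (h2 : j < n) (Q : ℝ) (hQ : 0 ≤ Q)
    (HQ : ∀ u v : Fin n, u ≠ v → (u:ℕ) ≤ j → (v:ℕ) ≤ j → |C.B (startN j) u v| ≤ Q) :
    ∀ a, a ≤ j → ∀ u v : Fin n, u ≠ v → (u:ℕ) ≤ j → (v:ℕ) ≤ j →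
      |C.B (startN j + a) u v| ≤ 2^a * Q := by
  intro a
  induction a with
  | zero => intro _ u v h hu hv; simpa using HQ u v h hu hv
  | succ a ih =>
    intro ha u v huv hu hv
    have ha' : a < j := by omega
    have hk : startN j + a < startN n := startN_step_lt h2 ha'
    obtain ⟨c, s, hc, hcs, hunt, hrow⟩ := C.hrot (startN j + a) hk
    have hp1 := C.hpiv1 j a h1 h2 ha'
    have hp2 := C.hpiv2 j a h1 h2 ha'
    have htaua : C.tau j a < j := (C.htau j).mapsTo (by exact ha' : a ∈ Set.Iio j)
    have hi1le : ((C.piv (startN j + a)).1 : ℕ) ≤ j := by rw [hp1]; omega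
    have hi2le : ((C.piv (startN j + a)).2 : ℕ) ≤ j := by rw [hp2]
    have hpivne : (C.piv (startN j + a)).1 ≠ (C.piv (startN j + a)).2 := by
      intro e
      have := congrArg (fun x : Fin n => (x:ℕ)) e
      simp only [hp1, hp2] at this
      omega
    have hIH := ih (by omega)
    have habs_s : |s| ≤ 1 := sin_bound hcs
    have habs_c : |c| ≤ 1 := cos_bound hcs
    have hrw : startN j + (a+1) = startN j + a + 1 := by omega
    rw [hrw]
    have hsymB1 : ∀ x y : Fin n, C.B (startN j + a + 1) x y = C.B (startN j + a + 1) y x :=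
      C.hsym (startN j + a + 1) (by omega)
    have h2Q : (0:ℝ) ≤ 2^(a+1) * Q := by positivity
    have hcomb : ∀ (x y cc ss : ℝ), |cc| ≤ 1 → |ss| ≤ 1 →
        |x| ≤ 2^a * Q → |y| ≤ 2^a * Q → |cc * x + ss * y| ≤ 2^(a+1) * Q := by
      intro x y cc ss hc1 hs1 hx hy
      calc |cc * x + ss * y| ≤ |cc * x| + |ss * y| := abs_add_le _ _
        _ = |cc| * |x| + |ss| * |y| := by rw [abs_mul, abs_mul]
        _ ≤ 1 * (2^a * Q) + 1 * (2^a * Q) := by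
            apply add_le_add
            · exact mul_le_mul hc1 hx (abs_nonneg _) zero_le_one
            · exact mul_le_mul hs1 hy (abs_nonneg _) zero_le_one
        _ = 2^(a+1) * Q := by ring
    by_cases hu1 : u = (C.piv (startN j + a)).1
    · by_cases hv2 : v = (C.piv (startN j + a)).2
      · rw [hu1, hv2, C.hzero (startN j + a) hk]
        simpa using h2Q
      · by_cases hv1 : v = (C.piv (startN j + a)).1
        · exact absurd (hu1.trans hv1.symm) huv
        · rw [hu1, (hrow v hv1 hv2).1]
          exact hcomb _ _ c s habs_c habs_s
            (hIH _ v (fun e => hv1 e.symm) hi1le hv)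
            (hIH _ v (fun e => hv2 e.symm) hi2le hv)
    · by_cases hu2 : u = (C.piv (startN j + a)).2
      · by_cases hv1 : v = (C.piv (startN j + a)).1
        · rw [hu2, hv1, hsymB1 _ _, C.hzero (startN j + a) hk]
          simpa using h2Q
        · by_cases hv2 : v = (C.piv (startN j + a)).2
          · exact absurd (hu2.trans hv2.symm) huv
          · rw [hu2, (hrow v hv1 hv2).2]
            have := hcomb (C.B (startN j + a) (C.piv (startN j + a)).1 v)
              (C.B (startN j + a) (C.piv (startN j + a)).2 v) (-s) c
              (by rwa [abs_neg]) habs_c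
              (hIH _ v (fun e => hv1 e.symm) hi1le hv)
              (hIH _ v (fun e => hv2 e.symm) hi2le hv)
            linarith [this]
      · by_cases hv1 : v = (C.piv (startN j + a)).1
        · rw [hv1, hsymB1 _ _, (hrow u hu1 hu2).1]
          exact hcomb _ _ c s habs_c habs_s
            (hIH _ u (fun e => hu1 e.symm) hi1le hu)
            (hIH _ u (fun e => hu2 e.symm) hi2le hu)
        · by_cases hv2 : v = (C.piv (startN j + a)).2
          · rw [hv2, hsymB1 _ _, (hrow u hu1 hu2).2]
            have := hcomb (C.B (startN j + a) (C.piv (startN j + a)).1 u)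
              (C.B (startN j + a) (C.piv (startN j + a)).2 u) (-s) c
              (by rwa [abs_neg]) habs_c
              (hIH _ u (fun e => hu1 e.symm) hi1le hu)
              (hIH _ u (fun e => hu2 e.symm) hi2le hu)
            linarith [this]
          · rw [hunt u v hu1 hu2 hv1 hv2]
            have h5 := hIH u v huv hu hv
            have h6 : (2:ℝ)^a * Q ≤ 2^(a+1) * Q := by
              have : (2:ℝ)^a ≤ 2^(a+1) := pow_le_pow_right₀ one_le_two (by omega)
              exact mul_le_mul_of_nonneg_right this hQ
            linarith

/-- bound on the finished block at the end of each phase -/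
lemma Ctx.blockBound (C : Ctx n) :
    ∀ j, 1 ≤ j → j < n → ∀ u v : Fin n, u ≠ v → (u:ℕ) ≤ j → (v:ℕ) ≤ j →
      |C.B (startN (j+1)) u v| ≤ gC j * C.eps := by
  intro j
  induction j with
  | zero => intro h; omega
  | succ j ih =>
    intro _ hjn u v huv hu hv
    have hge : 0 ≤ gC (j+1) * C.eps := mul_nonneg (gC_nonneg _) C.heps
    rcases Nat.eq_zero_or_pos j with rfl | hjpos
    · -- base case : phase 1, single pivot (0,1)
      have h0 : startN 1 + 0 < startN n := startN_step_lt hjn (by norm_num)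
      have hp1 := C.hpiv1 1 0 (le_refl 1) hjn (by norm_num)
      have hp2 := C.hpiv2 1 0 (le_refl 1) hjn (by norm_num)
      have htau0 : C.tau 1 0 < 1 := (C.htau 1).mapsTo (by norm_num : (0:ℕ) ∈ Set.Iio 1)
      have hpv1 : ((C.piv (startN 1 + 0)).1 : ℕ) = 0 := by omega
      have hne : (u:ℕ) ≠ (v:ℕ) := fun e => huv (Fin.ext e)
      have hz := C.hzero (startN 1 + 0) h0
      have hidx : startN (0+1+1) = startN 1 + 0 + 1 := rfl
      have hu01 : (u:ℕ) = 0 ∨ (u:ℕ) = 1 := by omega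
      have hv01 : (v:ℕ) = 0 ∨ (v:ℕ) = 1 := by omega
      rcases hu01 with h | h <;> rcases hv01 with h' | h'
      · omega
      · have e1 : u = (C.piv (startN 1 + 0)).1 := Fin.ext (by rw [h, hpv1])
        have e2 : v = (C.piv (startN 1 + 0)).2 := Fin.ext (by rw [h', hp2])
        rw [hidx, e1, e2, hz, abs_zero]
        exact hge
      · have e1 : v = (C.piv (startN 1 + 0)).1 := Fin.ext (by rw [h', hpv1])
        have e2 : u = (C.piv (startN 1 + 0)).2 := Fin.ext (by rw [h, hp2])
        rw [hidx, C.hsym (startN 1 + 0 + 1) (by omega) u v, e1, e2, hz, abs_zero]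
        exact hge
      · omega
    · -- inductive case : phase j+1 with j ≥ 1
      have hjn' : (j:ℕ) + 1 < n := by omega
      set jF : Fin n := ⟨j+1, hjn⟩ with hjFdef
      have hjFv : (jF:ℕ) = j+1 := rfl
      have hIH : ∀ r q : Fin n, (r:ℕ) < j+1 → (q:ℕ) < j+1 → r ≠ q →
          |C.B (startN (j+1)) r q| ≤ gC j * C.eps :=
        fun r q hr hq hne => ih hjpos (by omega) r q hne (by omega) (by omega)
      have hG : 0 ≤ gC j * C.eps := mul_nonneg (gC_nonneg j) C.heps
      have hcol : ∀ p : Fin n, (p:ℕ) < j+1 →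
          |C.B (startN (j+1)) p jF|
            ≤ (Real.sqrt 2)^(j+1) * (C.eps + ((j:ℝ)+1) * (gC j * C.eps)) := by
        intro p hp
        have := C.colstart (j+1) (by omega) hjn jF hjFv (gC j * C.eps) hG hIH p hp
        have hcast : ((j+1 : ℕ) : ℝ) = (j:ℝ)+1 := by push_cast; ring
        rw [hcast] at this
        exact this
      set Q := (Real.sqrt 2)^(j+1) * (C.eps + ((j:ℝ)+1) * (gC j * C.eps)) + gC j * C.eps
        with hQdef
      have hQ1 : 0 ≤ (Real.sqrt 2)^(j+1) * (C.eps + ((j:ℝ)+1) * (gC j * C.eps)) := by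
        apply mul_nonneg (by positivity)
        have : 0 ≤ ((j:ℝ)+1) * (gC j * C.eps) := by positivity
        linarith [C.heps]
      have hQ0 : 0 ≤ Q := by rw [hQdef]; linarith
      have HQ : ∀ u' v' : Fin n, u' ≠ v' → (u':ℕ) ≤ j+1 → (v':ℕ) ≤ j+1 →
          |C.B (startN (j+1)) u' v'| ≤ Q := by
        intro u' v' hne hu' hv'
        rcases Nat.lt_or_ge (v':ℕ) (j+1) with hv'' | hv''
        · rcases Nat.lt_or_ge (u':ℕ) (j+1) with hu'' | hu''
          · have := hIH u' v' hu'' hv'' hne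
            rw [hQdef]
            linarith
          · have he : u' = jF := Fin.ext (by rw [hjFv]; omega)
            have := hcol v' hv''
            rw [C.hsym (startN (j+1)) (startN_mono (by omega)) u' v', he]
            rw [hQdef]
            linarith
        · have he : v' = jF := Fin.ext (by rw [hjFv]; omega)
          have hu'' : (u':ℕ) < j+1 := by
            by_contra hcon
            apply hne
            apply Fin.ext
            have hval := congrArg (fun x : Fin n => (x:ℕ)) he
            simp only [hjFv] at hval
            omega
          have := hcol u' hu''
          rw [he, hQdef]
          linarith
      have hgrow := C.growth (j+1) (by omega) hjn Q hQ0 HQ (j+1) (le_refl _) u v huv hu hv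
      have hrw : startN (j+1) + (j+1) = startN (j+1+1) := (startN_succ (j+1)).symm
      rw [hrw] at hgrow
      calc |C.B (startN (j+1+1)) u v| ≤ 2^(j+1) * Q := hgrow
        _ = gC (j+1) * C.eps := by
            rw [gC_succ, hQdef]
            push_cast
            ring

/-- backward propagation of column-`t` bounds to time `0` -/
lemma Ctx.backward (C : Ctx n) (t : ℕ) (h1 : 1 ≤ t) (h2 : t < n) (tF : Fin n)
    (htF : (tF:ℕ) = t) (W : ℝ) (hW : 0 ≤ W)
    (HW : ∀ u : Fin n, (u:ℕ) < t → |C.B (startN t) u tF| ≤ W) :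
    ∀ d k, k + d = startN t → ∀ u : Fin n, (u:ℕ) < t → |C.B k u tF| ≤ 2^d * W := by
  intro d
  induction d with
  | zero =>
    intro k hk u hu
    have : k = startN t := by omega
    rw [this]
    simpa using HW u hu
  | succ d ih =>
    intro k hk u hu
    have hklt : k < startN t := by omega
    have hkn : k < startN n := lt_of_lt_of_le hklt (startN_mono (le_of_lt h2))
    obtain ⟨j', a, hj1, hj2, ha, hdef⟩ := startN_decomp t k hklt
    have hj2n : j' < n := by omega
    have hp1 : ((C.piv k).1 : ℕ) = C.tau j' a := by
      rw [hdef]; exact C.hpiv1 j' a hj1 hj2n ha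
    have hp2 : ((C.piv k).2 : ℕ) = j' := by
      rw [hdef]; exact C.hpiv2 j' a hj1 hj2n ha
    have htaua : C.tau j' a < j' := (C.htau j').mapsTo (Set.mem_Iio.mpr ha)
    obtain ⟨c, s, hc, hcs, hunt, hrow⟩ := C.hrot k hkn
    have htF1 : tF ≠ (C.piv k).1 := by
      intro e
      have := congrArg (fun x : Fin n => (x:ℕ)) e
      simp only [htF, hp1] at this
      omega
    have htF2 : tF ≠ (C.piv k).2 := by
      intro e
      have := congrArg (fun x : Fin n => (x:ℕ)) e
      simp only [htF, hp2] at this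
      omega
    have hih1 : |C.B (k+1) (C.piv k).1 tF| ≤ 2^d * W :=
      ih (k+1) (by omega) (C.piv k).1 (by rw [hp1]; omega)
    have hih2 : |C.B (k+1) (C.piv k).2 tF| ≤ 2^d * W :=
      ih (k+1) (by omega) (C.piv k).2 (by rw [hp2]; omega)
    have habs_s : |s| ≤ 1 := sin_bound hcs
    have habs_c : |c| ≤ 1 := cos_bound hcs
    have hsplit : ∀ x y : ℝ, |x| ≤ 2^d * W → |y| ≤ 2^d * W →
        ∀ cc ss : ℝ, |cc| ≤ 1 → |ss| ≤ 1 → |cc * x + ss * y| ≤ 2^(d+1) * W := by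
      intro x y hx hy cc ss hcc hss
      calc |cc * x + ss * y| ≤ |cc * x| + |ss * y| := abs_add_le _ _
        _ = |cc| * |x| + |ss| * |y| := by rw [abs_mul, abs_mul]
        _ ≤ 1 * (2^d * W) + 1 * (2^d * W) := by
            apply add_le_add
            · exact mul_le_mul hcc hx (abs_nonneg _) zero_le_one
            · exact mul_le_mul hss hy (abs_nonneg _) zero_le_one
        _ = 2^(d+1) * W := by ring
    have he := hrow tF (fun e => htF1 e) (fun e => htF2 e)
    by_cases hu1 : u = (C.piv k).1
    · have hinv : C.B k (C.piv k).1 tF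
          = c * C.B (k+1) (C.piv k).1 tF + (-s) * C.B (k+1) (C.piv k).2 tF := by
        rw [he.1, he.2]
        linear_combination (-(C.B k (C.piv k).1 tF)) * hcs
      rw [hu1, hinv]
      exact hsplit _ _ hih1 hih2 c (-s) habs_c (by rwa [abs_neg])
    · by_cases hu2 : u = (C.piv k).2
      · have hinv : C.B k (C.piv k).2 tF
            = s * C.B (k+1) (C.piv k).1 tF + c * C.B (k+1) (C.piv k).2 tF := by
          rw [he.1, he.2]
          linear_combination (-(C.B k (C.piv k).2 tF)) * hcs
        rw [hu2, hinv]
        exact hsplit _ _ hih1 hih2 s c habs_s habs_c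
      · rw [← hunt u tF hu1 hu2 (fun e => htF1 e) (fun e => htF2 e)]
        have h5 := ih (k+1) (by omega) u hu
        have h6 : (2:ℝ)^d * W ≤ 2^(d+1) * W := by
          have : (2:ℝ)^d ≤ 2^(d+1) := pow_le_pow_right₀ one_le_two (by omega)
          exact mul_le_mul_of_nonneg_right this hW
        linarith

/-- the heart : every initial off-diagonal entry is `O(eps)` -/
lemma Ctx.core (C : Ctx n) : ∀ u v : Fin n, (u:ℕ) < (v:ℕ) →
    |C.B 0 u v| ≤ KC n * C.eps := by
  intro u v huv
  set t := (v:ℕ) with ht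
  have h1 : 1 ≤ t := by omega
  have h2 : t < n := v.isLt
  have hG : 0 ≤ gC (t-1) * C.eps := mul_nonneg (gC_nonneg _) C.heps
  have HGb : ∀ r q : Fin n, (r:ℕ) < t → (q:ℕ) < t → r ≠ q →
      |C.B (startN t) r q| ≤ gC (t-1) * C.eps := by
    intro r q hr hq hne
    rcases Nat.lt_or_ge t 2 with hlt | hge
    · exfalso
      exact hne (Fin.ext (by omega))
    · have hb := C.blockBound (t-1) (by omega) (by omega) r q hne (by omega) (by omega)
      rw [show t - 1 + 1 = t by omega] at hb
      exact hb
  have hWb : ∀ p : Fin n, (p:ℕ) < t →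
      |C.B (startN t) p v| ≤ (Real.sqrt 2)^t * (C.eps + (t:ℝ) * (gC (t-1) * C.eps)) :=
    fun p hp => C.colstart t h1 h2 v ht.symm (gC (t-1) * C.eps) hG HGb p hp
  have hW0 : 0 ≤ (Real.sqrt 2)^t * (C.eps + (t:ℝ) * (gC (t-1) * C.eps)) := by
    apply mul_nonneg (by positivity)
    have : 0 ≤ (t:ℝ) * (gC (t-1) * C.eps) := by positivity
    linarith [C.heps]
  have hback := C.backward t h1 h2 v ht.symm _ hW0 hWb (startN t) 0 (by omega) u huv
  calc |C.B 0 u v| ≤ 2^(startN t) * ((Real.sqrt 2)^t * (C.eps + (t:ℝ) * (gC (t-1) * C.eps))) := hback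
    _ ≤ 2^(startN n) * ((Real.sqrt 2)^n * ((1 + (n:ℝ) * gC n) * C.eps)) := by
        have e1 : (2:ℝ)^(startN t) ≤ 2^(startN n) :=
          pow_le_pow_right₀ one_le_two (startN_mono (le_of_lt h2))
        have e2 : (Real.sqrt 2)^t ≤ (Real.sqrt 2)^n :=
          pow_le_pow_right₀ one_le_sqrt2 (le_of_lt h2)
        have e3 : C.eps + (t:ℝ) * (gC (t-1) * C.eps) ≤ (1 + (n:ℝ) * gC n) * C.eps := by
          have g1 : gC (t-1) ≤ gC n := gC_mono (by omega)
          have hcast : (t:ℝ) ≤ (n:ℝ) := by exact_mod_cast le_of_lt h2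
          have h4 : (t:ℝ) * gC (t-1) ≤ (n:ℝ) * gC n :=
            mul_le_mul hcast g1 (gC_nonneg _) (by positivity)
          have h5 := mul_le_mul_of_nonneg_right h4 C.heps
          nlinarith [C.heps]
        have e4 : 0 ≤ C.eps + (t:ℝ) * (gC (t-1) * C.eps) := by
          have : 0 ≤ (t:ℝ) * (gC (t-1) * C.eps) := by positivity
          linarith [C.heps]
        have e5 : (Real.sqrt 2)^t * (C.eps + (t:ℝ) * (gC (t-1) * C.eps))
            ≤ (Real.sqrt 2)^n * ((1 + (n:ℝ) * gC n) * C.eps) :=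
          mul_le_mul e2 e3 e4 (by positivity)
        apply mul_le_mul e1 e5 (mul_nonneg (by positivity) e4) (by positivity)
    _ = KC n * C.eps := by
        unfold KC
        ring

/-- the column-cyclic pivot list -/
def Lc (τ : ℕ → ℕ → ℕ) (m : ℕ) : List (ℕ × ℕ) :=
  (List.range' 1 m).flatMap fun j => (List.range j).map fun a => (τ j a, j)

lemma Lc_split (τ : ℕ → ℕ → ℕ) (m : ℕ) :
    Lc τ (m+1) = Lc τ m ++ (List.range (m+1)).map (fun a => (τ (m+1) a, m+1)) := by
  unfold Lc
  rw [List.range'_1_concat, show 1+m = m+1 from by omega, List.flatMap_append]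
  simp

lemma Lc_length (τ : ℕ → ℕ → ℕ) : ∀ m, (Lc τ m).length = startN (m+1) := by
  intro m
  induction m with
  | zero => simp [Lc, startN]
  | succ m ih =>
    rw [Lc_split, List.length_append, ih, List.length_map, List.length_range]
    have := startN_succ (m+1)
    omega

lemma Lc_get (τ : ℕ → ℕ → ℕ) : ∀ m j a, 1 ≤ j → j ≤ m → a < j →
    ∀ (h : startN j + a < (Lc τ m).length), (Lc τ m)[startN j + a] = (τ j a, j) := by
  intro m
  induction m with
  | zero => intro j a hj1 hj2; omega
  | succ m ih =>
    intro j a hj1 hj2 ha h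
    rcases Nat.lt_or_ge j (m+1) with hj | hj
    · have hlen : startN j + a < (Lc τ m).length := by
        rw [Lc_length]
        exact startN_step_lt (by omega) ha
      rw [List.getElem_of_eq (Lc_split τ m) h, List.getElem_append_left hlen]
      exact ih j a hj1 (by omega) ha hlen
    · have hj' : j = m+1 := by omega
      subst hj'
      have hlen2 : (Lc τ m).length ≤ startN (m+1) + a := by
        rw [Lc_length]
        omega
      rw [List.getElem_of_eq (Lc_split τ m) h, List.getElem_append_right hlen2]
      have hidx : startN (m+1) + a - (Lc τ m).length = a := by
        rw [Lc_length]
        omega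
      simp only [hidx, List.getElem_map, List.getElem_range]

lemma Lc_mem (τ : ℕ → ℕ → ℕ) (hτ : ∀ j, Set.BijOn (τ j) (Set.Iio j) (Set.Iio j))
    (m : ℕ) : ∀ p ∈ Lc τ m, p.1 < p.2 ∧ p.2 < m+1 := by
  intro p hp
  unfold Lc at hp
  rw [List.mem_flatMap] at hp
  obtain ⟨j, hj, hpj⟩ := hp
  rw [List.mem_range'_1] at hj
  rw [List.mem_map] at hpj
  obtain ⟨a, ha, rfl⟩ := hpj
  rw [List.mem_range] at ha
  have := (hτ j).mapsTo (Set.mem_Iio.mpr ha)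
  have h2 : τ j a < j := this
  exact ⟨h2, by omega⟩

end S9

/-- Corollary 3.3: for the scalar cyclic Jacobi method, defined by any
ordering from `C_c^(n)` with rotation angles in `[-π/4, π/4]`, one sweep reduces the
off-norm: `S(A')² ≤ η_n S(A)²` with `0 ≤ η_n < 1` depending only on `n`. -/
theorem statement9 :
    ∀ n : ℕ, 2 ≤ n →
      ∃ η : ℝ, 0 ≤ η ∧ η < 1 ∧
        ∀ L : List (ℕ × ℕ), memBc n L →
          ∀ A A' : Matrix (Fin n) (Fin n) ℝ, A.IsSymm →
            ScalarSweep L A A' → offSq A' ≤ η * offSq A := by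
  intro n hn
  set Cst : ℝ := (n:ℝ)^2 * (S9.KC n)^2 + 1 with hCst
  have hC2 : 0 ≤ (n:ℝ)^2 * (S9.KC n)^2 := by positivity
  have hC1 : 1 ≤ Cst := by rw [hCst]; linarith
  have hCpos : 0 < Cst := by linarith
  refine ⟨1 - 1/Cst, ?_, ?_, ?_⟩
  · have h : 1/Cst ≤ 1 := by
      rw [div_le_one hCpos]; linarith
    linarith
  · have h : 0 < 1/Cst := by positivity
    linarith
  intro L hL A A' hA hsweep
  obtain ⟨τ, hτ, hLdef⟩ := hL
  obtain ⟨B, φ, hB0, hBM, hstep⟩ := hsweep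
  have hLc : L = S9.Lc τ (n-1) := by rw [hLdef]; rfl
  have hlen : L.length = S9.startN n := by
    rw [hLc, S9.Lc_length, show n-1+1 = n from by omega]
  have hmemL : ∀ p ∈ L, p.1 < p.2 ∧ p.2 < n := by
    intro p hp
    rw [hLc] at hp
    have h := S9.Lc_mem τ hτ (n-1) p hp
    exact ⟨h.1, by omega⟩
  have hget : ∀ j a, 1 ≤ j → j < n → a < j →
      ∀ (h : S9.startN j + a < L.length), L[S9.startN j + a] = (τ j a, j) := by
    intro j a h1 h2 ha h
    have h' : S9.startN j + a < (S9.Lc τ (n-1)).length := by rw [← hLc]; exact h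
    rw [List.getElem_of_eq hLc h]
    exact S9.Lc_get τ (n-1) j a h1 (by omega) ha h'
  have hn0 : 0 < n := by omega
  have hbd : ∀ (k : ℕ) (h : k < L.length), (L[k]'h).1 < n ∧ (L[k]'h).2 < n := by
    intro k h
    have hm := hmemL (L[k]'h) (List.getElem_mem h)
    omega
  set piv : ℕ → Fin n × Fin n := fun k =>
    if h : k < L.length then
      (⟨(L[k]'h).1, lt_trans (hmemL _ (List.getElem_mem h)).1 (hbd k h).2⟩,
        ⟨(L[k]'h).2, (hbd k h).2⟩)
    else (⟨0, hn0⟩, ⟨0, hn0⟩) with hpivdef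
  have hpiv_eq : ∀ (k : ℕ) (h : k < L.length),
      ((piv k).1 : ℕ) = (L[k]'h).1 ∧ ((piv k).2 : ℕ) = (L[k]'h).2 := by
    intro k h
    simp [hpivdef, dif_pos h]
  have hijk : ∀ (k : ℕ) (h : k < L.length), (piv k).1 ≠ (piv k).2 := by
    intro k h e
    have h1 := (hpiv_eq k h).1
    have h2 := (hpiv_eq k h).2
    have h3 := hmemL (L[k]'h) (List.getElem_mem h)
    have h4 := congrArg (fun x : Fin n => (x:ℕ)) e
    omega
  have hsymB : ∀ k, k ≤ L.length → (B k).transpose = B k := by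
    intro k
    induction k with
    | zero => intro _; rw [hB0]; exact hA
    | succ k ih =>
      intro hk1
      have hk : k < L.length := by omega
      obtain ⟨hφ, hBeq, hz⟩ := hstep k hk
      rw [hBeq]
      have hBk := ih (by omega)
      simp only [Matrix.transpose_mul, Matrix.transpose_transpose, hBk, Matrix.mul_assoc]
  have hBeq' : ∀ (k : ℕ) (h : k < L.length),
      B (k+1) = (rotM n ((piv k).1 : ℕ) ((piv k).2 : ℕ) (φ k)).transpose * B k
        * rotM n ((piv k).1 : ℕ) ((piv k).2 : ℕ) (φ k) := by
    intro k h
    obtain ⟨hφ, hBeq, hz⟩ := hstep k h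
    rw [hBeq]
    simp only [List.get_eq_getElem]
    rw [(hpiv_eq k h).1, (hpiv_eq k h).2]
  have hzeroF : ∀ (k : ℕ) (h : k < L.length), B (k+1) (piv k).1 (piv k).2 = 0 := by
    intro k h
    obtain ⟨hφ, hBeq, hz⟩ := hstep k h
    apply hz
    · simp only [List.get_eq_getElem]
      exact (hpiv_eq k h).1
    · simp only [List.get_eq_getElem]
      exact (hpiv_eq k h).2
  have hoffstep : ∀ (k : ℕ) (h : k < L.length),
      offSq (B (k+1)) = offSq (B k) - (B k (piv k).1 (piv k).2)^2 := by
    intro k h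
    have hzF : ((rotM n ((piv k).1:ℕ) ((piv k).2:ℕ) (φ k)).transpose * B k
        * rotM n ((piv k).1:ℕ) ((piv k).2:ℕ) (φ k)) (piv k).1 (piv k).2 = 0 := by
      rw [← hBeq' k h]
      exact hzeroF k h
    have h5 := S9.offSq_step (B k) (hsymB k (le_of_lt h)) (piv k).1 (piv k).2
      (hijk k h) (φ k) hzF
    rw [← hBeq' k h] at h5
    exact h5
  have hmono : ∀ k l, k ≤ l → l ≤ L.length → offSq (B l) ≤ offSq (B k) := by
    intro k l hkl
    induction l with
    | zero =>
      intro _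
      have : k = 0 := by omega
      rw [this]
    | succ l ihl =>
      intro hl
      rcases Nat.eq_or_lt_of_le hkl with rfl | hlt
      · exact le_refl _
      · have hh1 := ihl (by omega) (by omega)
        have hh2 := hoffstep l (by omega)
        nlinarith [sq_nonneg (B l (piv l).1 (piv l).2)]
  have hd0 : 0 ≤ offSq A - offSq A' := by
    have h5 := hmono 0 L.length (by omega) (le_refl _)
    rw [hB0, hBM] at h5
    linarith
  set ε : ℝ := Real.sqrt (offSq A - offSq A') with hεdef
  have hε0 : 0 ≤ ε := Real.sqrt_nonneg _
  have hε2 : ε^2 = offSq A - offSq A' := Real.sq_sqrt hd0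
  have hbK : ∀ k, k < L.length → |B k (piv k).1 (piv k).2| ≤ ε := by
    intro k hk
    have hh1 := hoffstep k hk
    have hh2 := hmono 0 k (by omega) (le_of_lt hk)
    have hh3 := hmono (k+1) L.length hk (le_refl _)
    rw [hB0] at hh2
    rw [hBM] at hh3
    have hsq : (B k (piv k).1 (piv k).2)^2 ≤ ε^2 := by rw [hε2]; linarith
    calc |B k (piv k).1 (piv k).2| = Real.sqrt ((B k (piv k).1 (piv k).2)^2) :=
        (Real.sqrt_sq_eq_abs _).symm
      _ ≤ Real.sqrt (ε^2) := Real.sqrt_le_sqrt hsq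
      _ = ε := by rw [Real.sqrt_sq hε0]
  have hsymC : ∀ k, k ≤ S9.startN n → ∀ u v : Fin n, B k u v = B k v u := by
    intro k hk u v
    have h := hsymB k (by omega)
    conv_lhs => rw [← h]
    rfl
  have hpiv1C : ∀ j a, 1 ≤ j → j < n → a < j →
      ((piv (S9.startN j + a)).1 : ℕ) = τ j a := by
    intro j a h1 h2 ha
    have hidx : S9.startN j + a < L.length := by
      rw [hlen]; exact S9.startN_step_lt h2 ha
    rw [(hpiv_eq _ hidx).1, hget j a h1 h2 ha hidx]
  have hpiv2C : ∀ j a, 1 ≤ j → j < n → a < j →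
      ((piv (S9.startN j + a)).2 : ℕ) = j := by
    intro j a h1 h2 ha
    have hidx : S9.startN j + a < L.length := by
      rw [hlen]; exact S9.startN_step_lt h2 ha
    rw [(hpiv_eq _ hidx).2, hget j a h1 h2 ha hidx]
  have hbC : ∀ k, k < S9.startN n → |B k (piv k).1 (piv k).2| ≤ ε :=
    fun k hk => hbK k (by omega)
  have hzC : ∀ k, k < S9.startN n → B (k+1) (piv k).1 (piv k).2 = 0 :=
    fun k hk => hzeroF k (by omega)
  have hrotC : ∀ k, k < S9.startN n → ∃ c s : ℝ,
      Real.sqrt 2 / 2 ≤ c ∧ c^2 + s^2 = 1 ∧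
      (∀ u v : Fin n, u ≠ (piv k).1 → u ≠ (piv k).2 → v ≠ (piv k).1 → v ≠ (piv k).2 →
        B (k+1) u v = B k u v) ∧
      (∀ v : Fin n, v ≠ (piv k).1 → v ≠ (piv k).2 →
        B (k+1) (piv k).1 v = c * B k (piv k).1 v + s * B k (piv k).2 v ∧
        B (k+1) (piv k).2 v = -s * B k (piv k).1 v + c * B k (piv k).2 v) := by
    intro k hk'
    have hk : k < L.length := by omega
    obtain ⟨hφ, hBeq, hz⟩ := hstep k hk
    refine ⟨Real.cos (φ k), Real.sin (φ k), ?_, ?_, ?_, ?_⟩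
    · have hpi : Real.pi / 4 ≤ Real.pi := by linarith [Real.pi_pos]
      have hcc := Real.cos_le_cos_of_nonneg_of_le_pi (abs_nonneg (φ k)) hpi hφ
      rw [Real.cos_pi_div_four] at hcc
      rw [← Real.cos_abs]
      exact hcc
    · exact Real.cos_sq_add_sin_sq (φ k)
    · intro u v hu1 hu2 hv1 hv2
      rw [hBeq' k hk]
      exact S9.conj_other (piv k).1 (piv k).2 (φ k) (B k) u v hu1 hu2 hv1 hv2
    · intro v hv1 hv2
      constructor
      · rw [hBeq' k hk]
        exact S9.conj_row_i (piv k).1 (piv k).2 (hijk k hk) (φ k) (B k) v hv1 hv2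
      · rw [hBeq' k hk]
        exact S9.conj_row_j (piv k).1 (piv k).2 (hijk k hk) (φ k) (B k) v hv1 hv2
  have hcore : ∀ u v : Fin n, (u:ℕ) < (v:ℕ) → |B 0 u v| ≤ S9.KC n * ε :=
    S9.Ctx.core ⟨B, piv, τ, ε, hn, hε0, hsymC, hτ, hpiv1C, hpiv2C, hbC, hzC, hrotC⟩
  have hOA : offSq A ≤ (n:ℝ)^2 * (S9.KC n * ε)^2 := by
    have hterm : ∀ u v : Fin n,
        (if (u:ℕ) < (v:ℕ) then (A u v)^2 else 0) ≤ (S9.KC n * ε)^2 := by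
      intro u v
      split_ifs with h
      · have hb' := hcore u v h
        rw [hB0] at hb'
        calc (A u v)^2 = |A u v|^2 := (sq_abs _).symm
          _ ≤ (S9.KC n * ε)^2 := pow_le_pow_left₀ (abs_nonneg _) hb' 2
      · positivity
    have hsum : offSq A ≤ ∑ u : Fin n, ∑ v : Fin n, (S9.KC n * ε)^2 := by
      unfold offSq
      exact Finset.sum_le_sum fun u _ => Finset.sum_le_sum fun v _ => hterm u v
    have hconst : (∑ _u : Fin n, ∑ _v : Fin n, (S9.KC n * ε)^2)
        = (n:ℝ)^2 * (S9.KC n * ε)^2 := by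
      simp only [Finset.sum_const, Finset.card_univ, Fintype.card_fin, nsmul_eq_mul]
      ring
    rw [hconst] at hsum
    exact hsum
  have hfin : offSq A ≤ (Cst - 1) * (offSq A - offSq A') := by
    calc offSq A ≤ (n:ℝ)^2 * (S9.KC n * ε)^2 := hOA
      _ = ((n:ℝ)^2 * (S9.KC n)^2) * ε^2 := by ring
      _ = (Cst - 1) * (offSq A - offSq A') := by rw [hε2, hCst]; ring
  have hYX : offSq A' ≤ offSq A := by linarith
  have e8 : Cst * offSq A' ≤ (Cst - 1) * offSq A := by nlinarith [hfin, hYX]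
  have h7 : offSq A' ≤ ((Cst - 1) * offSq A) / Cst := by
    rw [le_div_iff₀ hCpos]
    linarith [e8]
  calc offSq A' ≤ ((Cst - 1) * offSq A) / Cst := h7
    _ = (1 - 1/Cst) * offSq A := by field_simp
end
end BlockJacobi
end
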